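/- arXiv:0912.0505 — 5 statements merged into one kernel-verified Lean document; each statement's English description precedes it below -/
import Mathlib

section
/- Let d ≥ 2. The map (c; a; z) ↦ G_{ρ(c;a)}(z) is continuous on H × ℂ × ℂ, where H = {c = (c₁,…,c_{d−1}) ∈ ℂ^{d−1} : c₁ + ⋯ + c_{d−1} = 0}. In particular the marked critical heights map 𝒢^×(c; a) = (G_f(c₁),…,G_f(c_{d−1})), f = ρ(c;a), is continuous on H × ℂ. -/
/-- The escape rate `G_f(z) = lim_{n→∞} d⁻ⁿ · log⁺ |fⁿ(z)|` of a polynomial `f`,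
where `d = deg f` and `log⁺ t = log (max t 1)`. -/
noncomputable def escapeRate (f : Polynomial ℂ) (z : ℂ) : ℝ :=
  Filter.limUnder Filter.atTop (fun n : ℕ =>
    ((f.natDegree : ℝ)⁻¹) ^ n * Real.log (max ‖(fun w => f.eval w)^[n] z‖ 1))
/-- The monic centered polynomial `ρ(c; a)(z) = ∫₀ᶻ d·∏ᵢ (ζ − cᵢ) dζ + a`,
with critical points `c₁, …, c_{d−1}` and `ρ(c;a)(0) = a`. -/
noncomputable def rho (d : ℕ) (c : Fin (d - 1) → ℂ) (a : ℂ) : Polynomial ℂ :=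
  (Polynomial.C (d : ℂ) * ∏ i : Fin (d - 1), (Polynomial.X - Polynomial.C (c i))).sum
    (fun k b => Polynomial.C (b / ((k : ℂ) + 1)) * Polynomial.X ^ (k + 1)) + Polynomial.C a

open Polynomial Finset Filter

noncomputable def qpoly (d : ℕ) (c : Fin (d - 1) → ℂ) : Polynomial ℂ :=
  Polynomial.C (d : ℂ) * ∏ i : Fin (d - 1), (Polynomial.X - Polynomial.C (c i))

/-- the normalized coefficients of `rho d c a` (apart from the constant term `a`) -/
noncomputable def wfun (d : ℕ) (c : Fin (d - 1) → ℂ) (k : ℕ) : ℂ :=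
  (qpoly d c).coeff k / ((k : ℂ) + 1)


lemma cont_coeff_prod {ι : Type*} [DecidableEq ι] (s : Finset ι) (k : ℕ) :
    Continuous fun c : ι → ℂ => (∏ i ∈ s, (X - C (c i))).coeff k := by
  induction s using Finset.induction_on generalizing k with
  | empty => simp only [Finset.prod_empty]; exact continuous_const
  | @insert a s ha ih =>
    have h : ∀ c : ι → ℂ,
        (∏ i ∈ insert a s, (X - C (c i))).coeff k
          = (if k = 0 then 0 else (∏ i ∈ s, (X - C (c i))).coeff (k-1))
            - c a * (∏ i ∈ s, (X - C (c i))).coeff k := by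
      intro c
      rw [Finset.prod_insert ha, sub_mul, coeff_sub, coeff_C_mul]
      congr 1
      cases k with
      | zero => simp [mul_coeff_zero]
      | succ n => simp [coeff_X_mul]
    simp only [h]
    cases k with
    | zero => simpa using (((continuous_apply a).mul (ih 0)).neg :
        Continuous fun c : ι → ℂ => -(c a * (∏ i ∈ s, (X - C (c i))).coeff 0))
    | succ n =>
      simp only [Nat.succ_ne_zero, if_false]
      exact (ih n).sub ((continuous_apply a).mul (ih (n+1)))

lemma prod_monic (d : ℕ) (c : Fin (d - 1) → ℂ) :
    (∏ i : Fin (d - 1), (X - C (c i))).Monic :=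
  monic_prod_of_monic _ _ fun i _ => monic_X_sub_C _

lemma prod_natDegree (d : ℕ) (c : Fin (d - 1) → ℂ) :
    (∏ i : Fin (d - 1), (X - C (c i))).natDegree = d - 1 := by
  rw [natDegree_prod _ _ (fun i _ => X_sub_C_ne_zero _)]
  simp

lemma qpoly_natDegree (d : ℕ) (hd : 2 ≤ d) (c : Fin (d - 1) → ℂ) :
    (qpoly d c).natDegree = d - 1 := by
  rw [qpoly, natDegree_C_mul (by exact_mod_cast (by omega : d ≠ 0) : (d:ℂ) ≠ 0),
    prod_natDegree]

lemma qpoly_coeff_top (d : ℕ) (hd : 2 ≤ d) (c : Fin (d - 1) → ℂ) :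
    (qpoly d c).coeff (d - 1) = d := by
  rw [qpoly, coeff_C_mul]
  have := (prod_monic d c).coeff_natDegree
  rw [prod_natDegree] at this
  rw [this, mul_one]

lemma cont_qpoly_coeff (d : ℕ) (k : ℕ) :
    Continuous fun c : Fin (d-1) → ℂ => (qpoly d c).coeff k := by
  simp only [qpoly, coeff_C_mul]
  exact continuous_const.mul (cont_coeff_prod _ k)

lemma cast_pred_add_one (d : ℕ) (hd : 2 ≤ d) : ((d - 1 : ℕ) : ℂ) + 1 = (d : ℂ) := by
  have : ((d - 1 : ℕ) : ℂ) = (d : ℂ) - 1 := by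
    push_cast [Nat.cast_sub (by omega : 1 ≤ d)]; ring
  rw [this]; ring

lemma wfun_top (d : ℕ) (hd : 2 ≤ d) (c : Fin (d - 1) → ℂ) : wfun d c (d - 1) = 1 := by
  rw [wfun, qpoly_coeff_top d hd, cast_pred_add_one d hd]
  exact div_self (by exact_mod_cast (by omega : d ≠ 0))

lemma cont_wfun (d k : ℕ) : Continuous fun c : Fin (d-1) → ℂ => wfun d c k := by
  simp only [wfun, div_eq_mul_inv]
  exact (cont_qpoly_coeff d k).mul continuous_const


lemma rho_eq (d : ℕ) (hd : 2 ≤ d) (c : Fin (d - 1) → ℂ) (a : ℂ) :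
    rho d c a
      = (∑ k ∈ range d, C ((qpoly d c).coeff k / ((k : ℂ) + 1)) * X ^ (k + 1)) + C a := by
  rw [rho]
  congr 1
  rw [← qpoly]
  exact sum_over_range' _ (fun n => by simp) d (by rw [qpoly_natDegree d hd]; omega)

lemma eval_rho (d : ℕ) (hd : 2 ≤ d) (c : Fin (d - 1) → ℂ) (a z : ℂ) :
    (rho d c a).eval z
      = (∑ k ∈ range d, ((qpoly d c).coeff k / ((k : ℂ) + 1)) * z ^ (k + 1)) + a := by
  rw [rho_eq d hd]
  simp [eval_finset_sum]

lemma eval_rho' (d : ℕ) (hd : 2 ≤ d) (c : Fin (d - 1) → ℂ) (a z : ℂ) :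
    (rho d c a).eval z = (∑ k ∈ range d, wfun d c k * z ^ (k + 1)) + a := by
  rw [eval_rho d hd]
  rfl

lemma natDegree_rho (d : ℕ) (hd : 2 ≤ d) (c : Fin (d - 1) → ℂ) (a : ℂ) :
    (rho d c a).natDegree = d := by
  have hsplit : rho d c a
      = X ^ d + ((∑ k ∈ range (d-1), C ((qpoly d c).coeff k / ((k : ℂ) + 1)) * X ^ (k + 1))
          + C a) := by
    rw [rho_eq d hd c a]
    have hd1 : d - 1 + 1 = d := by omega
    have hs := Finset.sum_range_succ
      (fun k => C ((qpoly d c).coeff k / ((k : ℂ) + 1)) * X ^ (k + 1)) (d - 1)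
    rw [hd1] at hs
    rw [hs]
    have : C ((qpoly d c).coeff (d-1) / (((d-1 : ℕ) : ℂ) + 1)) = 1 := by
      rw [qpoly_coeff_top d hd, cast_pred_add_one d hd,
        div_self (by exact_mod_cast (by omega : d ≠ 0) : (d:ℂ) ≠ 0), map_one]
    rw [this, one_mul]
    ring
  have hlt : ((∑ k ∈ range (d-1), C ((qpoly d c).coeff k / ((k : ℂ) + 1)) * X ^ (k + 1))
      + C a).degree < (X ^ d : Polynomial ℂ).degree := by
    rw [degree_X_pow]
    apply lt_of_le_of_lt (degree_add_le _ _)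
    rw [max_lt_iff]
    constructor
    · apply lt_of_le_of_lt (degree_sum_le _ _)
      rw [Finset.sup_lt_iff (by exact_mod_cast WithBot.bot_lt_coe d)]
      intro k hk
      apply lt_of_le_of_lt (degree_mul_le _ _)
      apply lt_of_le_of_lt (add_le_add degree_C_le (degree_X_pow (k+1)).le)
      rw [zero_add]
      exact_mod_cast (by simp at hk; omega : (k + 1 : ℕ) < d)
    · exact lt_of_le_of_lt degree_C_le (by exact_mod_cast (by omega : (0:ℕ) < d))
  rw [hsplit]
  apply natDegree_eq_of_degree_eq_some
  rw [degree_add_eq_left_of_degree_lt hlt, degree_X_pow]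

/-- Key estimate: `|log⁺|S(z)| - d·log⁺|z|| ≤ (d+1)·log(2A)` for a monic-style sum. -/
lemma keyEst (d : ℕ) (hd : 2 ≤ d) (w : ℕ → ℂ) (hw : w (d-1) = 1) (a z : ℂ) :
    |Real.log (max (norm ((∑ k ∈ range d, w k * z^(k+1)) + a)) 1)
      - (d:ℝ) * Real.log (max (norm z) 1)|
    ≤ ((d:ℝ)+1) * Real.log (2 * ((1 + ∑ k ∈ range d, norm (w k)) + norm a)) := by
  set A : ℝ := (1 + ∑ k ∈ range d, norm (w k)) + norm a with hA
  have hA1 : 1 ≤ A := by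
    have h1 : 0 ≤ ∑ k ∈ range d, norm (w k) :=
      Finset.sum_nonneg fun k _ => (norm_nonneg _)
    have h2 : 0 ≤ norm a := norm_nonneg _
    simp only [hA]; linarith
  have hA0 : 0 < A := by linarith
  have h2A1 : (1:ℝ) < 2 * A := by linarith
  have hlog2A : 0 < Real.log (2 * A) := Real.log_pos h2A1
  set S : ℂ := (∑ k ∈ range d, w k * z^(k+1)) + a with hS
  set r : ℝ := max (norm z) 1 with hr
  have hr1 : 1 ≤ r := le_max_right _ _
  have hr0 : 0 < r := lt_of_lt_of_le one_pos hr1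
  have hzr : norm z ≤ r := le_max_left _ _
  -- upper bound
  have hU : norm S ≤ A * r ^ d := by
    have h1 : norm S ≤ (∑ k ∈ range d, norm (w k * z^(k+1))) + norm a :=
      le_trans (norm_add_le _ _) (by gcongr; exact norm_sum_le _ _)
    have h2 : ∀ k ∈ range d, norm (w k * z^(k+1)) ≤ norm (w k) * r ^ d := by
      intro k hk
      rw [norm_mul, norm_pow]
      have : norm z ^ (k+1) ≤ r ^ d := by
        calc norm z ^ (k+1) ≤ r ^ (k+1) := by
              exact pow_le_pow_left₀ (norm_nonneg _) hzr _
          _ ≤ r ^ d := pow_le_pow_right₀ hr1 (by simp at hk; omega)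
      exact mul_le_mul_of_nonneg_left this (norm_nonneg _)
    have h3 : (∑ k ∈ range d, norm (w k * z^(k+1)))
        ≤ (∑ k ∈ range d, norm (w k)) * r ^ d := by
      rw [Finset.sum_mul]
      exact Finset.sum_le_sum h2
    have h4 : norm a ≤ norm a * r ^ d :=
      le_mul_of_one_le_right (norm_nonneg _) (one_le_pow₀ hr1)
    have h5 : (1:ℝ) * r ^ d ≤ A * r ^ d := by
      apply mul_le_mul_of_nonneg_right _ (by positivity); linarith [Finset.sum_nonneg
        (fun k (_ : k ∈ range d) => (norm_nonneg (w k))), norm_nonneg a]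
    calc norm S ≤ (∑ k ∈ range d, norm (w k)) * r ^ d + norm a * r ^ d := by
          linarith
      _ ≤ A * r ^ d := by
          have := Finset.sum_nonneg (fun k (_ : k ∈ range d) => (norm_nonneg (w k)))
          nlinarith [pow_pos hr0 d]
  -- lower bound when |z| is large
  have hL : 2 * A ≤ norm z → norm z ^ d / 2 ≤ norm S := by
    intro hz
    have hz1 : 1 ≤ norm z := by linarith
    have hz0 : 0 ≤ norm z := norm_nonneg _
    have hd1 : d - 1 + 1 = d := by omega
    have hsplit : S = z ^ d + ((∑ k ∈ range (d-1), w k * z^(k+1)) + a) := by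
      rw [hS]
      have hs := Finset.sum_range_succ (fun k => w k * z^(k+1)) (d - 1)
      rw [hd1] at hs
      rw [hs, hw, one_mul]
      ring
    set T : ℂ := (∑ k ∈ range (d-1), w k * z^(k+1)) + a with hT
    have hTb : norm T ≤ A * norm z ^ (d-1) := by
      have h1 : norm T
          ≤ (∑ k ∈ range (d-1), norm (w k * z^(k+1))) + norm a :=
        le_trans (norm_add_le _ _) (by gcongr; exact norm_sum_le _ _)
      have h2 : ∀ k ∈ range (d-1),
          norm (w k * z^(k+1)) ≤ norm (w k) * norm z ^ (d-1) := by
        intro k hk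
        rw [norm_mul, norm_pow]
        exact mul_le_mul_of_nonneg_left
          (pow_le_pow_right₀ hz1 (by simp at hk; omega)) (norm_nonneg _)
      have h3 : (∑ k ∈ range (d-1), norm (w k * z^(k+1)))
          ≤ (∑ k ∈ range (d-1), norm (w k)) * norm z ^ (d-1) := by
        rw [Finset.sum_mul]; exact Finset.sum_le_sum h2
      have h4 : norm a ≤ norm a * norm z ^ (d-1) :=
        le_mul_of_one_le_right (norm_nonneg _) (one_le_pow₀ hz1)
      have h5 : (∑ k ∈ range (d-1), norm (w k)) ≤ ∑ k ∈ range d, norm (w k) :=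
        Finset.sum_le_sum_of_subset_of_nonneg
          (Finset.range_subset_range.mpr (by omega)) (fun k _ _ => norm_nonneg _)
      have h6 : 0 ≤ norm z ^ (d-1) := by positivity
      calc norm T
          ≤ (∑ k ∈ range (d-1), norm (w k)) * norm z ^ (d-1)
            + norm a * norm z ^ (d-1) := by linarith
        _ ≤ A * norm z ^ (d-1) := by nlinarith
    have hpow : norm z ^ d = norm z * norm z ^ (d-1) := by
      rw [← pow_succ']
      congr 1
      omega
    have habs : norm z ^ d - norm T ≤ norm S := by
      rw [hsplit]
      have h := norm_sub_norm_le (z ^ d) (-T)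
      rw [sub_neg_eq_add, norm_neg] at h
      simpa using h
    have h6 : 0 ≤ norm z ^ (d-1) := by positivity
    have hAT : norm T ≤ norm z ^ d / 2 := by
      rw [hpow]
      nlinarith
    linarith
  -- main case split
  rcases le_or_gt (2 * A) (norm z) with hz | hz
  · have hz1 : 1 ≤ norm z := by linarith
    have hz0 : 0 < norm z := by linarith
    have hrz : r = norm z := max_eq_left hz1
    have hSlb := hL hz
    have hzd : 2 ≤ norm z ^ d / 2 := by
      have h1 : norm z ^ 2 ≤ norm z ^ d := pow_le_pow_right₀ hz1 hd
      nlinarith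
    have hS1 : 1 ≤ norm S := by linarith
    have hS0 : 0 < norm S := by linarith
    have hmax : max (norm S) 1 = norm S := max_eq_left hS1
    rw [hmax, hrz]
    have hub : Real.log (norm S) ≤ Real.log A + (d:ℝ) * Real.log (norm z) := by
      calc Real.log (norm S) ≤ Real.log (A * norm z ^ d) := by
            apply Real.log_le_log hS0
            rw [hrz] at hU; exact hU
        _ = Real.log A + (d:ℝ) * Real.log (norm z) := by
            rw [Real.log_mul (ne_of_gt hA0) (by positivity), Real.log_pow]
    have hlb : (d:ℝ) * Real.log (norm z) - Real.log 2 ≤ Real.log (norm S) := by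
      calc (d:ℝ) * Real.log (norm z) - Real.log 2
          = Real.log (norm z ^ d / 2) := by
            rw [Real.log_div (by positivity) two_ne_zero, Real.log_pow]
        _ ≤ Real.log (norm S) := Real.log_le_log (by positivity) hSlb
    have hA2A : Real.log A ≤ Real.log (2 * A) := Real.log_le_log hA0 (by linarith)
    have h22A : Real.log 2 ≤ Real.log (2 * A) := Real.log_le_log two_pos (by linarith)
    have hdd : Real.log (2*A) ≤ ((d:ℝ)+1) * Real.log (2*A) := by
      nlinarith [hlog2A, (by exact_mod_cast Nat.zero_le d : (0:ℝ) ≤ (d:ℝ))]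
    rw [abs_le]
    constructor <;> linarith
  · have hr2A : r ≤ 2 * A := max_le (le_of_lt hz) (by linarith)
    have hL1a : 0 ≤ Real.log (max (norm S) 1) := Real.log_nonneg (le_max_right _ _)
    have hL1b : Real.log (max (norm S) 1) ≤ ((d:ℝ)+1) * Real.log (2*A) := by
      have h1 : norm S ≤ (2*A) ^ (d+1) := by
        calc norm S ≤ A * r ^ d := hU
          _ ≤ A * (2*A) ^ d := by
              exact mul_le_mul_of_nonneg_left (pow_le_pow_left₀ (le_of_lt hr0) hr2A d) (le_of_lt hA0)
          _ ≤ (2*A) * (2*A) ^ d := by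
              exact mul_le_mul_of_nonneg_right (by linarith) (by positivity)
          _ = (2*A) ^ (d+1) := by rw [pow_succ']
      have h2 : max (norm S) 1 ≤ (2*A) ^ (d+1) :=
        max_le h1 (one_le_pow₀ (by linarith))
      calc Real.log (max (norm S) 1) ≤ Real.log ((2*A) ^ (d+1)) :=
            Real.log_le_log (lt_of_lt_of_le one_pos (le_max_right _ _)) h2
        _ = ((d:ℝ)+1) * Real.log (2*A) := by rw [Real.log_pow]; push_cast; ring
    have hL2a : 0 ≤ (d:ℝ) * Real.log r := by
      have := Real.log_nonneg hr1
      positivity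
    have hL2b : (d:ℝ) * Real.log r ≤ ((d:ℝ)+1) * Real.log (2*A) := by
      have h1 : Real.log r ≤ Real.log (2*A) := Real.log_le_log hr0 hr2A
      have h2 : (0:ℝ) ≤ d := by exact_mod_cast Nat.zero_le d
      nlinarith [Real.log_nonneg hr1]
    rw [abs_le]
    constructor <;> linarith

section dyn
variable (d : ℕ)

/-- coefficient size bound -/
noncomputable def Afun (p : (Fin (d - 1) → ℂ) × ℂ × ℂ) : ℝ :=
  (1 + ∑ k ∈ range d, norm (wfun d p.1 k)) + norm p.2.1

noncomputable def Cfun (p : (Fin (d - 1) → ℂ) × ℂ × ℂ) : ℝ :=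
  ((d:ℝ)+1) * Real.log (2 * Afun d p)

noncomputable def Fn (n : ℕ) (p : (Fin (d - 1) → ℂ) × ℂ × ℂ) : ℂ :=
  (fun w => (rho d p.1 p.2.1).eval w)^[n] p.2.2

noncomputable def gfun (n : ℕ) (p : (Fin (d - 1) → ℂ) × ℂ × ℂ) : ℝ :=
  ((d:ℝ)⁻¹) ^ n * Real.log (max (norm (Fn d n p)) 1)

variable {d}
variable (hd : 2 ≤ d)
include hd

lemma Afun_one_le (p) : 1 ≤ Afun d p := by
  have h1 : 0 ≤ ∑ k ∈ range d, norm (wfun d p.1 k) :=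
    Finset.sum_nonneg fun k _ => norm_nonneg _
  have h2 : 0 ≤ norm p.2.1 := norm_nonneg _
  rw [Afun]; linarith

lemma Cfun_nonneg (p) : 0 ≤ Cfun d p := by
  have := Afun_one_le hd p
  have : 0 ≤ Real.log (2 * Afun d p) := Real.log_nonneg (by linarith)
  rw [Cfun]; positivity

lemma cont_Afun : Continuous (Afun d) := by
  apply Continuous.add
  · apply Continuous.add continuous_const
    exact continuous_finset_sum _ fun k _ =>
      (continuous_norm.comp ((cont_wfun d k).comp continuous_fst))
  · exact continuous_norm.comp (continuous_fst.comp continuous_snd)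

lemma cont_Cfun : Continuous (Cfun d) := by
  apply continuous_const.mul
  exact (continuous_const.mul (cont_Afun hd)).log
    (fun p => by have := Afun_one_le hd p; show (2:ℝ) * Afun d p ≠ 0; exact ne_of_gt (by linarith))

lemma cont_Fn (n : ℕ) : Continuous (Fn d n) := by
  induction n with
  | zero => exact continuous_snd.comp continuous_snd
  | succ n ih =>
    have hfe : ∀ p : (Fin (d - 1) → ℂ) × ℂ × ℂ,
        Fn d (n+1) p = (∑ k ∈ range d, wfun d p.1 k * (Fn d n p) ^ (k + 1)) + p.2.1 := by
      intro p
      rw [Fn, Function.iterate_succ_apply']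
      exact eval_rho' d hd _ _ _
    rw [show Fn d (n+1) = fun p : (Fin (d - 1) → ℂ) × ℂ × ℂ =>
      (∑ k ∈ range d, wfun d p.1 k * (Fn d n p) ^ (k + 1)) + p.2.1 from funext hfe]
    apply Continuous.add
    · exact continuous_finset_sum _ fun k _ =>
        (((cont_wfun d k).comp continuous_fst).mul (ih.pow (k+1)))
    · exact continuous_fst.comp continuous_snd

lemma cont_gfun (n : ℕ) : Continuous (gfun d n) := by
  apply continuous_const.mul
  exact ((continuous_norm.comp (cont_Fn hd n)).max continuous_const).log
    (fun p => by positivity)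

lemma gfun_step (n : ℕ) (p) :
    |gfun d (n+1) p - gfun d n p| ≤ ((d:ℝ)⁻¹) ^ (n+1) * Cfun d p := by
  have hd0 : (0:ℝ) < d := by exact_mod_cast (by omega : 0 < d)
  have ht0 : (0:ℝ) ≤ (d:ℝ)⁻¹ := by positivity
  have hfe : Fn d (n+1) p = (∑ k ∈ range d, wfun d p.1 k * (Fn d n p) ^ (k + 1)) + p.2.1 := by
    rw [Fn, Function.iterate_succ_apply']; exact eval_rho' d hd _ _ _
  have hkey := keyEst d hd (wfun d p.1) (wfun_top d hd p.1) p.2.1 (Fn d n p)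
  have heq : gfun d (n+1) p - gfun d n p
      = ((d:ℝ)⁻¹) ^ (n+1) *
        (Real.log (max (norm (Fn d (n+1) p)) 1)
          - (d:ℝ) * Real.log (max (norm (Fn d n p)) 1)) := by
    rw [gfun, gfun, mul_sub]
    congr 1
    rw [pow_succ, mul_assoc]
    congr 1
    rw [← mul_assoc, inv_mul_cancel₀ (ne_of_gt hd0), one_mul]
  rw [heq, abs_mul, abs_pow, abs_inv, Nat.abs_cast]
  apply mul_le_mul_of_nonneg_left _ (by positivity)
  rw [hfe]
  exact hkey
end dyn

section dyn2
variable {d : ℕ} (hd : 2 ≤ d)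
include hd

lemma invd_lt_one : ((d:ℝ)⁻¹) < 1 := by
  rw [inv_lt_one_iff₀]; right; exact_mod_cast (by omega : 1 < d)

lemma inv_nonneg' : (0:ℝ) ≤ (d:ℝ)⁻¹ := by positivity

lemma inv_le_half : ((d:ℝ)⁻¹) ≤ 1/2 := by
  rw [inv_le_comm₀ (by exact_mod_cast (by omega : 0 < d)) (by norm_num)]
  norm_num
  exact_mod_cast hd

lemma gfun_gap (p) : ∀ n m : ℕ, n ≤ m →
    |gfun d m p - gfun d n p| ≤ Cfun d p * (((d:ℝ)⁻¹) ^ n - ((d:ℝ)⁻¹) ^ m) := by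
  intro n m hnm
  induction m, hnm using Nat.le_induction with
  | base => simp
  | succ m hnm ih =>
    have hstep := gfun_step hd m p
    have hC := Cfun_nonneg hd p
    have ht0 := inv_nonneg' hd
    have ht2 := inv_le_half hd
    have htm : ((d:ℝ)⁻¹) ^ (m+1) = ((d:ℝ)⁻¹) ^ m * ((d:ℝ)⁻¹) := pow_succ _ _
    have h1 : |gfun d (m+1) p - gfun d n p|
        ≤ |gfun d (m+1) p - gfun d m p| + |gfun d m p - gfun d n p| := by
      have := abs_sub_le (gfun d (m+1) p) (gfun d m p) (gfun d n p)
      linarith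
    have hpm : (0:ℝ) ≤ ((d:ℝ)⁻¹) ^ m := by positivity
    calc |gfun d (m+1) p - gfun d n p|
        ≤ ((d:ℝ)⁻¹) ^ (m+1) * Cfun d p + Cfun d p * (((d:ℝ)⁻¹) ^ n - ((d:ℝ)⁻¹) ^ m) := by
          linarith
      _ ≤ Cfun d p * (((d:ℝ)⁻¹) ^ n - ((d:ℝ)⁻¹) ^ (m+1)) := by
          have hmain : 0 ≤ Cfun d p * (((d:ℝ)⁻¹) ^ m) * (1 - 2 * (d:ℝ)⁻¹) :=
            mul_nonneg (mul_nonneg hC hpm) (by linarith)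
          rw [htm]; nlinarith [hmain]

lemma gfun_tail (p) (n m : ℕ) (hnm : n ≤ m) :
    |gfun d m p - gfun d n p| ≤ Cfun d p * ((d:ℝ)⁻¹) ^ n := by
  have := gfun_gap hd p n m hnm
  have hC := Cfun_nonneg hd p
  have hpm : (0:ℝ) ≤ ((d:ℝ)⁻¹) ^ m := by positivity
  nlinarith

lemma tendsto_gfun (p : (Fin (d - 1) → ℂ) × ℂ × ℂ) :
    Filter.Tendsto (fun n => gfun d n p) atTop
      (nhds (escapeRate (rho d p.1 p.2.1) p.2.2)) ∧
    ∀ n, |escapeRate (rho d p.1 p.2.1) p.2.2 - gfun d n p| ≤ Cfun d p * ((d:ℝ)⁻¹) ^ n := by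
  have hC := Cfun_nonneg hd p
  have hcauchy : CauchySeq (fun n => gfun d n p) := by
    apply cauchySeq_of_le_tendsto_0 (fun N => 2 * Cfun d p * ((d:ℝ)⁻¹) ^ N)
    · intro n m N hn hm
      rw [Real.dist_eq]
      have h1 := gfun_tail hd p N n hn
      have h2 := gfun_tail hd p N m hm
      have h3 := abs_sub_le (gfun d n p) (gfun d N p) (gfun d m p)
      rw [abs_sub_comm (gfun d N p) (gfun d m p)] at h3
      linarith
    · have := tendsto_pow_atTop_nhds_zero_of_lt_one (inv_nonneg' hd) (invd_lt_one hd)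
      simpa using this.const_mul (2 * Cfun d p)
  obtain ⟨l, hl⟩ := cauchySeq_tendsto_of_complete hcauchy
  have hER : escapeRate (rho d p.1 p.2.1) p.2.2 = l := by
    rw [escapeRate]
    have heq : (fun n : ℕ => (((rho d p.1 p.2.1).natDegree : ℝ)⁻¹) ^ n *
        Real.log (max (norm ((fun w => (rho d p.1 p.2.1).eval w)^[n] p.2.2)) 1))
        = fun n => gfun d n p := by
      funext n
      rw [natDegree_rho d hd]
      rfl
    rw [heq]
    exact hl.limUnder_eq
  rw [hER]
  refine ⟨hl, fun n => ?_⟩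
  have : Filter.Tendsto (fun m => |gfun d m p - gfun d n p|) atTop
      (nhds (|l - gfun d n p|)) := ((hl.sub tendsto_const_nhds).abs)
  apply le_of_tendsto this
  filter_upwards [eventually_ge_atTop n] with m hm
  exact gfun_tail hd p n m hm
end dyn2

section final
variable {d : ℕ} (hd : 2 ≤ d)
include hd

lemma cont_G : Continuous (fun p : (Fin (d - 1) → ℂ) × ℂ × ℂ =>
    escapeRate (rho d p.1 p.2.1) p.2.2) := by
  have hlocal : TendstoLocallyUniformly (fun n p => gfun d n p)
      (fun p : (Fin (d - 1) → ℂ) × ℂ × ℂ => escapeRate (rho d p.1 p.2.1) p.2.2) atTop := by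
    rw [Metric.tendstoLocallyUniformly_iff]
    intro ε hε x
    refine ⟨{p | Cfun d p < Cfun d x + 1}, ?_, ?_⟩
    · exact (isOpen_lt (cont_Cfun hd) continuous_const).mem_nhds (by simp)
    · have htend : Filter.Tendsto (fun n : ℕ => (Cfun d x + 1) * ((d:ℝ)⁻¹)^n) atTop (nhds 0) := by
        simpa using (tendsto_pow_atTop_nhds_zero_of_lt_one (inv_nonneg' hd)
          (invd_lt_one hd)).const_mul (Cfun d x + 1)
      filter_upwards [htend.eventually_lt_const hε] with n hn y hy
      have h1 := (tendsto_gfun hd y).2 n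
      have h2 : ((0:ℝ)) ≤ ((d:ℝ)⁻¹)^n := by positivity
      rw [Real.dist_eq]
      calc |escapeRate (rho d y.1 y.2.1) y.2.2 - gfun d n y| ≤ Cfun d y * ((d:ℝ)⁻¹)^n := h1
        _ ≤ (Cfun d x + 1) * ((d:ℝ)⁻¹)^n := mul_le_mul_of_nonneg_right (le_of_lt hy) h2
        _ < ε := hn
  exact hlocal.continuous (Filter.Eventually.of_forall fun n => cont_gfun hd n).frequently
end final


set_option maxHeartbeats 1000000 in
/-- The map `(c; a; z) ↦ G_{ρ(c;a)}(z)` is continuous on `H × ℂ × ℂ`,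
where `H = {c ∈ ℂ^{d−1} : ∑ cᵢ = 0}`; in particular the marked critical heights map
`𝒢^×(c; a) = (G_f(c₁), …, G_f(c_{d−1}))`, `f = ρ(c;a)`, is continuous on `H × ℂ`. -/
theorem escapeRate_continuousOn_marked (d : ℕ) (hd : 2 ≤ d) :
    ContinuousOn
      (fun p : (Fin (d - 1) → ℂ) × ℂ × ℂ => escapeRate (rho d p.1 p.2.1) p.2.2)
      {p : (Fin (d - 1) → ℂ) × ℂ × ℂ | ∑ i, p.1 i = 0} ∧
    ContinuousOn
      (fun p : (Fin (d - 1) → ℂ) × ℂ =>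
        (fun i => escapeRate (rho d p.1 p.2) (p.1 i) : Fin (d - 1) → ℝ))
      {p : (Fin (d - 1) → ℂ) × ℂ | ∑ i, p.1 i = 0} := by
  constructor
  · exact (cont_G hd).continuousOn
  · apply Continuous.continuousOn
    apply continuous_pi
    intro i
    have hmap : Continuous (fun p : (Fin (d - 1) → ℂ) × ℂ =>
        ((p.1, p.2, p.1 i) : (Fin (d - 1) → ℂ) × ℂ × ℂ)) :=
      continuous_fst.prodMk (continuous_snd.prodMk ((continuous_apply i).comp continuous_fst))
    have heq : (fun p : (Fin (d - 1) → ℂ) × ℂ => escapeRate (rho d p.1 p.2) (p.1 i))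
        = (fun q : (Fin (d - 1) → ℂ) × ℂ × ℂ => escapeRate (rho d q.1 q.2.1) q.2.2)
          ∘ (fun p : (Fin (d - 1) → ℂ) × ℂ => (p.1, p.2, p.1 i)) := rfl
    rw [heq]
    exact (cont_G hd).comp hmap
end

section
/- Let d ≥ 2 and let f ∈ ℂ[z] have degree d. The escape rate G_f is harmonic on the open set Ω = {z ∈ ℂ : G_f(z) > 0}; that is, G_f is smooth on Ω with vanishing Laplacian there. -/
noncomputable def Complex.abs : AbsoluteValue ℂ ℝ := NormedField.toAbsoluteValue ℂ

lemma Complex.abs_re_le_abs (z : ℂ) : |z.re| ≤ Complex.abs z := Complex.abs_re_le_norm z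

lemma Complex.abs_le_abs_re_add_abs_im (z : ℂ) : Complex.abs z ≤ |z.re| + |z.im| :=
  Complex.norm_le_abs_re_add_abs_im z

lemma Complex.continuous_abs : Continuous Complex.abs := continuous_norm

open Polynomial Filter Complex Topology

lemma aux_eval_bound (p : Polynomial ℂ) (n : ℕ) (hn : p.natDegree < n) (w : ℂ)
    (hw : 1 ≤ Complex.abs w) :
    Complex.abs (p.eval w) ≤ (∑ i ∈ Finset.range n, Complex.abs (p.coeff i)) *
      Complex.abs w ^ (n - 1) := by
  rw [Polynomial.eval_eq_sum_range' hn]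
  refine le_trans (Complex.abs.sum_le _ _) ?_
  rw [Finset.sum_mul]
  refine Finset.sum_le_sum fun i hi => ?_
  rw [map_mul, map_pow]
  refine mul_le_mul_of_nonneg_left ?_ (Complex.abs.nonneg _)
  exact pow_le_pow_right₀ hw (Nat.le_sub_one_of_lt (Finset.mem_range.mp hi))

noncomputable def eB (f : Polynomial ℂ) : ℝ :=
  ∑ i ∈ Finset.range f.natDegree, Complex.abs (f.eraseLead.coeff i)

noncomputable def eR (f : Polynomial ℂ) : ℝ :=
  max 4 ((2 * eB f + 4) / Complex.abs f.leadingCoeff)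

lemma four_le_eR (f : Polynomial ℂ) : 4 ≤ eR f := le_max_left _ _
lemma one_lt_eR (f : Polynomial ℂ) : 1 < eR f := lt_of_lt_of_le (by norm_num) (four_le_eR f)

lemma eval_step (f : Polynomial ℂ) (hd2 : 2 ≤ f.natDegree) (w : ℂ)
    (hw : eR f ≤ Complex.abs w) :
    Complex.abs (f.eval w / (f.leadingCoeff * w ^ f.natDegree) - 1) ≤ 1/2 ∧
    2 * Complex.abs w ≤ Complex.abs (f.eval w) := by
  set d := f.natDegree with hd
  set a := f.leadingCoeff with haa
  have hf0 : f ≠ 0 := Polynomial.ne_zero_of_natDegree_gt (n := 0) (by omega)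
  have ha0 : a ≠ 0 := Polynomial.leadingCoeff_ne_zero.mpr hf0
  have hapos : 0 < Complex.abs a := Complex.abs.pos ha0
  have hw4 : 4 ≤ Complex.abs w := le_trans (four_le_eR f) hw
  have hw1 : 1 ≤ Complex.abs w := by linarith
  have hw0 : w ≠ 0 := by
    intro h; rw [h] at hw4; simp at hw4; linarith
  have hB0 : 0 ≤ eB f := Finset.sum_nonneg fun i _ => Complex.abs.nonneg _
  have hwa : 2 * eB f + 4 ≤ Complex.abs a * Complex.abs w := by
    have h1 : (2 * eB f + 4) / Complex.abs a ≤ Complex.abs w :=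
      le_trans (le_max_right _ _) hw
    rw [div_le_iff₀ hapos] at h1; linarith [mul_comm (Complex.abs w) (Complex.abs a)]
  have hkey : Complex.abs (f.eval w - a * w ^ d) ≤ eB f * Complex.abs w ^ (d - 1) := by
    have hlt : f.eraseLead.natDegree < d := lt_of_le_of_lt f.eraseLead_natDegree_le (by omega)
    have hev : f.eraseLead.eval w = f.eval w - a * w ^ d := by
      have h := Polynomial.eraseLead_add_C_mul_X_pow f
      have h2 := congrArg (Polynomial.eval w) h
      simp only [Polynomial.eval_add, Polynomial.eval_mul, Polynomial.eval_C,
        Polynomial.eval_pow, Polynomial.eval_X] at h2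
      rw [← h2]; ring
    rw [← hev]
    exact aux_eval_bound f.eraseLead d hlt w hw1
  have hwd : Complex.abs w ^ d = Complex.abs w ^ (d - 1) * Complex.abs w := by
    rw [← pow_succ]; congr 1; omega
  have hpownn : 0 ≤ Complex.abs w ^ (d - 1) := pow_nonneg (Complex.abs.nonneg _) _
  have hwpow : Complex.abs w ≤ Complex.abs w ^ (d - 1) :=
    le_self_pow₀ hw1 (by omega)
  have hsub : Complex.abs (f.eval w - a * w ^ d) ≤ Complex.abs a * Complex.abs w ^ d / 2 := by
    refine le_trans hkey ?_
    rw [hwd]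
    nlinarith
  have hden : Complex.abs (a * w ^ d) = Complex.abs a * Complex.abs w ^ d := by
    rw [map_mul, map_pow]
  have hdenpos : 0 < Complex.abs a * Complex.abs w ^ d := by positivity
  constructor
  · have hrw : f.eval w / (a * w ^ d) - 1 = (f.eval w - a * w ^ d) / (a * w ^ d) := by
      field_simp
    rw [hrw, map_div₀, hden, div_le_iff₀ hdenpos]
    linarith
  · have htri : Complex.abs (a * w ^ d) ≤
        Complex.abs (f.eval w - a * w ^ d) + Complex.abs (f.eval w) := by
      have h1 : a * w ^ d = f.eval w + (a * w ^ d - f.eval w) := by ring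
      calc Complex.abs (a * w ^ d) = Complex.abs (f.eval w + (a * w ^ d - f.eval w)) := by
            rw [← h1]
        _ ≤ Complex.abs (f.eval w) + Complex.abs (a * w ^ d - f.eval w) := Complex.abs.add_le _ _
        _ = Complex.abs (f.eval w - a * w ^ d) + Complex.abs (f.eval w) := by
            rw [Complex.abs.map_sub]; ring
    have hfw : Complex.abs a * Complex.abs w ^ d / 2 ≤ Complex.abs (f.eval w) := by
      rw [hden] at htri; linarith
    have h4 : 4 ≤ Complex.abs a * Complex.abs w ^ (d - 1) := by
      nlinarith
    nlinarith

lemma re_pos_of_abs_sub_one_lt (q : ℂ) (hq : Complex.abs (q - 1) < 1) : 0 < q.re := by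
  have h1 : |(q - 1).re| ≤ Complex.abs (q - 1) := Complex.abs_re_le_abs _
  have h2 : (q - 1).re = q.re - 1 := by simp
  rw [h2] at h1
  have := abs_le.mp h1
  linarith [this.1]

lemma abs_bounds_of_close (q : ℂ) (hq : Complex.abs (q - 1) ≤ 1/2) :
    1/2 ≤ Complex.abs q ∧ Complex.abs q ≤ 3/2 := by
  have h1 : Complex.abs q ≤ Complex.abs (q - 1) + Complex.abs 1 := by
    calc Complex.abs q = Complex.abs ((q - 1) + 1) := by ring_nf
      _ ≤ Complex.abs (q - 1) + Complex.abs 1 := Complex.abs.add_le _ _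
  have h2 : Complex.abs 1 ≤ Complex.abs (q - 1) + Complex.abs q := by
    calc Complex.abs 1 = Complex.abs ((q - 1) * (-1) + q) := by ring_nf
      _ ≤ Complex.abs ((q - 1) * (-1)) + Complex.abs q := Complex.abs.add_le _ _
      _ = Complex.abs (q - 1) + Complex.abs q := by rw [map_mul]; simp
  simp only [map_one] at h1 h2
  constructor <;> linarith

lemma real_log_bound_of_close (q : ℂ) (hq : Complex.abs (q - 1) ≤ 1/2) :
    |Real.log (Complex.abs q)| ≤ Real.log 2 := by
  obtain ⟨hlo, hhi⟩ := abs_bounds_of_close q hq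
  rw [abs_le]
  constructor
  · have : Real.log (1/2) ≤ Real.log (Complex.abs q) :=
      Real.log_le_log (by norm_num) hlo
    rw [show (1:ℝ)/2 = 2⁻¹ by norm_num, Real.log_inv] at this
    linarith
  · calc Real.log (Complex.abs q) ≤ Real.log (3/2) := Real.log_le_log (by linarith) hhi
      _ ≤ Real.log 2 := Real.log_le_log (by norm_num) (by norm_num)

lemma complex_log_bound_of_close (q : ℂ) (hq : Complex.abs (q - 1) ≤ 1/2) :
    ‖Complex.log q‖ ≤ Real.log 2 + Real.pi := by
  have h1 : Complex.abs (Complex.log q) ≤ |(Complex.log q).re| + |(Complex.log q).im| :=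
    Complex.abs_le_abs_re_add_abs_im _
  rw [Complex.log_re, Complex.log_im] at h1
  have h2 := real_log_bound_of_close q hq
  have h3 := Complex.abs_arg_le_pi q
  calc ‖Complex.log q‖ = Complex.abs (Complex.log q) := rfl
    _ ≤ _ := h1
    _ ≤ Real.log 2 + Real.pi := by
      change |Real.log ‖q‖| ≤ Real.log 2 at h2
      linarith

lemma log_step (f : Polynomial ℂ) (hd2 : 2 ≤ f.natDegree) (w : ℂ) (hw : eR f ≤ Complex.abs w) :
    Real.log (Complex.abs (f.eval w)) = f.natDegree * Real.log (Complex.abs w) +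
      (Real.log (Complex.abs f.leadingCoeff) +
        Real.log (Complex.abs (f.eval w / (f.leadingCoeff * w ^ f.natDegree)))) := by
  set d := f.natDegree
  set a := f.leadingCoeff with haa
  have hf0 : f ≠ 0 := Polynomial.ne_zero_of_natDegree_gt (n := 0) (by omega)
  have ha0 : a ≠ 0 := Polynomial.leadingCoeff_ne_zero.mpr hf0
  have hw4 : (4:ℝ) ≤ Complex.abs w := le_trans (four_le_eR f) hw
  have hw0 : w ≠ 0 := by
    intro h; rw [h] at hw4; simp at hw4; linarith
  have hfw0 : f.eval w ≠ 0 := by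
    intro h
    have h2 := (eval_step f hd2 w hw).2
    rw [h] at h2; rw [map_zero] at h2
    have : (0:ℝ) < Complex.abs w := Complex.abs.pos hw0
    linarith
  have hden0 : a * w ^ d ≠ 0 := mul_ne_zero ha0 (pow_ne_zero _ hw0)
  have hq0 : f.eval w / (a * w ^ d) ≠ 0 := div_ne_zero hfw0 hden0
  have hfact : f.eval w = a * w ^ d * (f.eval w / (a * w ^ d)) := by
    field_simp
  calc Real.log (Complex.abs (f.eval w))
      = Real.log (Complex.abs (a * w ^ d * (f.eval w / (a * w ^ d)))) := by rw [← hfact]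
    _ = Real.log (Complex.abs a * Complex.abs w ^ d *
          Complex.abs (f.eval w / (a * w ^ d))) := by rw [map_mul, map_mul, map_pow]
    _ = Real.log (Complex.abs a) + d * Real.log (Complex.abs w) +
          Real.log (Complex.abs (f.eval w / (a * w ^ d))) := by
        rw [Real.log_mul (mul_pos (Complex.abs.pos ha0) (pow_pos (Complex.abs.pos hw0) d)).ne' (Complex.abs.ne_zero hq0),
          Real.log_mul (Complex.abs.ne_zero ha0) (pow_pos (Complex.abs.pos hw0) d).ne', Real.log_pow]
    _ = _ := by ring

lemma orbit_ge (f : Polynomial ℂ) (hd2 : 2 ≤ f.natDegree) (z : ℂ) (N : ℕ)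
    (hz : eR f ≤ Complex.abs ((fun w => f.eval w)^[N] z)) (k : ℕ) :
    eR f ≤ Complex.abs ((fun w => f.eval w)^[N + k] z) := by
  induction k with
  | zero => exact hz
  | succ k ih =>
    rw [show N + (k+1) = (N+k) + 1 by ring, Function.iterate_succ_apply']
    have h := (eval_step f hd2 _ ih).2
    have hnn := Complex.abs.nonneg ((fun w => f.eval w)^[N+k] z)
    show eR f ≤ Complex.abs (f.eval ((fun w => f.eval w)^[N + k] z))
    linarith

lemma tendsto_aux (f : Polynomial ℂ) (hd2 : 2 ≤ f.natDegree) (z : ℂ) :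
    ∃ L : ℝ, Filter.Tendsto (fun n : ℕ =>
        ((f.natDegree : ℝ)⁻¹) ^ n *
          Real.log (max (Complex.abs ((fun w => f.eval w)^[n] z)) 1))
      Filter.atTop (nhds L) ∧
      ((∀ n : ℕ, Complex.abs ((fun w => f.eval w)^[n] z) < eR f) → L = 0) := by
  set d := f.natDegree with hd
  have hd1 : (1:ℝ) < (d:ℝ) := by exact_mod_cast (by omega : 1 < d)
  have hd0 : (d:ℝ) ≠ 0 := by positivity
  have hdinv0 : (0:ℝ) ≤ (d:ℝ)⁻¹ := by positivity
  have hdinvlt : (d:ℝ)⁻¹ < 1 := inv_lt_one_of_one_lt₀ hd1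
  have h1R : (1:ℝ) < eR f := lt_of_lt_of_le (by norm_num) (four_le_eR f)
  set u : ℕ → ℝ := fun n =>
    ((d : ℝ)⁻¹) ^ n * Real.log (max (Complex.abs ((fun w => f.eval w)^[n] z)) 1) with hu
  by_cases hb : ∀ n, Complex.abs ((fun w => f.eval w)^[n] z) < eR f
  · refine ⟨0, ?_, fun _ => rfl⟩
    have hto : Filter.Tendsto (fun n : ℕ => ((d:ℝ)⁻¹) ^ n * Real.log (eR f)) Filter.atTop
        (nhds 0) := by
      simpa using (tendsto_pow_atTop_nhds_zero_of_lt_one hdinv0 hdinvlt).mul_const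
        (Real.log (eR f))
    refine squeeze_zero (fun n => ?_) (fun n => ?_) hto
    · exact mul_nonneg (pow_nonneg hdinv0 n) (Real.log_nonneg (le_max_right _ 1))
    · refine mul_le_mul_of_nonneg_left ?_ (pow_nonneg hdinv0 n)
      refine Real.log_le_log (by positivity) ?_
      exact max_le (le_of_lt (hb n)) (le_of_lt h1R)
  · push_neg at hb
    obtain ⟨N, hN⟩ := hb
    set Mr : ℝ := |Real.log (Complex.abs f.leadingCoeff)| + Real.log 2 with hMr
    have hMr0 : 0 ≤ Mr := by
      have := Real.log_nonneg (by norm_num : (1:ℝ) ≤ 2)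
      have := abs_nonneg (Real.log (Complex.abs f.leadingCoeff))
      linarith
    set v : ℕ → ℝ := fun n => ((d : ℝ)⁻¹) ^ n *
      Real.log (Complex.abs ((fun w => f.eval w)^[n] z)) with hv
    set g : ℕ → ℝ := fun k => v (N + k) with hg
    set e : ℕ → ℝ := fun k => g (k + 1) - g k with he
    have horb : ∀ k, eR f ≤ Complex.abs ((fun w => f.eval w)^[N + k] z) :=
      orbit_ge f hd2 z N hN
    have hebound : ∀ k, ‖e k‖ ≤ (((d:ℝ)⁻¹) ^ (N + 1) * Mr) * ((d:ℝ)⁻¹) ^ k := by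
      intro k
      set w : ℂ := (fun w => f.eval w)^[N + k] z with hw
      have hwge := horb k
      have hlog := log_step f hd2 w hwge
      have hq := real_log_bound_of_close _ (eval_step f hd2 w hwge).1
      have hiter : (fun w => f.eval w)^[N + (k + 1)] z = f.eval w := by
        rw [show N + (k+1) = (N+k) + 1 by ring, Function.iterate_succ_apply']
      have hpow : ((d:ℝ)⁻¹) ^ (N + k + 1) * (d:ℝ) = ((d:ℝ)⁻¹) ^ (N + k) := by
        rw [pow_succ, mul_assoc, inv_mul_cancel₀ hd0, mul_one]
      have he1 : e k = ((d:ℝ)⁻¹) ^ (N + k + 1) *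
          (Real.log (Complex.abs f.leadingCoeff) +
            Real.log (Complex.abs (f.eval w / (f.leadingCoeff * w ^ d)))) := by
        simp only [he, hg, hv, hiter]
        rw [hlog, show N + (k+1) = N + k + 1 by ring, ← hpow]
        ring
      have habs : ‖(d:ℝ)⁻¹‖ = (d:ℝ)⁻¹ := by rw [Real.norm_eq_abs, _root_.abs_of_nonneg hdinv0]
      have hE : ‖Real.log (Complex.abs f.leadingCoeff) +
            Real.log (Complex.abs (f.eval w / (f.leadingCoeff * w ^ d)))‖ ≤ Mr := by
        calc ‖Real.log (Complex.abs f.leadingCoeff) +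
              Real.log (Complex.abs (f.eval w / (f.leadingCoeff * w ^ d)))‖
            ≤ |Real.log (Complex.abs f.leadingCoeff)| +
              |Real.log (Complex.abs (f.eval w / (f.leadingCoeff * w ^ d)))| := abs_add_le _ _
          _ ≤ Mr := by rw [hMr]; linarith
      rw [he1]
      calc ‖((d:ℝ)⁻¹) ^ (N + k + 1) * (Real.log (Complex.abs f.leadingCoeff) +
              Real.log (Complex.abs (f.eval w / (f.leadingCoeff * w ^ d))))‖
          = ((d:ℝ)⁻¹) ^ (N + k + 1) * ‖Real.log (Complex.abs f.leadingCoeff) +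
              Real.log (Complex.abs (f.eval w / (f.leadingCoeff * w ^ d)))‖ := by
            rw [norm_mul, norm_pow, habs]
        _ ≤ ((d:ℝ)⁻¹) ^ (N + k + 1) * Mr :=
            mul_le_mul_of_nonneg_left hE (pow_nonneg hdinv0 _)
        _ = (((d:ℝ)⁻¹) ^ (N + 1) * Mr) * ((d:ℝ)⁻¹) ^ k := by
            rw [show N + k + 1 = (N + 1) + k by ring, pow_add]; ring
    have hsum : Summable e := by
      refine Summable.of_norm_bounded ?_ hebound
      exact (summable_geometric_of_lt_one hdinv0 hdinvlt).mul_left _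
    obtain ⟨S, hS⟩ := hsum
    have hps : Filter.Tendsto (fun k => ∑ i ∈ Finset.range k, e i) Filter.atTop (nhds S) :=
      hS.tendsto_sum_nat
    have htel : ∀ k, ∑ i ∈ Finset.range k, e i = g k - g 0 := fun k =>
      Finset.sum_range_sub g k
    have hgto : Filter.Tendsto g Filter.atTop (nhds (S + g 0)) := by
      have h2 : Filter.Tendsto (fun k => (g k - g 0) + g 0) Filter.atTop (nhds (S + g 0)) := by
        refine Filter.Tendsto.add_const _ ?_
        exact hps.congr (fun k => htel k)
      simpa using h2
    have hvto : Filter.Tendsto v Filter.atTop (nhds (S + g 0)) := by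
      rw [← tendsto_add_atTop_iff_nat N]
      refine hgto.congr (fun k => ?_)
      simp only [hg, add_comm]
    refine ⟨S + g 0, ?_, fun hcon => absurd hN (not_le.mpr (hcon N))⟩
    refine hvto.congr' ?_
    rw [Filter.eventuallyEq_iff_exists_mem]
    refine ⟨{n | N ≤ n}, Filter.mem_atTop N, fun n hn => ?_⟩
    have hn' : N ≤ n := hn
    have hge : eR f ≤ Complex.abs ((fun w => f.eval w)^[n] z) := by
      have := horb (n - N)
      rwa [show N + (n - N) = n by omega] at this
    simp only [hv, hu]
    rw [max_eq_left (le_trans (le_of_lt h1R) hge)]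

lemma harmonic_re_of_holo {F : ℂ → ℂ} {U : Set ℂ} (hU : IsOpen U) (hF : DifferentiableOn ℂ F U)
    {z₀ : ℂ} (hz₀ : z₀ ∈ U) {g : ℂ → ℝ} (hg : ∀ z ∈ U, g z = (F z).re) :
    iteratedFDeriv ℝ 2 g z₀ ![1, 1] + iteratedFDeriv ℝ 2 g z₀ ![Complex.I, Complex.I] = 0 := by
  have hgev : g =ᶠ[𝓝 z₀] fun z => (F z).re :=
    Filter.eventuallyEq_of_mem (hU.mem_nhds hz₀) hg
  have hgit : iteratedFDeriv ℝ 2 g z₀ = iteratedFDeriv ℝ 2 (fun z => (F z).re) z₀ := by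
    rw [← iteratedFDerivWithin_univ, ← iteratedFDerivWithin_univ]
    exact Filter.EventuallyEq.iteratedFDerivWithin_eq
      (by rwa [nhdsWithin_univ]) (hg z₀ hz₀) 2
  set Φ : (ℂ →L[ℂ] ℂ) →L[ℝ] (ℂ →L[ℝ] ℝ) :=
    ((ContinuousLinearMap.compL ℝ ℂ ℂ ℝ) Complex.reCLM).comp
      (ContinuousLinearMap.restrictScalarsL ℂ ℂ ℂ ℝ ℝ) with hΦ
  have h1 : ∀ z ∈ U, fderiv ℝ (fun w => (F w).re) z = Φ (fderiv ℂ F z) := by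
    intro z hz
    have hFz : DifferentiableAt ℂ F z := (hF z hz).differentiableAt (hU.mem_nhds hz)
    have hd2 : HasFDerivAt (fun w => (F w).re)
        (Complex.reCLM.comp ((fderiv ℂ F z).restrictScalars ℝ)) z :=
      Complex.reCLM.hasFDerivAt.comp z (hFz.hasFDerivAt.restrictScalars ℝ)
    rw [hd2.fderiv]; rfl
  have hd2' : fderiv ℝ (fun w => (F w).re) =ᶠ[𝓝 z₀] fun z => Φ (fderiv ℂ F z) :=
    Filter.eventuallyEq_of_mem (hU.mem_nhds hz₀) h1
  have hAn : AnalyticOnNhd ℂ (fderiv ℂ F) U := (hF.analyticOnNhd hU).fderiv_of_isOpen hU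
  have hdF : DifferentiableAt ℂ (fderiv ℂ F) z₀ := (hAn z₀ hz₀).differentiableAt
  set A : ℂ →L[ℂ] (ℂ →L[ℂ] ℂ) := fderiv ℂ (fderiv ℂ F) z₀ with hA
  have hhd : HasFDerivAt (fun z => Φ (fderiv ℂ F z)) (Φ.comp (A.restrictScalars ℝ)) z₀ :=
    Φ.hasFDerivAt.comp z₀ (hdF.hasFDerivAt.restrictScalars ℝ)
  have h2 : fderiv ℝ (fderiv ℝ (fun w => (F w).re)) z₀ = Φ.comp (A.restrictScalars ℝ) := by
    rw [Filter.EventuallyEq.fderiv_eq hd2']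
    exact hhd.fderiv
  have happ : ∀ x y : ℂ, A x y = x * (y * (A 1 1)) := by
    intro x y
    have hx : A x = x • A 1 := by
      conv_lhs => rw [show x = x • (1:ℂ) by simp]
      rw [map_smul]
    rw [hx, ContinuousLinearMap.smul_apply]
    have hy : (A 1) y = y • (A 1) 1 := by
      conv_lhs => rw [show y = y • (1:ℂ) by simp]
      rw [map_smul]
    rw [hy, smul_eq_mul, smul_eq_mul]
  have hmain : ∀ x y : ℂ, iteratedFDeriv ℝ 2 g z₀ ![x, y] = (x * (y * (A 1 1))).re := by
    intro x y
    rw [hgit, iteratedFDeriv_two_apply, h2]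
    have : (Φ.comp (A.restrictScalars ℝ)) (![x, y] 0) (![x, y] 1) = (A x y).re := by
      simp only [Matrix.cons_val_zero, Matrix.cons_val_one, Matrix.head_cons]
      rfl
    rw [this, happ]
  rw [hmain 1 1, hmain Complex.I Complex.I]
  have hI : Complex.I * (Complex.I * (A 1 1)) = -(1 * (1 * (A 1 1))) := by
    rw [← mul_assoc, Complex.I_mul_I]; ring
  rw [hI, Complex.neg_re]
  ring

lemma local_rep (f : Polynomial ℂ) (hd2 : 2 ≤ f.natDegree) (z₀ : ℂ) (N : ℕ)
    (hz₀ : eR f < Complex.abs ((fun w => f.eval w)^[N] z₀)) :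
    ∃ U : Set ℂ, IsOpen U ∧ z₀ ∈ U ∧ ∃ F : ℂ → ℂ, DifferentiableOn ℂ F U ∧
      ∀ z ∈ U, Filter.Tendsto (fun n : ℕ => ((f.natDegree : ℝ)⁻¹) ^ n *
        Real.log (max (Complex.abs ((fun w => f.eval w)^[n] z)) 1)) Filter.atTop
        (nhds ((F z).re)) := by
  set d := f.natDegree with hdd
  set a := f.leadingCoeff with haa
  have hf0 : f ≠ 0 := Polynomial.ne_zero_of_natDegree_gt (n := 0) (by omega)
  have ha0 : a ≠ 0 := Polynomial.leadingCoeff_ne_zero.mpr hf0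
  have hd1 : (1:ℝ) < (d:ℝ) := by exact_mod_cast (by omega : 1 < d)
  have hd0 : (d:ℝ) ≠ 0 := by positivity
  have hdinv0 : (0:ℝ) ≤ (d:ℝ)⁻¹ := by positivity
  have hdinvlt : (d:ℝ)⁻¹ < 1 := inv_lt_one_of_one_lt₀ hd1
  have hinv_norm : ‖((d:ℂ))⁻¹‖ = (d:ℝ)⁻¹ := by
    rw [norm_inv, Complex.norm_natCast]
  have h0R : (0:ℝ) < eR f := lt_of_lt_of_le (by norm_num) (four_le_eR f)
  have h1R : (1:ℝ) < eR f := lt_of_lt_of_le (by norm_num) (four_le_eR f)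
  set P : ℕ → ℂ → ℂ := fun m z => (fun w => f.eval w)^[m] z with hP
  have hPsucc : ∀ (m : ℕ) (z : ℂ), P (m+1) z = f.eval (P m z) := fun m z =>
    Function.iterate_succ_apply' _ _ _
  have hPdiff : ∀ m, Differentiable ℂ (P m) := fun m =>
    Differentiable.iterate (Polynomial.differentiable f) m
  have hne0 : ∀ (w : ℂ), eR f ≤ Complex.abs w → w ≠ 0 := by
    intro w hw h
    rw [h, map_zero] at hw; linarith
  set w₀ : ℂ := P N z₀ with hw₀def
  have hw₀R : eR f < Complex.abs w₀ := hz₀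
  have habsw₀ : 0 < Complex.abs w₀ := lt_trans h0R hw₀R
  have hw₀0 : w₀ ≠ 0 := hne0 w₀ (le_of_lt hw₀R)
  set U : Set ℂ := P N ⁻¹' ({x | eR f < Complex.abs x} ∩ Metric.ball w₀ (Complex.abs w₀))
    with hU
  have hUopen : IsOpen U :=
    ((isOpen_lt continuous_const Complex.continuous_abs).inter Metric.isOpen_ball).preimage
      (hPdiff N).continuous
  have hz₀U : z₀ ∈ U := ⟨hw₀R, Metric.mem_ball_self habsw₀⟩
  have horb : ∀ z ∈ U, ∀ k, eR f ≤ Complex.abs (P (N+k) z) := fun z hz k =>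
    orbit_ge f hd2 z N (le_of_lt hz.1) k
  set Mc : ℝ := ‖Complex.log a‖ + (Real.log 2 + Real.pi) with hMc
  have hMc0 : 0 ≤ Mc := by
    have h1 := norm_nonneg (Complex.log a)
    have h2 := Real.log_nonneg (by norm_num : (1:ℝ) ≤ 2)
    have h3 := Real.pi_nonneg
    rw [hMc]; linarith
  set τ : ℕ → ℂ → ℂ := fun k z => ((d:ℂ))⁻¹^(N+k+1) *
    (Complex.log a + Complex.log (f.eval (P (N+k) z) / (a * (P (N+k) z)^d))) with hτ
  set ub : ℕ → ℝ := fun k => (((d:ℝ)⁻¹)^(N+1) * Mc) * ((d:ℝ)⁻¹)^k with hub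
  have husum : Summable ub := (summable_geometric_of_lt_one hdinv0 hdinvlt).mul_left _
  have hτb : ∀ (k : ℕ) (z : ℂ), z ∈ U → ‖τ k z‖ ≤ ub k := by
    intro k z hz
    have hw := horb z hz k
    have hq := (eval_step f hd2 _ hw).1
    have hE : ‖Complex.log a + Complex.log (f.eval (P (N+k) z) / (a * (P (N+k) z)^d))‖
        ≤ Mc := by
      calc ‖Complex.log a + Complex.log (f.eval (P (N+k) z) / (a * (P (N+k) z)^d))‖
          ≤ ‖Complex.log a‖ +
            ‖Complex.log (f.eval (P (N+k) z) / (a * (P (N+k) z)^d))‖ := norm_add_le _ _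
        _ ≤ Mc := by
            have := complex_log_bound_of_close _ hq
            rw [hMc]; linarith
    calc ‖τ k z‖ = ((d:ℝ)⁻¹)^(N+k+1) *
          ‖Complex.log a + Complex.log (f.eval (P (N+k) z) / (a * (P (N+k) z)^d))‖ := by
          simp only [hτ]; rw [norm_mul, norm_pow, hinv_norm]
      _ ≤ ((d:ℝ)⁻¹)^(N+k+1) * Mc :=
          mul_le_mul_of_nonneg_left hE (pow_nonneg hdinv0 _)
      _ = ub k := by rw [hub, show N+k+1 = (N+1)+k by ring, pow_add]; ring
  have hτdiff : ∀ k, DifferentiableOn ℂ (τ k) U := by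
    intro k z hz
    have hw := horb z hz k
    have hq := (eval_step f hd2 _ hw).1
    have hre : 0 < ((f.eval (P (N+k) z)) / (a * (P (N+k) z)^d)).re :=
      re_pos_of_abs_sub_one_lt _ (lt_of_le_of_lt hq (by norm_num))
    have hw0 : P (N+k) z ≠ 0 := hne0 _ hw
    have hPz : DifferentiableAt ℂ (P (N+k)) z := (hPdiff (N+k)) z
    have hinner : DifferentiableAt ℂ
        (fun z => f.eval (P (N+k) z) / (a * (P (N+k) z)^d)) z := by
      refine DifferentiableAt.div ?_ ?_ (mul_ne_zero ha0 (pow_ne_zero _ hw0))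
      · exact ((Polynomial.differentiable f) _).comp z hPz
      · exact (hPz.pow d).const_mul a
    have hlogd : DifferentiableAt ℂ Complex.log
        ((f.eval (P (N+k) z)) / (a * (P (N+k) z)^d)) :=
      Complex.differentiableAt_log (Or.inl hre)
    exact (((differentiableAt_const (Complex.log a)).add
      (hlogd.comp z hinner)).const_mul _).differentiableWithinAt
  set base : ℂ → ℂ := fun z => ((d:ℂ))⁻¹^N *
    (Complex.log w₀ + Complex.log ((P N z) / w₀)) with hbase
  have hbasediff : DifferentiableOn ℂ base U := by
    intro z hz
    have hball : Complex.abs (P N z - w₀) < Complex.abs w₀ := by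
      have := hz.2
      rwa [Metric.mem_ball, Complex.dist_eq] at this
    have hq1 : Complex.abs ((P N z) / w₀ - 1) < 1 := by
      have hrw : (P N z) / w₀ - 1 = (P N z - w₀) / w₀ := by field_simp
      rw [hrw, map_div₀, div_lt_one habsw₀]
      exact hball
    have hre : 0 < ((P N z) / w₀).re := re_pos_of_abs_sub_one_lt _ hq1
    have hinner : DifferentiableAt ℂ (fun z => (P N z) / w₀) z :=
      ((hPdiff N) z).div_const w₀
    have hlogd : DifferentiableAt ℂ Complex.log ((P N z) / w₀) :=
      Complex.differentiableAt_log (Or.inl hre)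
    exact (((differentiableAt_const (Complex.log w₀)).add
      (hlogd.comp z hinner)).const_mul _).differentiableWithinAt
  set F : ℂ → ℂ := fun z => base z + ∑' k, τ k z with hF
  have hsumdiff : DifferentiableOn ℂ (fun z => ∑' k, τ k z) U :=
    differentiableOn_tsum_of_summable_norm husum hτdiff hUopen hτb
  have hFdiff : DifferentiableOn ℂ F U := hbasediff.add hsumdiff
  refine ⟨U, hUopen, hz₀U, F, hFdiff, ?_⟩
  intro z hz
  set v : ℕ → ℝ := fun n => ((d:ℝ)⁻¹)^n *
    Real.log (Complex.abs (P n z)) with hv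
  have hcast : ∀ m : ℕ, ((d:ℂ))⁻¹^m = ((((d:ℝ)⁻¹^m : ℝ)) : ℂ) := by
    intro m; push_cast; ring
  have hre_scale : ∀ (r : ℝ) (ζ : ℂ), ((r:ℂ) * ζ).re = r * ζ.re := by
    intro r ζ; simp [Complex.mul_re]
  have hpow : ∀ m : ℕ, ((d:ℝ)⁻¹) ^ (m + 1) * (d:ℝ) = ((d:ℝ)⁻¹) ^ m := by
    intro m; rw [pow_succ, mul_assoc, inv_mul_cancel₀ hd0, mul_one]
  have habsP : ∀ k, (0:ℝ) < Complex.abs (P (N+k) z) := fun k =>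
    lt_of_lt_of_le h0R (horb z hz k)
  -- re of τ terms
  have hre_τ : ∀ k, (τ k z).re = v (N+k+1) - v (N+k) := by
    intro k
    have hw := horb z hz k
    have hlog := log_step f hd2 _ hw
    have h1 : (τ k z).re = ((d:ℝ)⁻¹)^(N+k+1) *
        (Real.log (Complex.abs a) +
          Real.log (Complex.abs (f.eval (P (N+k) z) / (a * (P (N+k) z)^d)))) := by
      simp only [hτ]
      rw [hcast (N+k+1), hre_scale]
      congr 1
      rw [Complex.add_re, Complex.log_re, Complex.log_re]
      rfl
    rw [h1]; simp only [hv]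
    have h2 : P (N+k+1) z = f.eval (P (N+k) z) := hPsucc (N+k) z
    rw [h2, hlog, ← hpow (N+k)]
    ring
  -- re of base
  have hre_base : (base z).re = v N := by
    simp only [hbase, hv]
    rw [hcast N, hre_scale]
    congr 1
    rw [Complex.add_re, Complex.log_re, Complex.log_re]
    change Real.log (Complex.abs w₀) + Real.log (Complex.abs (P N z / w₀)) = _
    rw [map_div₀,
      Real.log_div (ne_of_gt (by simpa using habsP 0)) (ne_of_gt habsw₀)]
    ring
  have hsummτ : Summable (fun k => τ k z) :=
    Summable.of_norm_bounded husum (fun k => hτb k z hz)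
  have hhs_re : HasSum (fun k => (τ k z).re) ((∑' k, τ k z).re) := by
    have := Complex.reCLM.hasSum hsummτ.hasSum
    simpa using this
  have hps : Filter.Tendsto (fun k => ∑ i ∈ Finset.range k, (τ i z).re)
      Filter.atTop (nhds ((∑' k, τ k z).re)) := hhs_re.tendsto_sum_nat
  have htel : ∀ k, ∑ i ∈ Finset.range k, (τ i z).re = v (N+k) - v N := by
    intro k
    rw [Finset.sum_congr rfl (fun i _ => hre_τ i)]
    exact Finset.sum_range_sub (fun i => v (N+i)) k
  have hgto : Filter.Tendsto (fun k => v (N+k)) Filter.atTop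
      (nhds ((∑' k, τ k z).re + v N)) := by
    have h2 : Filter.Tendsto (fun k => (v (N+k) - v N) + v N) Filter.atTop
        (nhds ((∑' k, τ k z).re + v N)) :=
      Filter.Tendsto.add_const _ (hps.congr (fun k => by rw [htel k]))
    simpa using h2
  have hvto : Filter.Tendsto v Filter.atTop (nhds ((F z).re)) := by
    have hFre : (F z).re = (∑' k, τ k z).re + v N := by
      rw [hF, Complex.add_re, hre_base]; ring
    rw [hFre, ← tendsto_add_atTop_iff_nat N]
    exact hgto.congr (fun k => by rw [add_comm])
  refine hvto.congr' ?_
  rw [Filter.eventuallyEq_iff_exists_mem]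
  refine ⟨{n | N ≤ n}, Filter.mem_atTop N, fun n hn => ?_⟩
  have hn' : N ≤ n := hn
  have hge : eR f ≤ Complex.abs (P n z) := by
    have := horb z hz (n - N)
    rwa [show N + (n - N) = n by omega] at this
  simp only [hv]
  rw [max_eq_left (le_trans (le_of_lt h1R) hge)]


/-- For a polynomial `f` of degree `d ≥ 2`, the escape rate `G_f` is
harmonic on `Ω = {z : G_f(z) > 0}`: it is smooth on `Ω` and its Laplacian (the sum of the
second derivatives in the real coordinate directions `1` and `I` of `ℂ ≅ ℝ²`) vanishes
there. -/
theorem escapeRate_harmonic_on_positive_set (d : ℕ) (hd : 2 ≤ d)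
    (f : Polynomial ℂ) (hdeg : f.natDegree = d) :
    ContDiffOn ℝ (⊤ : ℕ∞) (escapeRate f) {z : ℂ | 0 < escapeRate f z} ∧
    ∀ z ∈ {z : ℂ | 0 < escapeRate f z},
      iteratedFDeriv ℝ 2 (escapeRate f) z ![1, 1]
        + iteratedFDeriv ℝ 2 (escapeRate f) z ![Complex.I, Complex.I] = 0 := by
  subst hdeg
  have key : ∀ z₀ ∈ {z : ℂ | 0 < escapeRate f z}, ∃ U : Set ℂ, IsOpen U ∧ z₀ ∈ U ∧
      ∃ F : ℂ → ℂ, DifferentiableOn ℂ F U ∧ ∀ z ∈ U, escapeRate f z = (F z).re := by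
    intro z₀ hz₀
    have hesc : ∃ N, eR f ≤ Complex.abs ((fun w => f.eval w)^[N] z₀) := by
      by_contra hcon
      push_neg at hcon
      obtain ⟨L, hL, h0⟩ := tendsto_aux f hd z₀
      have hval : escapeRate f z₀ = L := by
        unfold escapeRate; exact hL.limUnder_eq
      rw [Set.mem_setOf_eq, hval, h0 hcon] at hz₀
      exact lt_irrefl 0 hz₀
    obtain ⟨N₀, hN₀⟩ := hesc
    have hstrict : eR f < Complex.abs ((fun w => f.eval w)^[N₀+1] z₀) := by
      rw [Function.iterate_succ_apply']
      have h := (eval_step f hd _ hN₀).2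
      have h4 : (4:ℝ) ≤ eR f := four_le_eR f
      have hnn := Complex.abs.nonneg ((fun w => f.eval w)^[N₀] z₀)
      show eR f < Complex.abs (f.eval ((fun w => f.eval w)^[N₀] z₀))
      linarith
    obtain ⟨U, hUopen, hz₀U, F, hFdiff, hlim⟩ := local_rep f hd z₀ (N₀+1) hstrict
    refine ⟨U, hUopen, hz₀U, F, hFdiff, fun z hz => ?_⟩
    unfold escapeRate
    exact (hlim z hz).limUnder_eq
  constructor
  · intro z₀ hz₀
    obtain ⟨U, hUopen, hz₀U, F, hFdiff, heq⟩ := key z₀ hz₀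
    have hcdC : ContDiffOn ℂ (⊤:ℕ∞) F U := hFdiff.contDiffOn hUopen
    have hat : ContDiffAt ℂ (⊤:ℕ∞) F z₀ := hcdC.contDiffAt (hUopen.mem_nhds hz₀U)
    have hatR : ContDiffAt ℝ (⊤:ℕ∞) F z₀ := hat.restrict_scalars ℝ
    have hre : ContDiffAt ℝ (⊤:ℕ∞) (fun z => (F z).re) z₀ :=
      (Complex.reCLM.contDiff.contDiffAt).comp z₀ hatR
    have hev : escapeRate f =ᶠ[nhds z₀] fun z => (F z).re :=
      Filter.eventuallyEq_of_mem (hUopen.mem_nhds hz₀U) heq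
    exact (hre.congr_of_eventuallyEq hev).contDiffWithinAt
  · intro z₀ hz₀
    obtain ⟨U, hUopen, hz₀U, F, hFdiff, heq⟩ := key z₀ hz₀
    exact harmonic_re_of_holo hUopen hFdiff hz₀U heq
end

section
/- Let d ≥ 2. The critical heights map 𝒢 : 𝕄P_d → ℋ_d descends to a continuous map 𝒢̄ : 𝒯_d^* → ℋ_d on the quotient 𝒯_d^*, and every fiber of 𝒢̄ is a totally disconnected subset of 𝒯_d^*. -/
/-- The monic centered polynomial `z^d + b_{d−2} z^{d−2} + ⋯ + b₁ z + b₀` with coefficient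
vector `b ∈ ℂ^{d−1}`; this parametrizes the space `𝒫_d ≅ ℂ^{d−1}`. -/
noncomputable def toPoly (d : ℕ) (b : Fin (d - 1) → ℂ) : Polynomial ℂ :=
  Polynomial.X ^ d + ∑ i : Fin (d - 1), Polynomial.C (b i) * Polynomial.X ^ (i : ℕ)

/-- The critical heights of a monic centered polynomial: the nonincreasing rearrangement of
the escape rates of its critical points (roots of the derivative), listed with multiplicity. -/
noncomputable def heights (d : ℕ) (b : Fin (d - 1) → ℂ) : Fin (d - 1) → ℝ := fun i =>
  ((Multiset.sort (Multiset.map (escapeRate (toPoly d b))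
      (Polynomial.roots (Polynomial.derivative (toPoly d b)))) (· ≤ ·)).reverse).getD (i : ℕ) 0

/-- The equivalence on monic centered polynomials: `f ∼ g` iff `g(z) = ζ⁻¹ f(ζ z)` for some
`(d−1)`-st root of unity `ζ`. -/
def polyRel (d : ℕ) (b b' : Fin (d - 1) → ℂ) : Prop :=
  ∃ ζ : ℂ, ζ ^ (d - 1) = 1 ∧
    toPoly d b' = Polynomial.C ζ⁻¹ * (toPoly d b).comp (Polynomial.C ζ * Polynomial.X)

/-- The moduli space `𝕄P_d` of conformal conjugacy classes of monic centered degree-`d`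
polynomials, with the quotient topology. -/
def Moduli (d : ℕ) : Type := Quot (polyRel d)

instance (d : ℕ) : TopologicalSpace (Moduli d) :=
  inferInstanceAs (TopologicalSpace (Quot (polyRel d)))

/-- The critical heights map `𝒢 : 𝕄P_d → ℋ_d`.  (Since `heights` is invariant under the
conjugation equivalence, evaluating on the chosen representative `q.out` computes `𝒢`.) -/
noncomputable def Gq (d : ℕ) : Moduli d → (Fin (d - 1) → ℝ) := fun q => heights d q.out
/-- The relation on `𝕄P_d` collapsing each connected component of each fiber of the
critical heights map `𝒢` to a point. -/
def tRel (d : ℕ) (x y : Moduli d) : Prop :=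
  y ∈ connectedComponentIn (Gq d ⁻¹' {Gq d x}) x

/-- The quotient space `𝒯_d^*` of `𝕄P_d` by connected components of fibers of `𝒢`. -/
def Tstar (d : ℕ) : Type := Quot (tRel d)

instance (d : ℕ) : TopologicalSpace (Tstar d) :=
  inferInstanceAs (TopologicalSpace (Quot (tRel d)))



open Polynomial Filter Topology Set

set_option maxHeartbeats 1000000

noncomputable section EHTaux

/-! ### log⁺ -/

noncomputable def lplus (t : ℝ) : ℝ := Real.log (max t 1)

lemma lplus_nonneg (t : ℝ) : 0 ≤ lplus t := Real.log_nonneg (le_max_right _ _)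

lemma lplus_eq_log {t : ℝ} (h : 1 ≤ t) : lplus t = Real.log t := by
  rw [lplus, max_eq_left h]

lemma continuous_lplus : Continuous lplus := by
  have h1 : Continuous fun t : ℝ => max t 1 := continuous_id.max continuous_const
  refine Real.continuousOn_log.comp_continuous h1 fun t => ?_
  have : (0:ℝ) < max t 1 := lt_of_lt_of_le one_pos (le_max_right _ _)
  simpa using this.ne'

/-! ### basic facts about `toPoly` -/

lemma eval_toPoly (d : ℕ) (b : Fin (d-1) → ℂ) (z : ℂ) :
    (toPoly d b).eval z = z ^ d + ∑ i : Fin (d-1), b i * z ^ (i:ℕ) := by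
  simp [toPoly, eval_finset_sum]

lemma natDegree_sum_aux (d : ℕ) (g : Fin (d-1) → ℂ[X])
    (he : ∀ i, (g i).natDegree ≤ d - 2) :
    (∑ i : Fin (d-1), g i).natDegree ≤ d - 2 := by
  refine le_trans (natDegree_sum_le _ _) ?_
  rw [Finset.fold_max_le]
  exact ⟨Nat.zero_le _, fun i _ => he i⟩

lemma natDegree_toPoly (d : ℕ) (hd : 2 ≤ d) (b : Fin (d-1) → ℂ) :
    (toPoly d b).natDegree = d := by
  have hq : (∑ i : Fin (d-1), C (b i) * X ^ (i:ℕ)).natDegree < d := by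
    have h1 : (∑ i : Fin (d-1), C (b i) * X ^ (i:ℕ)).natDegree ≤ d - 2 :=
      natDegree_sum_aux d (fun i => C (b i) * X ^ (i:ℕ))
      (fun i => le_trans (natDegree_C_mul_X_pow_le _ _) (by have := i.isLt; omega))
    omega
  rw [toPoly, natDegree_add_eq_left_of_natDegree_lt (by rwa [natDegree_X_pow]),
    natDegree_X_pow]

lemma derivative_toPoly (d : ℕ) (b : Fin (d-1) → ℂ) :
    derivative (toPoly d b) =
      C (d:ℂ) * X ^ (d-1) + ∑ i : Fin (d-1), C (b i * (i:ℕ)) * X ^ ((i:ℕ) - 1) := by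
  rw [toPoly, derivative_add, derivative_sum, derivative_X_pow]
  congr 1
  exact Finset.sum_congr rfl fun i _ => derivative_C_mul_X_pow _ _

lemma eval_derivative_toPoly (d : ℕ) (b : Fin (d-1) → ℂ) (z : ℂ) :
    (derivative (toPoly d b)).eval z =
      (d:ℂ) * z ^ (d-1) + ∑ i : Fin (d-1), b i * (i:ℕ) * z ^ ((i:ℕ) - 1) := by
  rw [derivative_toPoly]
  simp [eval_finset_sum]

lemma natDegree_derivative_toPoly (d : ℕ) (hd : 2 ≤ d) (b : Fin (d-1) → ℂ) :
    (derivative (toPoly d b)).natDegree = d - 1 := by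
  have hs : (∑ i : Fin (d-1), C (b i * (i:ℕ)) * X ^ ((i:ℕ) - 1)).natDegree ≤ d - 2 :=
    natDegree_sum_aux d _
    (fun i => le_trans (natDegree_C_mul_X_pow_le _ _) (by have := i.isLt; omega))
  have hlead : (C (d:ℂ) * X ^ (d-1)).natDegree = d-1 :=
    natDegree_C_mul_X_pow _ _ (Nat.cast_ne_zero.mpr (by omega))
  rw [derivative_toPoly, natDegree_add_eq_left_of_natDegree_lt (by rw [hlead]; omega), hlead]

lemma leadingCoeff_derivative_toPoly (d : ℕ) (hd : 2 ≤ d) (b : Fin (d-1) → ℂ) :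
    (derivative (toPoly d b)).leadingCoeff = (d:ℂ) := by
  have hs : (∑ i : Fin (d-1), C (b i * (i:ℕ)) * X ^ ((i:ℕ) - 1)).natDegree ≤ d - 2 :=
    natDegree_sum_aux d _
    (fun i => le_trans (natDegree_C_mul_X_pow_le _ _) (by have := i.isLt; omega))
  rw [leadingCoeff, natDegree_derivative_toPoly d hd b, derivative_toPoly, coeff_add,
    coeff_C_mul, coeff_X_pow, if_pos rfl, mul_one,
    coeff_eq_zero_of_natDegree_lt (lt_of_le_of_lt hs (by omega)), add_zero]

lemma derivative_toPoly_ne_zero (d : ℕ) (hd : 2 ≤ d) (b : Fin (d-1) → ℂ) :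
    derivative (toPoly d b) ≠ 0 := by
  intro h0
  have h1 := leadingCoeff_derivative_toPoly d hd b
  rw [h0, leadingCoeff_zero] at h1
  have : d = 0 := by exact_mod_cast h1.symm
  omega

lemma card_roots_derivative_toPoly (d : ℕ) (hd : 2 ≤ d) (b : Fin (d-1) → ℂ) :
    Multiset.card (derivative (toPoly d b)).roots = d - 1 :=
  (splits_iff_card_roots.mp (IsAlgClosed.splits _)).trans
    (natDegree_derivative_toPoly d hd b)

def sAbs (d : ℕ) (b : Fin (d-1) → ℂ) : ℝ := ∑ i, ‖b i‖

lemma sAbs_nonneg (d : ℕ) (b : Fin (d-1) → ℂ) : 0 ≤ sAbs d b :=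
  Finset.sum_nonneg fun i _ => (norm_nonneg _)

lemma continuous_sAbs (d : ℕ) : Continuous (sAbs d) := by
  refine continuous_finset_sum _ fun i _ => ?_
  exact continuous_norm.comp (continuous_apply i)

lemma root_bound (d : ℕ) (hd : 2 ≤ d) (b : Fin (d-1) → ℂ) {r : ℂ}
    (hr : r ∈ (derivative (toPoly d b)).roots) :
    ‖r‖ ≤ max 1 (sAbs d b) := by
  set a := ‖r‖ with ha
  rcases le_or_gt a 1 with h1 | h1
  · exact le_trans h1 (le_max_left _ _)
  refine le_trans ?_ (le_max_right _ _)
  have hroot : (derivative (toPoly d b)).eval r = 0 := by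
    have := (mem_roots'.mp hr).2
    exact this
  rw [eval_derivative_toPoly] at hroot
  have heq : (d:ℂ) * r ^ (d-1) = -∑ i : Fin (d-1), b i * (i:ℕ) * r ^ ((i:ℕ) - 1) := by
    linear_combination hroot
  have habs : (d:ℝ) * a ^ (d-1) = ‖∑ i : Fin (d-1), b i * (i:ℕ) * r ^ ((i:ℕ) - 1)‖ := by
    rw [← norm_neg, ← heq, norm_mul, norm_pow, Complex.norm_natCast]
  have hterm : ∀ i : Fin (d-1), ‖b i * (i:ℕ) * r ^ ((i:ℕ) - 1)‖ ≤
      ‖b i‖ * ((d:ℝ) * a ^ (d-2)) := by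
    intro i
    rw [norm_mul, norm_mul, norm_pow, Complex.norm_natCast, mul_assoc]
    refine mul_le_mul_of_nonneg_left ?_ (norm_nonneg _)
    have hi1 : ((i:ℕ):ℝ) ≤ (d:ℝ) := by
      have := i.isLt; exact_mod_cast (by omega : (i:ℕ) ≤ d)
    have hi2 : a ^ ((i:ℕ)-1) ≤ a ^ (d-2) := by
      refine pow_le_pow_right₀ h1.le ?_
      have := i.isLt; omega
    exact mul_le_mul hi1 hi2 (pow_nonneg (norm_nonneg _) _) (by positivity)
  have hsum : ‖∑ i : Fin (d-1), b i * (i:ℕ) * r ^ ((i:ℕ) - 1)‖ ≤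
      sAbs d b * ((d:ℝ) * a ^ (d-2)) := by
    refine le_trans (norm_sum_le _ _) ?_
    rw [sAbs, Finset.sum_mul]
    exact Finset.sum_le_sum fun i _ => hterm i
  have hP : (0:ℝ) < (d:ℝ) * a ^ (d-2) := by
    have hd0 : (0:ℝ) < d := by exact_mod_cast (by omega : 0 < d)
    have ha0 : (0:ℝ) < a := lt_trans one_pos h1
    positivity
  have h2 : ((d:ℝ) * a ^ (d-2)) * a = (d:ℝ) * a ^ (d-1) := by
    rw [show d-1 = (d-2)+1 by omega, pow_succ]; ring
  refine le_of_mul_le_mul_left ?_ hP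
  rw [h2]
  calc (d:ℝ) * a ^ (d-1) ≤ sAbs d b * ((d:ℝ) * a ^ (d-2)) := by rw [habs]; exact hsum
    _ = ((d:ℝ) * a ^ (d-2)) * sAbs d b := by ring


/-! ### the fundamental estimate -/

noncomputable def Cbd (d : ℕ) (R : ℝ) : ℝ := ((d:ℝ) + 1) * Real.log (2 * R)

lemma CC_nonneg (d : ℕ) {R : ℝ} (hR : 1 ≤ R) : 0 ≤ Cbd d R := by
  have h1 : (0:ℝ) ≤ Real.log (2 * R) := Real.log_nonneg (by linarith)
  have h2 : (0:ℝ) ≤ (d:ℝ) + 1 := by positivity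
  exact mul_nonneg h2 h1

lemma key_est (d : ℕ) (hd : 2 ≤ d) (b : Fin (d-1) → ℂ) (z : ℂ) {R : ℝ} (hR1 : 1 ≤ R)
    (hbR : sAbs d b ≤ R) :
    |lplus (‖(toPoly d b).eval z‖) - (d:ℝ) * lplus (‖z‖)| ≤ Cbd d R := by
  set a := ‖z‖ with ha
  set A := ‖(toPoly d b).eval z‖ with hA
  set M := max a 1 with hM
  set s := sAbs d b with hs
  have ha0 : 0 ≤ a := norm_nonneg _
  have hM1 : (1:ℝ) ≤ M := le_max_right _ _
  have hM0 : (0:ℝ) < M := lt_of_lt_of_le one_pos hM1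
  have haM : a ≤ M := le_max_left _ _
  have hs0 : 0 ≤ s := sAbs_nonneg d b
  have h2R1 : (1:ℝ) ≤ 2 * R := by linarith
  have hlog2R : (0:ℝ) ≤ Real.log (2 * R) := Real.log_nonneg h2R1
  have hsum : ‖∑ i : Fin (d-1), b i * z ^ (i:ℕ)‖ ≤ s * M ^ (d-2) := by
    refine le_trans (norm_sum_le _ _) ?_
    rw [hs, sAbs, Finset.sum_mul]
    refine Finset.sum_le_sum fun i _ => ?_
    rw [norm_mul, norm_pow]
    refine mul_le_mul_of_nonneg_left ?_ (norm_nonneg _)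
    calc a ^ (i:ℕ) ≤ M ^ (i:ℕ) := pow_le_pow_left₀ ha0 haM _
      _ ≤ M ^ (d-2) := pow_le_pow_right₀ hM1 (by have := i.isLt; omega)
  have hup : A ≤ a ^ d + s * M ^ (d-2) := by
    rw [hA, eval_toPoly]
    refine le_trans (norm_add_le _ _) ?_
    rw [norm_pow]
    exact add_le_add le_rfl hsum
  have hlo : a ^ d - s * M ^ (d-2) ≤ A := by
    have hzd : (z ^ d : ℂ) = (toPoly d b).eval z - ∑ i : Fin (d-1), b i * z ^ (i:ℕ) := by
      rw [eval_toPoly]; ring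
    have : a ^ d ≤ A + s * M ^ (d-2) := by
      calc a ^ d = ‖z ^ d‖ := by rw [norm_pow]
        _ = ‖(toPoly d b).eval z + -(∑ i : Fin (d-1), b i * z ^ (i:ℕ))‖ := by
            rw [hzd, sub_eq_add_neg]
        _ ≤ A + ‖-(∑ i : Fin (d-1), b i * z ^ (i:ℕ))‖ := norm_add_le _ _
        _ ≤ A + s * M ^ (d-2) := by rw [norm_neg]; exact add_le_add le_rfl hsum
    linarith
  have habs_le : ∀ x y C : ℝ, 0 ≤ x → x ≤ C → 0 ≤ y → y ≤ C → |x - y| ≤ C := by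
    intro x y C hx hxC hy hyC
    rw [abs_sub_le_iff]; constructor <;> linarith
  rcases le_or_gt a (2*R) with hcase | hcase
  · -- small |z|
    have hM2R : M ≤ 2 * R := max_le hcase h2R1
    have hA_le : A ≤ (2*R) ^ (d+1) := by
      have h1 : a ^ d ≤ (2*R) ^ d := pow_le_pow_left₀ ha0 hcase d
      have h2 : s * M ^ (d-2) ≤ R * (2*R) ^ (d-2) := by
        refine mul_le_mul hbR (pow_le_pow_left₀ (le_of_lt hM0) hM2R _) (by positivity) (by linarith)
      have h3 : R * (2*R) ^ (d-2) ≤ (2*R) ^ (d-1) := by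
        rw [show d-1 = (d-2)+1 by omega, pow_succ]
        calc R * (2*R) ^ (d-2) = (2*R) ^ (d-2) * R := by ring
          _ ≤ (2*R) ^ (d-2) * (2*R) := by
              refine mul_le_mul_of_nonneg_left (by linarith) (by positivity)
      have h4 : (2*R) ^ (d-1) ≤ (2*R) ^ d := pow_le_pow_right₀ h2R1 (by omega)
      have h5 : (2:ℝ) * (2*R) ^ d ≤ (2*R) ^ (d+1) := by
        rw [pow_succ]
        calc (2:ℝ) * (2*R) ^ d = (2*R) ^ d * 2 := by ring
          _ ≤ (2*R) ^ d * (2*R) := by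
              refine mul_le_mul_of_nonneg_left (by linarith) (by positivity)
      calc A ≤ a ^ d + s * M ^ (d-2) := hup
        _ ≤ (2*R) ^ d + (2*R) ^ (d-1) := by linarith
        _ ≤ 2 * (2*R) ^ d := by linarith
        _ ≤ (2*R) ^ (d+1) := h5
    have hlpA : lplus A ≤ Cbd d R := by
      have h0 : (1:ℝ) ≤ (2*R) ^ (d+1) := one_le_pow₀ h2R1
      have h1 : max A 1 ≤ (2*R) ^ (d+1) := max_le hA_le h0
      have h2 : lplus A ≤ Real.log ((2*R) ^ (d+1)) := by
        rw [lplus]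
        exact Real.log_le_log (lt_of_lt_of_le one_pos (le_max_right _ _)) h1
      rw [Real.log_pow] at h2
      unfold Cbd; push_cast at h2 ⊢; linarith
    have hlpa : (d:ℝ) * lplus a ≤ Cbd d R := by
      have h2 : lplus a ≤ Real.log (2*R) := by
        rw [lplus]
        exact Real.log_le_log (lt_of_lt_of_le one_pos (le_max_right _ _)) (max_le hcase h2R1)
      have h3 : (d:ℝ) * lplus a ≤ (d:ℝ) * Real.log (2*R) :=
        mul_le_mul_of_nonneg_left h2 (by positivity)
      unfold Cbd; nlinarith [hlog2R]
    exact habs_le _ _ _ (lplus_nonneg _) hlpA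
      (mul_nonneg (by positivity) (lplus_nonneg _)) hlpa
  · -- large |z|
    have ha1 : (1:ℝ) ≤ a := by linarith
    have ha2 : (2:ℝ) ≤ a := by linarith
    have hMa : M = a := max_eq_left ha1
    have hpow2 : a ^ (d-1) = a ^ (d-2) * a := by rw [← pow_succ]; congr 1; omega
    have hpow1 : a ^ d = a ^ (d-1) * a := by rw [← pow_succ]; congr 1; omega
    have hq : s * M ^ (d-2) ≤ a ^ d / 4 := by
      rw [hMa]
      have e1 : s * a ^ (d-2) ≤ R * a ^ (d-2) := mul_le_mul_of_nonneg_right hbR (by positivity)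
      have e2 : 2 * R * a ^ (d-2) ≤ a ^ (d-1) := by
        rw [hpow2]
        calc 2 * R * a ^ (d-2) = a ^ (d-2) * (2*R) := by ring
          _ ≤ a ^ (d-2) * a := mul_le_mul_of_nonneg_left hcase.le (by positivity)
      have e3 : 2 * a ^ (d-1) ≤ a ^ d := by
        rw [hpow1]
        calc 2 * a ^ (d-1) = a ^ (d-1) * 2 := by ring
          _ ≤ a ^ (d-1) * a := mul_le_mul_of_nonneg_left ha2 (by positivity)
      linarith
    have hAlow : a ^ d / 2 ≤ A := by linarith
    have hAup : A ≤ 2 * a ^ d := by linarith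
    have h4 : (4:ℝ) ≤ a ^ d := by
      calc (4:ℝ) = 2^2 := by norm_num
        _ ≤ 2^d := pow_le_pow_right₀ one_le_two hd
        _ ≤ a^d := pow_le_pow_left₀ (by norm_num) ha2 d
    have hA1 : (1:ℝ) ≤ A := by linarith
    have hlA : lplus A = Real.log A := lplus_eq_log hA1
    have hla : lplus a = Real.log a := lplus_eq_log ha1
    have ha0' : a ≠ 0 := by linarith
    have hlup : Real.log A ≤ Real.log 2 + (d:ℝ) * Real.log a := by
      have h5 := Real.log_le_log (by linarith : (0:ℝ) < A) hAup
      rw [Real.log_mul two_ne_zero (pow_ne_zero _ ha0'), Real.log_pow] at h5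
      linarith
    have hllow : (d:ℝ) * Real.log a - Real.log 2 ≤ Real.log A := by
      have h5 := Real.log_le_log (by positivity : (0:ℝ) < a ^ d / 2) hAlow
      rw [Real.log_div (pow_ne_zero _ ha0') two_ne_zero, Real.log_pow] at h5
      linarith
    have hfin : |lplus A - (d:ℝ) * lplus a| ≤ Real.log 2 := by
      rw [hlA, hla, abs_sub_le_iff]
      constructor <;> linarith
    have hlog2 : Real.log 2 ≤ Cbd d R := by
      have e1 : Real.log 2 ≤ Real.log (2*R) := Real.log_le_log two_pos (by linarith)
      have e2 : Real.log (2*R) ≤ ((d:ℝ)+1) * Real.log (2*R) :=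
        le_mul_of_one_le_left hlog2R (by push_cast; linarith)
      unfold Cbd; linarith
    linarith


/-! ### the escape rate as a limit -/

noncomputable def itPt (d : ℕ) (p : (Fin (d-1) → ℂ) × ℂ) : ℕ → ℂ :=
  fun n => (fun w => (toPoly d p.1).eval w)^[n] p.2

lemma itPt_succ (d : ℕ) (p : (Fin (d-1) → ℂ) × ℂ) (n : ℕ) :
    itPt d p (n+1) = (toPoly d p.1).eval (itPt d p n) :=
  Function.iterate_succ_apply' _ _ _

noncomputable def gseq (d : ℕ) (p : (Fin (d-1) → ℂ) × ℂ) (n : ℕ) : ℝ :=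
  ((d:ℝ))⁻¹ ^ n * lplus (‖itPt d p n‖)

noncomputable def GG (d : ℕ) (p : (Fin (d-1) → ℂ) × ℂ) : ℝ :=
  escapeRate (toPoly d p.1) p.2

lemma escapeRate_eq_limUnder (d : ℕ) (hd : 2 ≤ d) (b : Fin (d-1) → ℂ) (z : ℂ) :
    escapeRate (toPoly d b) z = limUnder atTop (gseq d (b, z)) := by
  unfold escapeRate gseq itPt lplus
  simp only [natDegree_toPoly d hd b]

lemma step_est (d : ℕ) (hd : 2 ≤ d) (p : (Fin (d-1) → ℂ) × ℂ) {R : ℝ} (hR1 : 1 ≤ R)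
    (hbR : sAbs d p.1 ≤ R) (n : ℕ) :
    dist (gseq d p n) (gseq d p (n+1)) ≤ (Cbd d R / d) * ((d:ℝ)⁻¹) ^ n := by
  have hd0 : (0:ℝ) < d := by exact_mod_cast (by omega : 0 < d)
  have hkey := key_est d hd p.1 (itPt d p n) hR1 hbR
  have heq : gseq d p (n+1) - gseq d p n =
      ((d:ℝ)⁻¹) ^ (n+1) *
        (lplus (‖(toPoly d p.1).eval (itPt d p n)‖)
          - (d:ℝ) * lplus (‖itPt d p n‖)) := by
    unfold gseq
    rw [itPt_succ, pow_succ]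
    field_simp
  calc dist (gseq d p n) (gseq d p (n+1))
      = |gseq d p (n+1) - gseq d p n| := by rw [Real.dist_eq, abs_sub_comm]
    _ = ((d:ℝ)⁻¹) ^ (n+1) * |lplus (‖(toPoly d p.1).eval (itPt d p n)‖)
          - (d:ℝ) * lplus (‖itPt d p n‖)| := by
        rw [heq, abs_mul, abs_of_nonneg (by positivity)]
    _ ≤ ((d:ℝ)⁻¹) ^ (n+1) * Cbd d R := by
        exact mul_le_mul_of_nonneg_left hkey (by positivity)
    _ = (Cbd d R / d) * ((d:ℝ)⁻¹) ^ n := by rw [pow_succ]; ring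

lemma inv_d_lt_one (d : ℕ) (hd : 2 ≤ d) : (d:ℝ)⁻¹ < 1 := by
  rw [inv_lt_one_iff₀]
  right
  exact_mod_cast (by omega : 1 < d)

lemma tendsto_gseq (d : ℕ) (hd : 2 ≤ d) (p : (Fin (d-1) → ℂ) × ℂ) :
    Tendsto (gseq d p) atTop (𝓝 (GG d p)) := by
  set R := max 1 (sAbs d p.1) with hR
  have hcauchy : CauchySeq (gseq d p) :=
    cauchySeq_of_le_geometric ((d:ℝ)⁻¹) (Cbd d R / d) (inv_d_lt_one d hd)
      (fun n => step_est d hd p (le_max_left _ _) (le_max_right _ _) n)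
  obtain ⟨x, hx⟩ := cauchySeq_tendsto_of_complete hcauchy
  have hGG : GG d p = x := by
    rw [GG, escapeRate_eq_limUnder d hd]
    exact hx.limUnder_eq
  rwa [hGG]

lemma unif_est (d : ℕ) (hd : 2 ≤ d) {R : ℝ} (hR1 : 1 ≤ R) (p : (Fin (d-1) → ℂ) × ℂ)
    (hp : sAbs d p.1 ≤ R) (n : ℕ) :
    dist (GG d p) (gseq d p n) ≤
      (Cbd d R / d) / (1 - (d:ℝ)⁻¹) * ((d:ℝ)⁻¹) ^ n := by
  have h := dist_le_of_le_geometric_of_tendsto ((d:ℝ)⁻¹) (Cbd d R / d) (inv_d_lt_one d hd)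
    (fun n => step_est d hd p hR1 hp n) (tendsto_gseq d hd p) n
  rw [dist_comm] at h
  calc dist (GG d p) (gseq d p n) ≤ Cbd d R / ↑d * (↑d)⁻¹ ^ n / (1 - (↑d)⁻¹) := h
    _ = (Cbd d R / d) / (1 - (d:ℝ)⁻¹) * ((d:ℝ)⁻¹) ^ n := by ring

/-! ### continuity of the escape rate -/

lemma continuous_evalPt (d : ℕ) :
    Continuous fun p : (Fin (d-1) → ℂ) × ℂ => (toPoly d p.1).eval p.2 := by
  simp only [eval_toPoly]
  refine Continuous.add (continuous_snd.pow d) (continuous_finset_sum _ fun i _ => ?_)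
  exact ((continuous_apply i).comp continuous_fst).mul (continuous_snd.pow _)

lemma continuous_itPt (d : ℕ) (n : ℕ) : Continuous fun p => itPt d p n := by
  induction n with
  | zero => simpa [itPt] using continuous_snd
  | succ n ih =>
      have : (fun p => itPt d p (n+1)) =
          (fun p : (Fin (d-1) → ℂ) × ℂ => (toPoly d p.1).eval p.2) ∘
            (fun p => (p.1, itPt d p n)) := by
        funext p
        exact itPt_succ d p n
      rw [this]
      exact (continuous_evalPt d).comp (continuous_fst.prodMk ih)

lemma continuous_gseq (d : ℕ) (n : ℕ) : Continuous fun p => gseq d p n := by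
  unfold gseq
  exact continuous_const.mul
    (continuous_lplus.comp (continuous_norm.comp (continuous_itPt d n)))

lemma continuous_GG (d : ℕ) (hd : 2 ≤ d) : Continuous (GG d) := by
  rw [continuous_iff_continuousAt]
  intro p0
  set R := sAbs d p0.1 + 1 with hRdef
  have hR1 : (1:ℝ) ≤ R := by
    have := sAbs_nonneg d p0.1
    simp only [hRdef]; linarith
  set K := (Cbd d R / d) / (1 - (d:ℝ)⁻¹) with hK
  have hTU : TendstoUniformlyOn (fun n p => gseq d p n) (GG d) atTop
      {p : (Fin (d-1) → ℂ) × ℂ | sAbs d p.1 ≤ R} := by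
    rw [Metric.tendstoUniformlyOn_iff]
    intro ε hε
    have h0 : Tendsto (fun n : ℕ => K * ((d:ℝ)⁻¹) ^ n) atTop (𝓝 0) := by
      have := tendsto_pow_atTop_nhds_zero_of_lt_one
        (by positivity : (0:ℝ) ≤ (d:ℝ)⁻¹) (inv_d_lt_one d hd)
      simpa using this.const_mul K
    filter_upwards [h0.eventually_lt_const hε] with n hn p hp
    exact lt_of_le_of_lt (unif_est d hd hR1 p hp n) hn
  have hcont : ContinuousOn (GG d) {p : (Fin (d-1) → ℂ) × ℂ | sAbs d p.1 ≤ R} :=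
    hTU.continuousOn (Frequently.of_forall fun n => (continuous_gseq d n).continuousOn)
  refine hcont.continuousAt ?_
  have hopen : IsOpen {p : (Fin (d-1) → ℂ) × ℂ | sAbs d p.1 < R} :=
    isOpen_lt ((continuous_sAbs d).comp continuous_fst) continuous_const
  refine mem_nhds_iff.mpr ⟨_, ?_, hopen, ?_⟩
  · intro p hp
    simp only [mem_setOf_eq] at hp ⊢
    exact le_of_lt hp
  · simp only [mem_setOf_eq, hRdef]; linarith


/-! ### order statistics -/

noncomputable def msup {m : ℕ} (A : Finset (Fin m)) (w : Fin m → ℝ) : ℝ :=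
  if hA : A.Nonempty then A.sup' hA w else 0

noncomputable def kthSmall (m j : ℕ) (w : Fin m → ℝ) : ℝ :=
  if h : ((Finset.univ : Finset (Finset (Fin m))).filter fun A => A.card = j+1).Nonempty
  then ((Finset.univ : Finset (Finset (Fin m))).filter fun A => A.card = j+1).inf' h
    (fun A => msup A w)
  else 0

lemma tendsto_finset_sup' {ι α : Type*} {l : Filter α} {s : Finset ι} (hs : s.Nonempty)
    {F : α → ι → ℝ} {f : ι → ℝ} (h : ∀ i ∈ s, Tendsto (fun k => F k i) l (𝓝 (f i))) :
    Tendsto (fun k => s.sup' hs (F k)) l (𝓝 (s.sup' hs f)) := by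
  revert h
  refine Finset.Nonempty.cons_induction ?_ ?_ hs
  · intro a h
    simp only [Finset.sup'_singleton]
    exact h a (Finset.mem_singleton_self a)
  · intro a s ha hs ih h
    simp only [Finset.sup'_cons hs]
    exact (h a (Finset.mem_cons_self a s)).max (ih fun i hi => h i (Finset.mem_cons_of_mem hi))

lemma tendsto_finset_inf' {ι α : Type*} {l : Filter α} {s : Finset ι} (hs : s.Nonempty)
    {F : α → ι → ℝ} {f : ι → ℝ} (h : ∀ i ∈ s, Tendsto (fun k => F k i) l (𝓝 (f i))) :
    Tendsto (fun k => s.inf' hs (F k)) l (𝓝 (s.inf' hs f)) := by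
  revert h
  refine Finset.Nonempty.cons_induction ?_ ?_ hs
  · intro a h
    simp only [Finset.inf'_singleton]
    exact h a (Finset.mem_singleton_self a)
  · intro a s ha hs ih h
    simp only [Finset.inf'_cons hs]
    exact (h a (Finset.mem_cons_self a s)).min (ih fun i hi => h i (Finset.mem_cons_of_mem hi))

lemma tendsto_kthSmall {α : Type*} {l : Filter α} (m j : ℕ) {U : α → Fin m → ℝ}
    {u : Fin m → ℝ} (h : ∀ i, Tendsto (fun k => U k i) l (𝓝 (u i))) :
    Tendsto (fun k => kthSmall m j (U k)) l (𝓝 (kthSmall m j u)) := by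
  unfold kthSmall
  by_cases hne : ((Finset.univ : Finset (Finset (Fin m))).filter fun A => A.card = j+1).Nonempty
  · simp only [dif_pos hne]
    refine tendsto_finset_inf' hne fun A hA => ?_
    unfold msup
    by_cases hA2 : A.Nonempty
    · simp only [dif_pos hA2]
      exact tendsto_finset_sup' hA2 fun i _ => h i
    · simp only [dif_neg hA2]
      exact tendsto_const_nhds
  · simp only [dif_neg hne]
    exact tendsto_const_nhds

lemma msup_image_perm {m : ℕ} (A : Finset (Fin m)) (w : Fin m → ℝ) (σ : Equiv.Perm (Fin m)) :
    msup A (w ∘ σ) = msup (A.image σ) w := by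
  by_cases hA : A.Nonempty
  · rw [msup, msup, dif_pos hA, dif_pos (hA.image σ)]
    exact (Finset.sup'_image (hA.image σ) w).symm
  · rw [msup, msup, dif_neg hA, dif_neg (by simpa [Finset.image_nonempty] using hA)]

lemma kthSmall_comp_perm (m j : ℕ) (w : Fin m → ℝ) (σ : Equiv.Perm (Fin m)) :
    kthSmall m j (w ∘ σ) = kthSmall m j w := by
  classical
  set 𝒜 := ((Finset.univ : Finset (Finset (Fin m))).filter fun A => A.card = j+1) with h𝒜
  have key : 𝒜.image (fun A => A.image σ) = 𝒜 := by
    ext B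
    simp only [h𝒜, Finset.mem_image, Finset.mem_filter, Finset.mem_univ, true_and]
    constructor
    · rintro ⟨A, hA, rfl⟩
      rw [Finset.card_image_of_injective _ σ.injective]
      exact hA
    · intro hB
      refine ⟨B.image σ.symm, ?_, ?_⟩
      · rw [Finset.card_image_of_injective _ σ.symm.injective]; exact hB
      · rw [Finset.image_image]
        simp only [Equiv.self_comp_symm, Finset.image_id]
  unfold kthSmall
  by_cases hne : 𝒜.Nonempty
  · rw [dif_pos (by exact hne), dif_pos (by exact hne)]
    have h1 : ∀ A ∈ 𝒜, msup A (w ∘ σ) = ((fun A => msup A w) ∘ (fun A : Finset (Fin m) => A.image σ)) A :=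
      fun A _ => msup_image_perm A w σ
    rw [Finset.inf'_congr hne rfl h1]
    have h2 := Finset.inf'_image (s := 𝒜) (f := fun A : Finset (Fin m) => A.image σ)
      (g := fun A => msup A w) (by rw [key]; exact hne)
    rw [← h2]
    congr 1
  · rw [dif_neg (by exact hne), dif_neg (by exact hne)]

lemma kthSmall_monotone (m j : ℕ) (hj : j < m) (g : Fin m → ℝ) (hg : Monotone g) :
    kthSmall m j g = g ⟨j, hj⟩ := by
  classical
  have hne : ((Finset.univ : Finset (Finset (Fin m))).filter fun A => A.card = j+1).Nonempty := by
    obtain ⟨t, _, ht⟩ := Finset.exists_subset_card_eq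
      (show j+1 ≤ (Finset.univ : Finset (Fin m)).card by
        rw [Finset.card_univ, Fintype.card_fin]; omega)
    exact ⟨t, Finset.mem_filter.mpr ⟨Finset.mem_univ _, ht⟩⟩
  rw [kthSmall, dif_pos hne]
  have hmemIic : Finset.Iic (⟨j, hj⟩ : Fin m) ∈
      ((Finset.univ : Finset (Finset (Fin m))).filter fun A => A.card = j+1) := by
    refine Finset.mem_filter.mpr ⟨Finset.mem_univ _, ?_⟩
    rw [Fin.card_Iic]
  have hmsupIic : msup (Finset.Iic (⟨j, hj⟩ : Fin m)) g = g ⟨j, hj⟩ := by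
    have hni : (Finset.Iic (⟨j, hj⟩ : Fin m)).Nonempty := ⟨_, Finset.mem_Iic.mpr le_rfl⟩
    rw [msup, dif_pos hni]
    refine le_antisymm (Finset.sup'_le _ _ fun b hb => hg (Finset.mem_Iic.mp hb)) ?_
    exact Finset.le_sup' g (Finset.mem_Iic.mpr le_rfl)
  refine le_antisymm ?_ ?_
  · exact le_trans (Finset.inf'_le _ hmemIic) (le_of_eq hmsupIic)
  · refine Finset.le_inf' hne _ fun A hA => ?_
    have hcard : A.card = j+1 := (Finset.mem_filter.mp hA).2
    have hAne : A.Nonempty := Finset.card_pos.mp (by omega)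
    rw [msup, dif_pos hAne]
    obtain ⟨a, haA, hja⟩ : ∃ a ∈ A, (⟨j, hj⟩ : Fin m) ≤ a := by
      by_contra hcon
      push_neg at hcon
      have hsub : A ⊆ Finset.Iio (⟨j, hj⟩ : Fin m) := fun a ha =>
        Finset.mem_Iio.mpr (hcon a ha)
      have hle := Finset.card_le_card hsub
      rw [Fin.card_Iio] at hle
      have hv : ((⟨j, hj⟩ : Fin m) : ℕ) = j := rfl
      omega
    exact le_trans (hg hja) (Finset.le_sup' g haA)

lemma sort_ofFn_eq (m : ℕ) (w : Fin m → ℝ) :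
    Multiset.sort (↑(List.ofFn w) : Multiset ℝ) (· ≤ ·) =
      List.ofFn (w ∘ (Tuple.sort w)) := by
  have hmono : Monotone (w ∘ (Tuple.sort w)) := Tuple.monotone_sort w
  refine List.Perm.eq_of_pairwise' (Multiset.pairwise_sort _ _) hmono.sortedLE_ofFn.pairwise ?_
  refine Multiset.coe_eq_coe.mp ?_
  rw [Multiset.sort_eq]
  exact (Multiset.coe_eq_coe.mpr ((Tuple.sort w).ofFn_comp_perm w)).symm

lemma sorted_getD_eq (m : ℕ) (w : Fin m → ℝ) (i : ℕ) (hi : i < m) :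
    ((Multiset.sort (↑(List.ofFn w) : Multiset ℝ) (· ≤ ·)).reverse).getD i 0
      = kthSmall m (m - 1 - i) w := by
  rw [sort_ofFn_eq]
  set g := w ∘ (Tuple.sort w) with hg
  have hmono : Monotone g := Tuple.monotone_sort w
  have hlen : (List.ofFn g).length = m := List.length_ofFn
  have hrevlen : i < (List.ofFn g).reverse.length := by
    rw [List.length_reverse, hlen]; exact hi
  rw [List.getD_eq_getElem _ _ hrevlen, List.getElem_reverse, List.getElem_ofFn]
  rw [← kthSmall_comp_perm m (m-1-i) w (Tuple.sort w),
    kthSmall_monotone m (m-1-i) (by omega) g hmono]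
  congr 1
  apply Fin.ext
  simp [hlen]


/-! ### roots enumeration and continuity of `heights` -/

lemma enum_of_card {α : Type*} (s : Multiset α) {m : ℕ} (h : Multiset.card s = m) :
    ∃ v : Fin m → α, (↑(List.ofFn v) : Multiset α) = s := by
  have hlen : s.toList.length = m := by rw [Multiset.length_toList, h]
  refine ⟨fun i => s.toList.get (Fin.cast hlen.symm i), ?_⟩
  have heq : List.ofFn (fun i => s.toList.get (Fin.cast hlen.symm i)) = s.toList := by
    apply List.ext_getElem
    · rw [List.length_ofFn, hlen]
    · intro n h1 h2
      rw [List.getElem_ofFn]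
      simp [List.get_eq_getElem]
  rw [heq, Multiset.coe_toList]

lemma eval_prod_ofFn (m : ℕ) (v : Fin m → ℂ) (z : ℂ) :
    (Multiset.map (fun a => X - C a) (↑(List.ofFn v) : Multiset ℂ)).prod.eval z
      = ∏ j : Fin m, (z - v j) := by
  rw [eval_multiset_prod, Multiset.map_coe, Multiset.map_coe, Multiset.prod_coe,
    List.map_ofFn, List.map_ofFn, List.prod_ofFn]
  simp [Function.comp]

lemma eval_eq_prod_roots (d : ℕ) (hd : 2 ≤ d) (b : Fin (d-1) → ℂ) (v : Fin (d-1) → ℂ)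
    (hv : (↑(List.ofFn v) : Multiset ℂ) = (derivative (toPoly d b)).roots) (z : ℂ) :
    (derivative (toPoly d b)).eval z = (d:ℂ) * ∏ j : Fin (d-1), (z - v j) := by
  have hfac := C_leadingCoeff_mul_prod_multiset_X_sub_C
    (p := derivative (toPoly d b))
    (by rw [card_roots_derivative_toPoly d hd b, natDegree_derivative_toPoly d hd b])
  conv_lhs => rw [← hfac]
  rw [leadingCoeff_derivative_toPoly d hd b, eval_mul, eval_C, ← hv, eval_prod_ofFn]

lemma roots_eq_ofFn_of_eval (d : ℕ) (hd : 2 ≤ d) (b : Fin (d-1) → ℂ) (v : Fin (d-1) → ℂ)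
    (hev : ∀ z : ℂ, (derivative (toPoly d b)).eval z = (d:ℂ) * ∏ j : Fin (d-1), (z - v j)) :
    (derivative (toPoly d b)).roots = (↑(List.ofFn v) : Multiset ℂ) := by
  have hd0 : (d:ℂ) ≠ 0 := Nat.cast_ne_zero.mpr (by omega)
  have hpoly : derivative (toPoly d b) =
      C (d:ℂ) * (Multiset.map (fun a => X - C a) (↑(List.ofFn v) : Multiset ℂ)).prod := by
    apply Polynomial.funext
    intro z
    rw [hev z, eval_mul, eval_C, eval_prod_ofFn]
  rw [hpoly, roots_C_mul _ hd0, roots_multiset_prod_X_sub_C]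

lemma heights_eq_kthSmall (d : ℕ) (hd : 2 ≤ d) (b : Fin (d-1) → ℂ) (v : Fin (d-1) → ℂ)
    (hv : (↑(List.ofFn v) : Multiset ℂ) = (derivative (toPoly d b)).roots) (i : Fin (d-1)) :
    heights d b i = kthSmall (d-1) ((d-1) - 1 - (i:ℕ)) (fun j => GG d (b, v j)) := by
  unfold heights
  rw [← hv]
  have hmap : Multiset.map (escapeRate (toPoly d b)) (↑(List.ofFn v) : Multiset ℂ)
      = (↑(List.ofFn fun j => GG d (b, v j)) : Multiset ℝ) := by
    rw [Multiset.map_coe, List.map_ofFn]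
    rfl
  rw [hmap, sorted_getD_eq (d-1) _ (i:ℕ) i.isLt]

lemma continuous_heights (d : ℕ) (hd : 2 ≤ d) : Continuous (heights d) := by
  have hseq : SeqContinuous (heights d) := by
    intro bseq b hb
    refine tendsto_of_subseq_tendsto fun ns hns => ?_
    set β : ℕ → (Fin (d-1) → ℂ) := fun k => bseq (ns k) with hβ
    have hβlim : Tendsto β atTop (𝓝 b) := hb.comp hns
    have hex : ∀ k, ∃ v : Fin (d-1) → ℂ,
        (↑(List.ofFn v) : Multiset ℂ) = (derivative (toPoly d (β k))).roots :=
      fun k => enum_of_card _ (card_roots_derivative_toPoly d hd (β k))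
    choose v hv using hex
    have htend : Tendsto (fun k => max 1 (sAbs d (β k))) atTop (𝓝 (max 1 (sAbs d b))) :=
      tendsto_const_nhds.max (((continuous_sAbs d).tendsto b).comp hβlim)
    obtain ⟨B, hB'⟩ := htend.bddAbove_range
    have hB : ∀ k, max 1 (sAbs d (β k)) ≤ B := fun k => hB' (mem_range_self k)
    have hB1 : (1:ℝ) ≤ B := le_trans (le_max_left _ _) (hB 0)
    have hvmem : ∀ k i, v k i ∈ (derivative (toPoly d (β k))).roots := by
      intro k i
      rw [← hv k]
      exact Multiset.mem_coe.mpr (List.mem_ofFn.mpr ⟨i, rfl⟩)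
    have hvball : ∀ k, v k ∈ Metric.closedBall (0 : Fin (d-1) → ℂ) B := by
      intro k
      rw [mem_closedBall_zero_iff]
      refine (pi_norm_le_iff_of_nonneg (le_trans zero_le_one hB1)).mpr fun i => ?_
      exact le_trans (root_bound d hd (β k) (hvmem k i)) (hB k)
    obtain ⟨vlim, _, φ, hφmono, hvconv⟩ :=
      tendsto_subseq_of_bounded Metric.isBounded_closedBall hvball
    refine ⟨φ, ?_⟩
    have hvcomp : ∀ i, Tendsto (fun k => v (φ k) i) atTop (𝓝 (vlim i)) :=
      fun i => tendsto_pi_nhds.mp hvconv i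
    have hβφ : Tendsto (fun k => β (φ k)) atTop (𝓝 b) := hβlim.comp hφmono.tendsto_atTop
    have hβφc : ∀ i, Tendsto (fun k => β (φ k) i) atTop (𝓝 (b i)) :=
      fun i => tendsto_pi_nhds.mp hβφ i
    have hevlim : ∀ z : ℂ,
        (derivative (toPoly d b)).eval z = (d:ℂ) * ∏ j : Fin (d-1), (z - vlim j) := by
      intro z
      have h1 : Tendsto (fun k => (derivative (toPoly d (β (φ k)))).eval z) atTop
          (𝓝 ((derivative (toPoly d b)).eval z)) := by
        simp only [eval_derivative_toPoly]
        refine Tendsto.add tendsto_const_nhds (tendsto_finset_sum _ fun i _ => ?_)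
        exact ((hβφc i).mul_const _).mul_const _
      have h2 : Tendsto (fun k => (derivative (toPoly d (β (φ k)))).eval z) atTop
          (𝓝 ((d:ℂ) * ∏ j : Fin (d-1), (z - vlim j))) := by
        have heach : ∀ k, (derivative (toPoly d (β (φ k)))).eval z =
            (d:ℂ) * ∏ j : Fin (d-1), (z - v (φ k) j) :=
          fun k => eval_eq_prod_roots d hd _ _ (hv (φ k)) z
        simp only [heach]
        exact tendsto_const_nhds.mul
          (tendsto_finset_prod _ fun j _ => tendsto_const_nhds.sub (hvcomp j))
      exact tendsto_nhds_unique h1 h2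
    have hrootslim : (derivative (toPoly d b)).roots = ↑(List.ofFn vlim) :=
      roots_eq_ofFn_of_eval d hd b vlim hevlim
    show Tendsto (fun k => heights d (β (φ k))) atTop (𝓝 (heights d b))
    rw [tendsto_pi_nhds]
    intro i
    have hconv : ∀ j, Tendsto (fun k => GG d (β (φ k), v (φ k) j)) atTop
        (𝓝 (GG d (b, vlim j))) := by
      intro j
      exact ((continuous_GG d hd).tendsto _).comp ((hβφ).prodMk_nhds (hvcomp j))
    have hL : ∀ k, heights d (β (φ k)) i =
        kthSmall (d-1) ((d-1) - 1 - (i:ℕ)) (fun j => GG d (β (φ k), v (φ k) j)) :=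
      fun k => heights_eq_kthSmall d hd _ _ (hv (φ k)) i
    have hR : heights d b i =
        kthSmall (d-1) ((d-1) - 1 - (i:ℕ)) (fun j => GG d (b, vlim j)) :=
      heights_eq_kthSmall d hd b vlim hrootslim.symm i
    simp only [hL, hR]
    exact tendsto_kthSmall _ _ hconv
  exact hseq.continuous


/-! ### invariance of `heights` under `polyRel` -/

lemma abs_zeta_one {d : ℕ} (hd : 2 ≤ d) {ζ : ℂ} (hζ : ζ ^ (d-1) = 1) : ‖ζ‖ = 1 := by
  have h1 : ‖ζ‖ ^ (d-1) = 1 := by rw [← norm_pow, hζ, norm_one]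
  have h0 : 0 ≤ ‖ζ‖ := norm_nonneg _
  rcases lt_trichotomy (‖ζ‖) 1 with h | h | h
  · have := pow_lt_one₀ h0 h (by omega : d-1 ≠ 0)
    rw [h1] at this
    exact absurd this (lt_irrefl 1)
  · exact h
  · have := one_lt_pow₀ h (by omega : d-1 ≠ 0)
    rw [h1] at this
    exact absurd this (lt_irrefl 1)

lemma zeta_ne_zero {d : ℕ} (hd : 2 ≤ d) {ζ : ℂ} (hζ : ζ ^ (d-1) = 1) : ζ ≠ 0 := by
  intro h
  rw [h, zero_pow (by omega : d-1 ≠ 0)] at hζ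
  exact zero_ne_one hζ

lemma iter_conj (d : ℕ) {b b' : Fin (d-1) → ℂ} {ζ : ℂ} (hζ0 : ζ ≠ 0)
    (hpoly : toPoly d b' = C ζ⁻¹ * (toPoly d b).comp (C ζ * X)) (n : ℕ) (z : ℂ) :
    (fun w => (toPoly d b').eval w)^[n] z
      = ζ⁻¹ * ((fun w => (toPoly d b).eval w)^[n] (ζ * z)) := by
  have hev : ∀ w, (toPoly d b').eval w = ζ⁻¹ * (toPoly d b).eval (ζ * w) := by
    intro w
    rw [hpoly]
    simp [eval_comp]
  induction n generalizing z with
  | zero =>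
      simp only [Function.iterate_zero, id_eq]
      field_simp
  | succ n ih =>
      rw [Function.iterate_succ_apply', Function.iterate_succ_apply', ih z, hev]
      rw [← mul_assoc, mul_inv_cancel₀ hζ0, one_mul]

lemma escapeRate_conj (d : ℕ) (hd : 2 ≤ d) {b b' : Fin (d-1) → ℂ} {ζ : ℂ}
    (hζ : ζ ^ (d-1) = 1)
    (hpoly : toPoly d b' = C ζ⁻¹ * (toPoly d b).comp (C ζ * X)) (z : ℂ) :
    escapeRate (toPoly d b') z = escapeRate (toPoly d b) (ζ * z) := by
  have hζ0 := zeta_ne_zero hd hζ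
  unfold escapeRate
  congr 1
  funext n
  rw [natDegree_toPoly d hd, natDegree_toPoly d hd, iter_conj d hζ0 hpoly n z,
    norm_mul, norm_inv, abs_zeta_one hd hζ, inv_one, one_mul]

lemma deriv_conj (d : ℕ) {b b' : Fin (d-1) → ℂ} {ζ : ℂ} (hζ0 : ζ ≠ 0)
    (hpoly : toPoly d b' = C ζ⁻¹ * (toPoly d b).comp (C ζ * X)) :
    derivative (toPoly d b') = (derivative (toPoly d b)).comp (C ζ * X) := by
  rw [hpoly, derivative_C_mul, derivative_comp]
  have h1 : derivative (C ζ * X) = C ζ := by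
    rw [derivative_C_mul, derivative_X, mul_one]
  rw [h1, ← mul_assoc, ← C_mul, inv_mul_cancel₀ hζ0, C_1, one_mul]

lemma roots_comp_C_mul_X (p : ℂ[X]) (hcard : Multiset.card p.roots = p.natDegree)
    {ζ : ℂ} (hζ0 : ζ ≠ 0) (hp0 : p ≠ 0) :
    (p.comp (C ζ * X)).roots = p.roots.map (fun r => ζ⁻¹ * r) := by
  conv_lhs => rw [← C_leadingCoeff_mul_prod_multiset_X_sub_C hcard]
  rw [mul_comp, C_comp, multiset_prod_comp, Multiset.map_map]
  have hxc : ∀ r : ℂ, ((fun q : ℂ[X] => q.comp (C ζ * X)) ∘ (fun a : ℂ => X - C a)) r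
      = C ζ * (X - C (ζ⁻¹ * r)) := by
    intro r
    have hz : ζ * (ζ⁻¹ * r) = r := by field_simp
    show (X - C r).comp (C ζ * X) = _
    rw [sub_comp, X_comp, C_comp, mul_sub, ← C_mul, hz]
  rw [Multiset.map_congr rfl fun r _ => hxc r]
  rw [Multiset.prod_map_mul, Multiset.map_const', Multiset.prod_replicate, ← C_pow,
    ← mul_assoc, ← C_mul]
  have hne : p.leadingCoeff * ζ ^ (Multiset.card p.roots) ≠ 0 :=
    mul_ne_zero (leadingCoeff_ne_zero.mpr hp0) (pow_ne_zero _ hζ0)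
  rw [roots_C_mul _ hne]
  have hmm : Multiset.map (fun r : ℂ => X - C (ζ⁻¹ * r)) p.roots
      = Multiset.map (fun a : ℂ => X - C a) (p.roots.map (fun r => ζ⁻¹ * r)) := by
    rw [Multiset.map_map]
    rfl
  rw [hmm, roots_multiset_prod_X_sub_C]

lemma heights_invariant (d : ℕ) (hd : 2 ≤ d) {b b' : Fin (d-1) → ℂ}
    (h : polyRel d b b') : heights d b' = heights d b := by
  obtain ⟨ζ, hζ, hpoly⟩ := h
  have hζ0 : ζ ≠ 0 := zeta_ne_zero hd hζ
  have hcard : Multiset.card (derivative (toPoly d b)).roots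
      = (derivative (toPoly d b)).natDegree := by
    rw [card_roots_derivative_toPoly d hd b, natDegree_derivative_toPoly d hd b]
  have hroots : (derivative (toPoly d b')).roots
      = (derivative (toPoly d b)).roots.map (fun r => ζ⁻¹ * r) := by
    rw [deriv_conj d hζ0 hpoly]
    exact roots_comp_C_mul_X _ hcard hζ0 (derivative_toPoly_ne_zero d hd b)
  funext i
  unfold heights
  rw [hroots, Multiset.map_map]
  have hesc : Multiset.map ((escapeRate (toPoly d b')) ∘ (fun r : ℂ => ζ⁻¹ * r))
      (derivative (toPoly d b)).roots
      = Multiset.map (escapeRate (toPoly d b)) (derivative (toPoly d b)).roots := by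
    refine Multiset.map_congr rfl fun r _ => ?_
    show escapeRate (toPoly d b') (ζ⁻¹ * r) = escapeRate (toPoly d b) r
    rw [escapeRate_conj d hd hζ hpoly]
    congr 1
    field_simp
  rw [hesc]


/-! ### descent to the moduli space -/

lemma Gq_mk (d : ℕ) (hd : 2 ≤ d) (b : Fin (d-1) → ℂ) :
    Gq d (Quot.mk (polyRel d) b) = heights d b := by
  show heights d (Quot.mk (polyRel d) b).out = heights d b
  have h2 : Relation.EqvGen (polyRel d) (Quot.mk (polyRel d) b).out b :=
    Quot.eq.mp (Quot.out_eq _)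
  have key : ∀ x y : Fin (d-1) → ℂ, Relation.EqvGen (polyRel d) x y →
      heights d x = heights d y := by
    intro x y hxy
    induction hxy with
    | rel x y hxy => exact (heights_invariant d hd hxy).symm
    | refl x => rfl
    | symm x y _ ih => exact ih.symm
    | trans x y z _ _ ih1 ih2 => exact ih1.trans ih2
  exact key _ _ h2

lemma continuous_Gq (d : ℕ) (hd : 2 ≤ d) : Continuous (Gq d) := by
  refine (isQuotientMap_quot_mk (r := polyRel d)).continuous_iff.mpr ?_
  have he : Gq d ∘ Quot.mk (polyRel d) = heights d := funext fun b => Gq_mk d hd b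
  refine Eq.mpr (congrArg Continuous he) ?_
  exact continuous_heights d hd

lemma tRel_mem_fiber {d : ℕ} {x y : Moduli d} (hxy : tRel d x y) : Gq d y = Gq d x := by
  have h0 : y ∈ Gq d ⁻¹' {Gq d x} := connectedComponentIn_subset _ _ hxy
  simpa using h0

lemma tRel_equivalence (d : ℕ) : Equivalence (tRel d) := by
  constructor
  · intro x
    exact mem_connectedComponentIn (mem_preimage.mpr (mem_singleton _))
  · intro x y hxy
    have hGq : Gq d y = Gq d x := tRel_mem_fiber hxy
    have heq := connectedComponentIn_eq hxy
    show x ∈ connectedComponentIn (Gq d ⁻¹' {Gq d y}) y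
    rw [hGq, ← heq]
    exact mem_connectedComponentIn (mem_preimage.mpr (mem_singleton _))
  · intro x y z hxy hyz
    have hGq : Gq d y = Gq d x := tRel_mem_fiber hxy
    have heq := connectedComponentIn_eq hxy
    show z ∈ connectedComponentIn (Gq d ⁻¹' {Gq d x}) x
    rw [heq]
    have hyz' : z ∈ connectedComponentIn (Gq d ⁻¹' {Gq d y}) y := hyz
    rw [hGq] at hyz'
    exact hyz' 

lemma tRel_fiber (d : ℕ) (x : Moduli d) :
    (Quot.mk (tRel d)) ⁻¹' {Quot.mk (tRel d) x}
      = connectedComponentIn (Gq d ⁻¹' {Gq d x}) x := by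
  ext y
  simp only [mem_preimage, mem_singleton_iff]
  rw [Quot.eq, (tRel_equivalence d).eqvGen_iff]
  constructor
  · intro h
    exact (tRel_equivalence d).symm h
  · intro h
    exact (tRel_equivalence d).symm h

lemma fiber_totallyDisconnected (d : ℕ) (hd : 2 ≤ d)
    (Gb : Tstar d → (Fin (d-1) → ℝ))
    (hGb : ∀ x : Moduli d, Gb (Quot.mk (tRel d) x) = Gq d x) (hGbc : Continuous Gb)
    (h : Fin (d-1) → ℝ) : IsTotallyDisconnected (Gb ⁻¹' {h}) := by
  intro t hts htc
  have hfibclosed : IsClosed (Gb ⁻¹' {h}) := isClosed_singleton.preimage hGbc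
  have hclos_sub : closure t ⊆ Gb ⁻¹' {h} := closure_minimal hts hfibclosed
  have hclos_pre : IsPreconnected (closure t) := htc.closure
  suffices hsub : (closure t).Subsingleton by
    exact hsub.anti subset_closure
  set p : Moduli d → Tstar d := Quot.mk (tRel d) with hp
  have hpq : IsQuotientMap p := isQuotientMap_quot_mk
  set T := closure t with hT
  have hTclosed : IsClosed T := isClosed_closure
  set S : Set (Moduli d) := p ⁻¹' T with hS
  have hSclosed : IsClosed S := hTclosed.preimage hpq.continuous
  have hfib_pre : ∀ x : Moduli d, IsPreconnected (p ⁻¹' {p x}) := by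
    intro x
    rw [hp]
    exact Eq.mpr (congrArg IsPreconnected (tRel_fiber d x)) isPreconnected_connectedComponentIn
  have hfib_sub : ∀ z : Moduli d, z ∈ S → Gq d z = h := by
    intro z hz
    have h1 : Gb (p z) = h := hclos_sub hz
    rw [hp, hGb] at h1
    exact h1
  have hSpre : IsPreconnected S := by
    intro u v hu hv hSuv hSu hSv
    by_contra hempty
    rw [not_nonempty_iff_eq_empty] at hempty
    have hfibS : ∀ x : Moduli d, p x ∈ T → p ⁻¹' {p x} ⊆ S := by
      intro x hxT z hz
      rw [mem_preimage, mem_singleton_iff] at hz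
      show p z ∈ T
      rw [hz]
      exact hxT
    have hfibuv : ∀ x : Moduli d, p x ∈ T → (p ⁻¹' {p x} ⊆ u ∨ p ⁻¹' {p x} ⊆ v) := by
      intro x hxT
      have hcover : p ⁻¹' {p x} ⊆ u ∪ v := subset_trans (hfibS x hxT) hSuv
      by_cases hcu : (p ⁻¹' {p x} ∩ u).Nonempty
      · by_cases hcv : (p ⁻¹' {p x} ∩ v).Nonempty
        · obtain ⟨z, hz⟩ := hfib_pre x u v hu hv hcover hcu hcv
          have : z ∈ S ∩ (u ∩ v) := ⟨hfibS x hxT hz.1, hz.2⟩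
          rw [hempty] at this
          exact absurd this (notMem_empty z)
        · left
          intro z hz
          rcases hcover hz with hh | hh
          · exact hh
          · exact absurd ⟨z, hz, hh⟩ hcv
      · right
        intro z hz
        rcases hcover hz with hh | hh
        · exact absurd ⟨z, hz, hh⟩ hcu
        · exact hh
    set TU : Set (Tstar d) := {y | y ∈ T ∧ p ⁻¹' {y} ⊆ u} with hTUdef
    set TV : Set (Tstar d) := {y | y ∈ T ∧ p ⁻¹' {y} ⊆ v} with hTVdef
    have hfibne : ∀ y : Tstar d, (p ⁻¹' {y}).Nonempty := by
      intro y
      obtain ⟨x, hx⟩ := Quot.exists_rep y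
      exact ⟨x, by rw [mem_preimage, hp, hx]; exact mem_singleton _⟩
    have hTUV_disj : ∀ y, y ∈ TU → y ∈ TV → False := by
      intro y hyU hyV
      obtain ⟨z, hz⟩ := hfibne y
      have hzy : p z = y := by
        rw [mem_preimage, mem_singleton_iff] at hz
        exact hz
      have hzS : z ∈ S := by
        show p z ∈ T
        rw [hzy]
        exact hyU.1
      have : z ∈ S ∩ (u ∩ v) := ⟨hzS, hyU.2 (by rw [mem_preimage, hzy]; exact mem_singleton _),
        hyV.2 (by rw [mem_preimage, hzy]; exact mem_singleton _)⟩
      rw [hempty] at this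
      exact notMem_empty z this
    have hselffib : ∀ z : Moduli d, z ∈ p ⁻¹' {p z} :=
      fun z => mem_preimage.mpr (mem_singleton _)
    have hpreTU : p ⁻¹' TU = S ∩ u := by
      ext z
      simp only [mem_preimage, hTUdef, mem_setOf_eq, mem_inter_iff]
      constructor
      · rintro ⟨hzT, hzu⟩
        exact ⟨hzT, hzu (hselffib z)⟩
      · rintro ⟨hzS, hzu⟩
        refine ⟨hzS, ?_⟩
        rcases hfibuv z hzS with hcu | hcv
        · exact hcu
        · exfalso
          have : z ∈ S ∩ (u ∩ v) := ⟨hzS, hzu, hcv (hselffib z)⟩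
          rw [hempty] at this
          exact notMem_empty z this
    have hpreTV : p ⁻¹' TV = S ∩ v := by
      ext z
      simp only [mem_preimage, hTVdef, mem_setOf_eq, mem_inter_iff]
      constructor
      · rintro ⟨hzT, hzv⟩
        exact ⟨hzT, hzv (hselffib z)⟩
      · rintro ⟨hzS, hzv⟩
        refine ⟨hzS, ?_⟩
        rcases hfibuv z hzS with hcu | hcv
        · exfalso
          have : z ∈ S ∩ (u ∩ v) := ⟨hzS, hcu (hselffib z), hzv⟩
          rw [hempty] at this
          exact notMem_empty z this
        · exact hcv
    have hclosedSu : IsClosed (S ∩ u) := by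
      have he : S ∩ u = S ∩ vᶜ := by
        ext z
        simp only [mem_inter_iff, mem_compl_iff]
        constructor
        · rintro ⟨hzS, hzu⟩
          refine ⟨hzS, fun hzv => ?_⟩
          have : z ∈ S ∩ (u ∩ v) := ⟨hzS, hzu, hzv⟩
          rw [hempty] at this
          exact notMem_empty z this
        · rintro ⟨hzS, hznv⟩
          refine ⟨hzS, ?_⟩
          rcases hSuv hzS with hh | hh
          · exact hh
          · exact absurd hh hznv
      rw [he]
      exact hSclosed.inter (isClosed_compl_iff.mpr hv)
    have hclosedSv : IsClosed (S ∩ v) := by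
      have he : S ∩ v = S ∩ uᶜ := by
        ext z
        simp only [mem_inter_iff, mem_compl_iff]
        constructor
        · rintro ⟨hzS, hzv⟩
          refine ⟨hzS, fun hzu => ?_⟩
          have : z ∈ S ∩ (u ∩ v) := ⟨hzS, hzu, hzv⟩
          rw [hempty] at this
          exact notMem_empty z this
        · rintro ⟨hzS, hznu⟩
          refine ⟨hzS, ?_⟩
          rcases hSuv hzS with hh | hh
          · exact absurd hh hznu
          · exact hh
      rw [he]
      exact hSclosed.inter (isClosed_compl_iff.mpr hu)
    have hTUclosed : IsClosed TU := hpq.isClosed_preimage.mp (by rw [hpreTU]; exact hclosedSu)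
    have hTVclosed : IsClosed TV := hpq.isClosed_preimage.mp (by rw [hpreTV]; exact hclosedSv)
    have hTcov : T ⊆ TVᶜ ∪ TUᶜ := by
      intro y hy
      by_cases hyU : y ∈ TU
      · left
        intro hyV
        exact hTUV_disj y hyU hyV
      · right
        exact hyU
    have hTU_ne : (T ∩ TVᶜ).Nonempty := by
      obtain ⟨z, hzS, hzu⟩ := hSu
      have hyTU : p z ∈ TU := by
        rw [← mem_preimage, hpreTU]
        exact ⟨hzS, hzu⟩
      exact ⟨p z, hzS, fun hyV => hTUV_disj _ hyTU hyV⟩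
    have hTV_ne : (T ∩ TUᶜ).Nonempty := by
      obtain ⟨z, hzS, hzv⟩ := hSv
      have hyTV : p z ∈ TV := by
        rw [← mem_preimage, hpreTV]
        exact ⟨hzS, hzv⟩
      exact ⟨p z, hzS, fun hyU => hTUV_disj _ hyU hyTV⟩
    obtain ⟨y, hyT, hy2⟩ := hclos_pre TVᶜ TUᶜ hTVclosed.isOpen_compl hTUclosed.isOpen_compl
      hTcov hTU_ne hTV_ne
    obtain ⟨x, hx⟩ := Quot.exists_rep y
    have hxT : p x ∈ T := by rw [hp, hx]; exact hyT
    rcases hfibuv x hxT with hcu | hcv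
    · refine hy2.2 ?_
      rw [← hx]
      exact ⟨hxT, hcu⟩
    · refine hy2.1 ?_
      rw [← hx]
      exact ⟨hxT, hcv⟩
  intro y1 hy1 y2 hy2
  obtain ⟨x1, hx1⟩ := Quot.exists_rep y1
  obtain ⟨x2, hx2⟩ := Quot.exists_rep y2
  have hx1S : x1 ∈ S := by
    show p x1 ∈ T
    rw [hp, hx1]
    exact hy1
  have hx2S : x2 ∈ S := by
    show p x2 ∈ T
    rw [hp, hx2]
    exact hy2
  have hSsubF : S ⊆ Gq d ⁻¹' {Gq d x1} := by
    intro z hz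
    have hz1 : Gq d z = h := hfib_sub z hz
    have hx1h : Gq d x1 = h := hfib_sub x1 hx1S
    have heq2 : Gq d z = Gq d x1 := by rw [hz1, hx1h]
    exact mem_preimage.mpr (mem_singleton_iff.mpr heq2)
  have hcc := hSpre.subset_connectedComponentIn hx1S hSsubF
  have hrel : tRel d x1 x2 := hcc hx2S
  rw [← hx1, ← hx2]
  exact Quot.sound hrel

end EHTaux

/-- The critical heights map `𝒢 : 𝕄P_d → ℋ_d` descends to a continuous
map `𝒢̄ : 𝒯_d^* → ℋ_d` on the quotient `𝒯_d^*`, and every fiber of `𝒢̄` is totally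
disconnected. -/
theorem heights_descend_to_Tstar_with_totally_disconnected_fibers (d : ℕ) (hd : 2 ≤ d) :
    ∃ Gbar : Tstar d → (Fin (d - 1) → ℝ),
      Continuous Gbar ∧
      (∀ q : Moduli d, Gbar (Quot.mk (tRel d) q) = Gq d q) ∧
      ∀ h : Fin (d - 1) → ℝ, IsTotallyDisconnected (Gbar ⁻¹' {h}) := by
  have hsound : ∀ x y : Moduli d, tRel d x y → Gq d x = Gq d y := by
    intro x y hxy
    exact (tRel_mem_fiber hxy).symm
  refine ⟨Quot.lift (Gq d) hsound, ?_, fun q => rfl, ?_⟩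
  · refine (isQuotientMap_quot_mk (r := tRel d)).continuous_iff.mpr ?_
    have he : Quot.lift (Gq d) hsound ∘ Quot.mk (tRel d) = Gq d := rfl
    rw [he]
    exact continuous_Gq d hd
  · intro h
    refine fiber_totallyDisconnected d hd _ (fun x => rfl) ?_ h
    refine (isQuotientMap_quot_mk (r := tRel d)).continuous_iff.mpr ?_
    have he : Quot.lift (Gq d) hsound ∘ Quot.mk (tRel d) = Gq d := rfl
    rw [he]
    exact continuous_Gq d hd
end

section
/- Let d ≥ 2, 1 ≤ N ≤ d−1, and let P_d = {h ∈ ℝ^{d−1} : 1 = h₁ ≥ h₂ ≥ ⋯ ≥ h_{d−1} > 0}. Every connected component of the stratum P_d^N (with the subspace topology from ℝ^{d−1}) is homeomorphic to the open standard (N−1)-simplex σ_N = {x ∈ ℝ^N : x_i > 0 for all i and x₁ + ⋯ + x_N = 1}. -/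
/-- Positive real numbers `x` and `y` are *dependent in degree `d`* if `x = dⁿ · y`
for some `n ∈ ℤ`. -/
def DegDep (d : ℕ) (x y : ℝ) : Prop := ∃ n : ℤ, x = (d : ℝ) ^ n * y

/-- The projectivized shift-locus height space
`P_d = {h ∈ ℝ^{d−1} : 1 = h₁ ≥ h₂ ≥ ⋯ ≥ h_{d−1} > 0}`. -/
def Pd (d : ℕ) (hd : 2 ≤ d) : Set (Fin (d - 1) → ℝ) :=
  {h | h ⟨0, by omega⟩ = 1 ∧ (∀ i j : Fin (d - 1), i ≤ j → h j ≤ h i) ∧ ∀ i, 0 < h i}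

/-- The stratum `P_d^N ⊆ P_d` of height vectors for which the equivalence relation
`i ∼ j ↔ hᵢ` and `hⱼ` are dependent in degree `d` has exactly `N` equivalence classes. -/
def stratum (d : ℕ) (hd : 2 ≤ d) (N : ℕ) : Set (Fin (d - 1) → ℝ) :=
  {h ∈ Pd d hd |
    {s : Set (Fin (d - 1)) | ∃ i : Fin (d - 1), s = {j | DegDep d (h i) (h j)}}.ncard = N}

namespace StratumProof

open Real Finset

/-! ### Basic facts about base-`d` logarithms and `DegDep`. -/

section Base
variable {d : ℕ}

lemma one_lt_dR (hd : 2 ≤ d) : (1:ℝ) < d := by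
  have : (2:ℝ) ≤ d := by exact_mod_cast hd
  linarith

lemma dR_pos (hd : 2 ≤ d) : (0:ℝ) < d := lt_trans one_pos (one_lt_dR hd)

lemma logd_pos (hd : 2 ≤ d) : 0 < Real.log d := Real.log_pos (one_lt_dR hd)

/-- Exponential with base `d`. -/
noncomputable def Ee (d : ℕ) (t : ℝ) : ℝ := Real.exp (t * Real.log d)

lemma Ee_pos (t : ℝ) : 0 < Ee d t := Real.exp_pos _

lemma logb_Ee (hd : 2 ≤ d) (t : ℝ) : Real.logb d (Ee d t) = t := by
  unfold Ee Real.logb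
  rw [Real.log_exp]
  field_simp [(logd_pos hd).ne']

lemma Ee_logb (hd : 2 ≤ d) {x : ℝ} (hx : 0 < x) : Ee d (Real.logb d x) = x := by
  unfold Ee Real.logb
  rw [div_mul_cancel₀ _ (logd_pos hd).ne', Real.exp_log hx]

lemma Ee_strictMono (hd : 2 ≤ d) : StrictMono (Ee d) := fun a b hab =>
  Real.exp_lt_exp.mpr (by nlinarith [logd_pos hd])

lemma Ee_continuous : Continuous (Ee d) :=
  Real.continuous_exp.comp (continuous_id.mul continuous_const)

lemma Ee_int (hd : 2 ≤ d) (n : ℤ) : Ee d n = (d:ℝ) ^ n := by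
  unfold Ee
  rw [mul_comm, ← Real.rpow_def_of_pos (dR_pos hd), Real.rpow_intCast]

lemma degDep_iff_fract (hd : 2 ≤ d) {x y : ℝ} (hx : 0 < x) (hy : 0 < y) :
    DegDep d x y ↔ Int.fract (Real.logb d x) = Int.fract (Real.logb d y) := by
  rw [Int.fract_eq_fract]
  constructor
  · rintro ⟨n, rfl⟩
    refine ⟨n, ?_⟩
    have hdn : (0:ℝ) < (d:ℝ) ^ n := zpow_pos (dR_pos hd) n
    rw [Real.logb_mul hdn.ne' hy.ne', ← Ee_int hd, logb_Ee hd]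
    ring
  · rintro ⟨n, hn⟩
    refine ⟨n, ?_⟩
    have hxy : Real.logb d x = n + Real.logb d y := by linarith
    calc x = Ee d (Real.logb d x) := (Ee_logb hd hx).symm
    _ = Ee d n * Ee d (Real.logb d y) := by
        rw [hxy]; unfold Ee; rw [← Real.exp_add]; ring_nf
    _ = (d:ℝ)^n * y := by rw [Ee_int hd, Ee_logb hd hy]

end Base

/-! ### Counting dependence classes via fractional parts of logs. -/

section Count
variable {d : ℕ} {m : ℕ}

/-- fractional part of the base-`d` log of a coordinate. -/
noncomputable def θ (d : ℕ) (h : Fin m → ℝ) (i : Fin m) : ℝ :=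
  Int.fract (Real.logb d (h i))

/-- integer part of the base-`d` log of a coordinate. -/
noncomputable def κ (d : ℕ) (h : Fin m → ℝ) (i : Fin m) : ℤ :=
  ⌊Real.logb d (h i)⌋

lemma theta_nonneg (d : ℕ) (h : Fin m → ℝ) (i : Fin m) : 0 ≤ θ d h i :=
  Int.fract_nonneg _

lemma theta_lt_one (d : ℕ) (h : Fin m → ℝ) (i : Fin m) : θ d h i < 1 :=
  Int.fract_lt_one _

lemma kappa_add_theta (d : ℕ) (h : Fin m → ℝ) (i : Fin m) :
    (κ d h i : ℝ) + θ d h i = Real.logb d (h i) := by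
  unfold κ θ Int.fract; ring

/-- The number of `DegDep`-classes equals the number of distinct values of `θ`. -/
lemma ncard_classes (hd : 2 ≤ d) {h : Fin m → ℝ} (hpos : ∀ i, 0 < h i) :
    {s : Set (Fin m) | ∃ i : Fin m, s = {j | DegDep d (h i) (h j)}}.ncard
      = (Finset.image (θ d h) Finset.univ).card := by
  classical
  have hcl : ∀ i : Fin m, {j | DegDep d (h i) (h j)} = {j | θ d h j = θ d h i} := by
    intro i
    ext j
    simp only [Set.mem_setOf_eq]
    rw [degDep_iff_fract hd (hpos i) (hpos j)]
    exact eq_comm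
  have hset : {s : Set (Fin m) | ∃ i : Fin m, s = {j | DegDep d (h i) (h j)}}
      = ↑(Finset.image ((fun t => {j | θ d h j = t}) ∘ θ d h) Finset.univ) := by
    ext s
    simp only [Set.mem_setOf_eq, Finset.coe_image, Set.mem_image, Finset.mem_coe,
      Finset.mem_univ, Function.comp, Finset.coe_univ, Set.mem_setOf_eq]
    constructor
    · rintro ⟨i, rfl⟩; exact ⟨i, by simp, (hcl i).symm⟩
    · rintro ⟨i, -, rfl⟩; exact ⟨i, (hcl i).symm⟩
  rw [hset, Set.ncard_coe_finset, ← Finset.image_image, Finset.card_image_of_injOn]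
  intro a ha b hb hab
  simp only [Finset.coe_image, Set.mem_image] at ha hb
  obtain ⟨i, -, rfl⟩ := ha
  obtain ⟨j, -, rfl⟩ := hb
  simp only at hab
  have h1 : i ∈ {j_1 | θ d h j_1 = θ d h i} := rfl
  rw [hab] at h1
  exact h1

end Count


/-! ### The main construction: parametrizing a component of the stratum. -/

section Main

/-- The first index. -/
def i0 (d : ℕ) (hd : 2 ≤ d) : Fin (d - 1) := ⟨0, by omega⟩

lemma stratum_pos {d N : ℕ} {hd : 2 ≤ d} {h : Fin (d - 1) → ℝ}
    (hh : h ∈ stratum d hd N) : ∀ i, 0 < h i := hh.1.2.2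

lemma stratum_card {d N : ℕ} {hd : 2 ≤ d} {h : Fin (d - 1) → ℝ}
    (hh : h ∈ stratum d hd N) :
    (Finset.image (θ d h) Finset.univ).card = N := by
  have := hh.2
  rwa [ncard_classes hd (stratum_pos hh)] at this

lemma theta_i0 {d : ℕ} (hd : 2 ≤ d) {h : Fin (d - 1) → ℝ} (hh : h ∈ Pd d hd) :
    θ d h (i0 d hd) = 0 := by
  have h1 : h (i0 d hd) = 1 := hh.1
  simp [θ, h1]

/-- The finite set of nonzero values of `θ`. -/
noncomputable def Tvals (d : ℕ) (h : Fin (d - 1) → ℝ) : Finset ℝ :=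
  (Finset.image (θ d h) Finset.univ).erase 0

lemma card_Tvals {d N : ℕ} {hd : 2 ≤ d} {h : Fin (d - 1) → ℝ}
    (hh : h ∈ stratum d hd N) : (Tvals d h).card = N - 1 := by
  rw [Tvals, Finset.card_erase_of_mem, stratum_card hh]
  rw [Finset.mem_image]
  exact ⟨i0 d hd, Finset.mem_univ _, theta_i0 hd hh.1⟩

lemma mem_Tvals {d : ℕ} {h : Fin (d - 1) → ℝ} {i : Fin (d - 1)} (hθ : θ d h i ≠ 0) :
    θ d h i ∈ Tvals d h :=
  Finset.mem_erase.mpr ⟨hθ, Finset.mem_image.mpr ⟨i, Finset.mem_univ _, rfl⟩⟩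

lemma Tvals_pos {d : ℕ} {h : Fin (d - 1) → ℝ} {t : ℝ} (ht : t ∈ Tvals d h) :
    0 < t ∧ t < 1 := by
  rw [Tvals, Finset.mem_erase, Finset.mem_image] at ht
  obtain ⟨hne, i, -, rfl⟩ := ht
  exact ⟨lt_of_le_of_ne (theta_nonneg d h i) (Ne.symm hne), theta_lt_one d h i⟩

/-- The increasing enumeration of the nonzero values of `θ`. -/
noncomputable def eIso {d N : ℕ} {hd : 2 ≤ d} {h : Fin (d - 1) → ℝ}
    (hh : h ∈ stratum d hd N) : Fin (N - 1) ≃o ↥(Tvals d h) :=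
  (Tvals d h).orderIsoOfFin (card_Tvals hh)

/-- Extension of a parameter vector `u` over all indices, through classes. -/
noncomputable def uhat {d N : ℕ} {hd : 2 ≤ d} {h : Fin (d - 1) → ℝ}
    (hh : h ∈ stratum d hd N) (u : Fin (N - 1) → ℝ) (i : Fin (d - 1)) : ℝ :=
  if hθ : θ d h i = 0 then 0
  else u ((eIso hh).symm ⟨θ d h i, mem_Tvals hθ⟩)

/-- The parametrization of the component of `h`. -/
noncomputable def Φ {d N : ℕ} {hd : 2 ≤ d} {h : Fin (d - 1) → ℝ}
    (hh : h ∈ stratum d hd N) (u : Fin (N - 1) → ℝ) (i : Fin (d - 1)) : ℝ :=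
  Ee d ((κ d h i : ℝ) + uhat hh u i)

/-- The parameter domain: the open order simplex. -/
def Oset (N : ℕ) : Set (Fin (N - 1) → ℝ) :=
  {u | StrictMono u ∧ ∀ s, 0 < u s ∧ u s < 1}

section Fixed
variable {d N : ℕ} {hd : 2 ≤ d} {h : Fin (d - 1) → ℝ} (hh : h ∈ stratum d hd N)

lemma phi_pos (u : Fin (N - 1) → ℝ) (i : Fin (d - 1)) : 0 < Φ hh u i := Ee_pos _

lemma logb_phi (u : Fin (N - 1) → ℝ) (i : Fin (d - 1)) :
    Real.logb d (Φ hh u i) = (κ d h i : ℝ) + uhat hh u i := logb_Ee hd _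

variable {u : Fin (N - 1) → ℝ} (hu : u ∈ Oset N)
include hu

lemma uhat_nonneg (i : Fin (d - 1)) : 0 ≤ uhat hh u i := by
  unfold uhat
  split
  · exact le_refl 0
  · exact le_of_lt (hu.2 _).1

lemma uhat_lt_one (i : Fin (d - 1)) : uhat hh u i < 1 := by
  unfold uhat
  split
  · exact one_pos
  · exact (hu.2 _).2

lemma uhat_eq_zero_iff (i : Fin (d - 1)) : uhat hh u i = 0 ↔ θ d h i = 0 := by
  unfold uhat
  split
  · rename_i hθ; simp [hθ]
  · rename_i hθ
    have := (hu.2 ((eIso hh).symm ⟨θ d h i, mem_Tvals hθ⟩)).1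
    constructor
    · intro hc; linarith
    · intro hc; exact absurd hc hθ

lemma uhat_lt_iff (i j : Fin (d - 1)) :
    uhat hh u i < uhat hh u j ↔ θ d h i < θ d h j := by
  unfold uhat
  by_cases hi : θ d h i = 0 <;> by_cases hj : θ d h j = 0
  · rw [dif_pos hi, dif_pos hj, hi, hj]
  · rw [dif_pos hi, dif_neg hj]
    have h2 := (hu.2 ((eIso hh).symm ⟨θ d h j, mem_Tvals hj⟩)).1
    have h3 := (Tvals_pos (mem_Tvals hj)).1
    constructor <;> intro hc
    · rw [hi]; exact h3
    · exact h2
  · rw [dif_neg hi, dif_pos hj]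
    have h2 := (hu.2 ((eIso hh).symm ⟨θ d h i, mem_Tvals hi⟩)).1
    have h3 := (Tvals_pos (mem_Tvals hi)).1
    have h4 := theta_nonneg d h j
    constructor <;> intro hc
    · linarith
    · rw [hj] at hc; linarith
  · rw [dif_neg hi, dif_neg hj, hu.1.lt_iff_lt, OrderIso.lt_iff_lt]
    exact Subtype.mk_lt_mk

lemma uhat_eq_iff (i j : Fin (d - 1)) :
    uhat hh u i = uhat hh u j ↔ θ d h i = θ d h j := by
  have h1 := uhat_lt_iff hh hu i j
  have h2 := uhat_lt_iff hh hu j i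
  constructor <;> intro hc
  · rcases lt_trichotomy (θ d h i) (θ d h j) with hlt | heq | hgt
    · rw [← h1, hc] at hlt; exact absurd hlt (lt_irrefl _)
    · exact heq
    · rw [← h2, hc] at hgt; exact absurd hgt (lt_irrefl _)
  · rcases lt_trichotomy (uhat hh u i) (uhat hh u j) with hlt | heq | hgt
    · rw [h1, hc] at hlt; exact absurd hlt (lt_irrefl _)
    · exact heq
    · rw [h2, hc] at hgt; exact absurd hgt (lt_irrefl _)

lemma uhat_le_iff (i j : Fin (d - 1)) :
    uhat hh u i ≤ uhat hh u j ↔ θ d h i ≤ θ d h j := by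
  rw [le_iff_lt_or_eq, le_iff_lt_or_eq, uhat_lt_iff hh hu, uhat_eq_iff hh hu]


lemma theta_phi (i : Fin (d - 1)) : θ d (Φ hh u) i = uhat hh u i := by
  unfold θ
  rw [logb_phi, Int.fract_intCast_add]
  exact Int.fract_eq_self.mpr ⟨uhat_nonneg hh hu i, uhat_lt_one hh hu i⟩

lemma kappa_phi (i : Fin (d - 1)) : κ d (Φ hh u) i = κ d h i := by
  unfold κ
  rw [logb_phi, Int.floor_intCast_add]
  have : ⌊uhat hh u i⌋ = 0 :=
    Int.floor_eq_zero_iff.mpr ⟨uhat_nonneg hh hu i, uhat_lt_one hh hu i⟩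
  rw [this, add_zero]
  rfl

lemma phi_mono : ∀ i j : Fin (d - 1), i ≤ j → Φ hh u j ≤ Φ hh u i := by
  intro i j hij
  have hmono := hh.1.2.1 i j hij
  have hpos := stratum_pos hh
  have hlog : Real.logb d (h j) ≤ Real.logb d (h i) :=
    (Real.logb_le_logb (one_lt_dR hd) (hpos j) (hpos i)).mpr hmono
  rw [← kappa_add_theta d h i, ← kappa_add_theta d h j] at hlog
  have hti := theta_nonneg d h i
  have htj := theta_lt_one d h j
  have hui := uhat_nonneg hh hu i
  have huj := uhat_lt_one hh hu j
  apply (Ee_strictMono hd).monotone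
  rcases lt_trichotomy (κ d h j) (κ d h i) with hk | hk | hk
  · have : (κ d h j : ℝ) + 1 ≤ (κ d h i : ℝ) := by exact_mod_cast Int.add_one_le_iff.mpr hk
    linarith
  · rw [hk]
    have : θ d h j ≤ θ d h i := by rw [hk] at hlog; linarith
    have := (uhat_le_iff hh hu j i).mpr this
    linarith
  · exfalso
    have : (κ d h i : ℝ) + 1 ≤ (κ d h j : ℝ) := by exact_mod_cast Int.add_one_le_iff.mpr hk
    have h1 := theta_lt_one d h i
    have h2 := theta_nonneg d h j
    linarith

lemma phi_i0 : Φ hh u (i0 d hd) = 1 := by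
  have h1 : h (i0 d hd) = 1 := hh.1.1
  have hκ : κ d h (i0 d hd) = 0 := by simp [κ, h1]
  have hθ : θ d h (i0 d hd) = 0 := theta_i0 hd hh.1
  unfold Φ uhat
  rw [hκ, dif_pos hθ]
  simp [Ee]

lemma image_uhat_card :
    (Finset.image (uhat hh u) Finset.univ).card = N := by
  classical
  set F : ℝ → ℝ := fun t => if t = 0 then 0
    else if ht : t ∈ Tvals d h then u ((eIso hh).symm ⟨t, ht⟩) else 0 with hF
  have hFθ : ∀ i, uhat hh u i = F (θ d h i) := by
    intro i
    unfold uhat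
    by_cases hθ : θ d h i = 0
    · rw [dif_pos hθ, hF, hθ]
      norm_num
    · rw [dif_neg hθ, hF]
      simp only
      rw [if_neg hθ]
      rw [dif_pos (mem_Tvals hθ)]
  have himg : Finset.image (uhat hh u) Finset.univ
      = Finset.image F (Finset.image (θ d h) Finset.univ) := by
    rw [Finset.image_image]
    exact Finset.image_congr (fun i _ => hFθ i)
  rw [himg, Finset.card_image_of_injOn, stratum_card hh]
  intro a ha b hb hab
  simp only [Finset.coe_image, Set.mem_image, Finset.mem_coe] at ha hb
  obtain ⟨i, -, rfl⟩ := ha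
  obtain ⟨j, -, rfl⟩ := hb
  rw [← hFθ i, ← hFθ j] at hab
  exact (uhat_eq_iff hh hu i j).mp hab

lemma phi_mem : Φ hh u ∈ stratum d hd N := by
  refine ⟨⟨phi_i0 hh hu, phi_mono hh hu, phi_pos hh u⟩, ?_⟩
  rw [ncard_classes hd (phi_pos hh u)]
  have : Finset.image (θ d (Φ hh u)) Finset.univ = Finset.image (uhat hh u) Finset.univ :=
    Finset.image_congr (fun i _ => theta_phi hh hu i)
  rw [this]
  exact image_uhat_card hh hu

end Fixed
section BasePoint
variable {d N : ℕ} {hd : 2 ≤ d} {h : Fin (d - 1) → ℝ} (hh : h ∈ stratum d hd N)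

/-- The parameter vector corresponding to `h` itself. -/
noncomputable def u₀ : Fin (N - 1) → ℝ := fun s => ((eIso hh s : ℝ))

lemma u0_mem : u₀ hh ∈ Oset N := by
  constructor
  · intro s s' hss'
    exact Subtype.coe_lt_coe.mpr ((eIso hh).strictMono hss')
  · intro s
    exact Tvals_pos (eIso hh s).2

lemma uhat_u0 (i : Fin (d - 1)) : uhat hh (u₀ hh) i = θ d h i := by
  unfold uhat
  split
  · rename_i hθ; rw [hθ]
  · rename_i hθ
    show ((eIso hh ((eIso hh).symm ⟨θ d h i, mem_Tvals hθ⟩) : ℝ)) = θ d h i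
    rw [OrderIso.apply_symm_apply]

lemma phi_u0 : Φ hh (u₀ hh) = h := by
  funext i
  unfold Φ
  rw [uhat_u0, kappa_add_theta]
  exact Ee_logb hd (stratum_pos hh i)

end BasePoint

/-! ### The open set `W` cutting out the image of `Φ` inside the stratum. -/

/-- Shifted log coordinates relative to the integer parts of `h`. -/
noncomputable def vOf (d : ℕ) (h h' : Fin (d - 1) → ℝ) (i : Fin (d - 1)) : ℝ :=
  Real.logb d (h' i) - (κ d h i : ℝ)

/-- Conditions on shifted log coordinates. -/
def Vset (d : ℕ) (h : Fin (d - 1) → ℝ) : Set (Fin (d - 1) → ℝ) :=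
  {v | (∀ i, θ d h i = 0 → (-1 < v i ∧ v i < 1)) ∧
       (∀ i, θ d h i ≠ 0 → (0 < v i ∧ v i < 1)) ∧
       (∀ i j, θ d h i < θ d h j → (v i < v j ∧ v j - v i < 1))}

/-- The open set used to cut out the image of `Φ` inside the stratum. -/
def Wset (d : ℕ) (h : Fin (d - 1) → ℝ) : Set (Fin (d - 1) → ℝ) :=
  {h' | ∀ i, 0 < h' i} ∩ (fun h' i => vOf d h h' i) ⁻¹' Vset d h

lemma mem_Wset {d : ℕ} {h h' : Fin (d - 1) → ℝ} :
    h' ∈ Wset d h ↔ (∀ i, 0 < h' i) ∧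
      (∀ i, θ d h i = 0 → (-1 < vOf d h h' i ∧ vOf d h h' i < 1)) ∧
      (∀ i, θ d h i ≠ 0 → (0 < vOf d h h' i ∧ vOf d h h' i < 1)) ∧
      (∀ i j, θ d h i < θ d h j → (vOf d h h' i < vOf d h h' j ∧
        vOf d h h' i + 1 > vOf d h h' j)) := by
  unfold Wset Vset
  simp only [Set.mem_inter_iff, Set.mem_preimage, Set.mem_setOf_eq]
  constructor
  · rintro ⟨h1, h2, h3, h4⟩
    exact ⟨h1, h2, h3, fun i j hij => ⟨(h4 i j hij).1, by linarith [(h4 i j hij).2]⟩⟩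
  · rintro ⟨h1, h2, h3, h4⟩
    exact ⟨h1, h2, h3, fun i j hij => ⟨(h4 i j hij).1, by linarith [(h4 i j hij).2]⟩⟩

lemma vOf_self {d : ℕ} {h : Fin (d - 1) → ℝ} (i : Fin (d - 1)) :
    vOf d h h i = θ d h i := by
  unfold vOf
  rw [← kappa_add_theta d h i]
  ring

lemma self_mem_Wset {d : ℕ} {h : Fin (d - 1) → ℝ} (hpos : ∀ i, 0 < h i) :
    h ∈ Wset d h := by
  rw [mem_Wset]
  refine ⟨hpos, ?_, ?_, ?_⟩
  · intro i hi; rw [vOf_self, hi]; norm_num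
  · intro i hi
    rw [vOf_self]
    exact ⟨lt_of_le_of_ne (theta_nonneg d h i) (Ne.symm hi), theta_lt_one d h i⟩
  · intro i j hij
    rw [vOf_self, vOf_self]
    exact ⟨hij, by linarith [theta_nonneg d h i, theta_lt_one d h j]⟩

lemma isOpen_Vset (d : ℕ) (h : Fin (d - 1) → ℝ) : IsOpen (Vset d h) := by
  have h1 : Vset d h =
      (⋂ i, {v : Fin (d - 1) → ℝ | θ d h i = 0 → (-1 < v i ∧ v i < 1)}) ∩
      (⋂ i, {v : Fin (d - 1) → ℝ | θ d h i ≠ 0 → (0 < v i ∧ v i < 1)}) ∩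
      (⋂ i, ⋂ j, {v : Fin (d - 1) → ℝ | θ d h i < θ d h j → (v i < v j ∧ v j - v i < 1)}) := by
    ext v
    simp only [Vset, Set.mem_setOf_eq, Set.mem_inter_iff, Set.mem_iInter]
    tauto
  rw [h1]
  refine IsOpen.inter (IsOpen.inter ?_ ?_) ?_
  · refine isOpen_iInter_of_finite fun i => ?_
    by_cases hi : θ d h i = 0
    · have : {v : Fin (d - 1) → ℝ | θ d h i = 0 → (-1 < v i ∧ v i < 1)}
          = (fun v : Fin (d - 1) → ℝ => v i) ⁻¹' Set.Ioo (-1) 1 := by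
        ext v; simp [hi, Set.mem_Ioo]
      rw [this]
      exact (continuous_apply i).isOpen_preimage _ isOpen_Ioo
    · have : {v : Fin (d - 1) → ℝ | θ d h i = 0 → (-1 < v i ∧ v i < 1)} = Set.univ := by
        ext v; simp [hi]
      rw [this]; exact isOpen_univ
  · refine isOpen_iInter_of_finite fun i => ?_
    by_cases hi : θ d h i = 0
    · have : {v : Fin (d - 1) → ℝ | θ d h i ≠ 0 → (0 < v i ∧ v i < 1)} = Set.univ := by
        ext v; simp [hi]
      rw [this]; exact isOpen_univ
    · have : {v : Fin (d - 1) → ℝ | θ d h i ≠ 0 → (0 < v i ∧ v i < 1)}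
          = (fun v : Fin (d - 1) → ℝ => v i) ⁻¹' Set.Ioo 0 1 := by
        ext v; simp [hi, Set.mem_Ioo]
      rw [this]
      exact (continuous_apply i).isOpen_preimage _ isOpen_Ioo
  · refine isOpen_iInter_of_finite fun i => isOpen_iInter_of_finite fun j => ?_
    by_cases hij : θ d h i < θ d h j
    · have : {v : Fin (d - 1) → ℝ | θ d h i < θ d h j → (v i < v j ∧ v j - v i < 1)}
          = {v : Fin (d - 1) → ℝ | v i < v j} ∩ {v : Fin (d - 1) → ℝ | v j - v i < 1} := by
        ext v; simp [hij, Set.mem_setOf_eq]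
      rw [this]
      refine IsOpen.inter ?_ ?_
      · exact isOpen_lt (continuous_apply i) (continuous_apply j)
      · exact isOpen_lt ((continuous_apply j).sub (continuous_apply i)) continuous_const
    · have : {v : Fin (d - 1) → ℝ | θ d h i < θ d h j → (v i < v j ∧ v j - v i < 1)}
          = Set.univ := by
        ext v; simp [hij]
      rw [this]; exact isOpen_univ

lemma isOpen_Wset (d : ℕ) (hd : 2 ≤ d) (h : Fin (d - 1) → ℝ) : IsOpen (Wset d h) := by
  have hSpos : IsOpen {h' : Fin (d - 1) → ℝ | ∀ i, 0 < h' i} := by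
    have : {h' : Fin (d - 1) → ℝ | ∀ i, 0 < h' i}
        = ⋂ i, (fun h' : Fin (d - 1) → ℝ => h' i) ⁻¹' Set.Ioi 0 := by
      ext v; simp [Set.mem_iInter]
    rw [this]
    exact isOpen_iInter_of_finite fun i => (continuous_apply i).isOpen_preimage _ isOpen_Ioi
  refine ContinuousOn.isOpen_inter_preimage ?_ hSpos (isOpen_Vset d h)
  rw [continuousOn_pi]
  intro i
  have : ContinuousOn (fun h' : Fin (d - 1) → ℝ => Real.log (h' i))
      {h' : Fin (d - 1) → ℝ | ∀ i, 0 < h' i} := by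
    intro h' hh'
    apply ContinuousAt.continuousWithinAt
    apply ContinuousAt.log
    · exact (continuous_apply i).continuousAt
    · exact (hh' i).ne'
  have heq : (fun h' : Fin (d - 1) → ℝ => vOf d h h' i)
      = fun h' => Real.log (h' i) / Real.log d - (κ d h i : ℝ) := by
    funext h'
    rfl
  rw [heq]
  exact (this.div_const _).sub continuousOn_const


end Main


/-! ### The image of `Φ` is exactly `stratum ∩ W`. -/

section Image
variable {d N : ℕ} {hd : 2 ≤ d} {h h' : Fin (d - 1) → ℝ}

lemma no_int_in_Ioo {c : ℤ} (h0 : (0:ℝ) < c) (h1 : (c:ℝ) < 1) : False := by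
  have : (0:ℤ) < c := by exact_mod_cast h0
  have : c < 1 := by exact_mod_cast h1
  omega

/-- Refinement: within `W`, dependence for `h'` implies dependence for `h`. -/
lemma theta_refine (hh' : h' ∈ stratum d hd N) (hW : h' ∈ Wset d h) :
    ∀ i j, θ d h' i = θ d h' j → θ d h i = θ d h j := by
  rw [mem_Wset] at hW
  obtain ⟨hpos', hW2, hW3, hW4⟩ := hW
  intro i j hij
  by_contra hne
  obtain ⟨z, hz⟩ := Int.fract_eq_fract.mp hij
  rcases lt_or_gt_of_ne hne with hlt | hlt
  · obtain ⟨ha, hb⟩ := hW4 i j hlt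
    have hv : vOf d h h' j - vOf d h h' i = ((κ d h i - κ d h j - z : ℤ) : ℝ) := by
      unfold vOf
      push_cast
      linarith
    exact no_int_in_Ioo (by rw [← hv]; linarith) (by rw [← hv]; linarith)
  · obtain ⟨ha, hb⟩ := hW4 j i hlt
    have hv : vOf d h h' i - vOf d h h' j = ((κ d h j - κ d h i + z : ℤ) : ℝ) := by
      unfold vOf
      push_cast
      linarith
    exact no_int_in_Ioo (by rw [← hv]; linarith) (by rw [← hv]; linarith)

/-- Inside the stratum and `W`, the dependence relations for `h` and `h'` coincide. -/
lemma theta_rel (hh : h ∈ stratum d hd N) (hh' : h' ∈ stratum d hd N)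
    (hW : h' ∈ Wset d h) :
    ∀ i j, θ d h i = θ d h j → θ d h' i = θ d h' j := by
  classical
  have hA := theta_refine (hd := hd) hh' hW
  set G : ℝ → ℝ := fun t => if ht : ∃ i, θ d h' i = t then θ d h (Classical.choose ht) else 0
    with hG
  have hGθ : ∀ i, G (θ d h' i) = θ d h i := by
    intro i
    have hex : ∃ i', θ d h' i' = θ d h' i := ⟨i, rfl⟩
    rw [hG]
    simp only [dif_pos hex]
    exact hA _ _ (Classical.choose_spec hex)
  have himg : Finset.image (θ d h) Finset.univ
      = Finset.image G (Finset.image (θ d h') Finset.univ) := by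
    rw [Finset.image_image]
    exact (Finset.image_congr (fun i _ => (hGθ i).symm))
  have hinj : Set.InjOn G ↑(Finset.image (θ d h') Finset.univ) := by
    apply Finset.injOn_of_card_image_eq
    rw [← himg, stratum_card hh, stratum_card hh']
  intro i j hij
  apply hinj (Finset.mem_coe.mpr (Finset.mem_image_of_mem _ (Finset.mem_univ i)))
    (Finset.mem_coe.mpr (Finset.mem_image_of_mem _ (Finset.mem_univ j)))
  rw [hGθ i, hGθ j]
  exact hij

lemma fract_zero_eq_floor {a : ℝ} (ha : Int.fract a = 0) : a = (⌊a⌋ : ℝ) := by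
  have := Int.fract_add_floor a
  rw [ha, zero_add] at this
  exact this.symm

lemma exists_theta_eq {d : ℕ} {h : Fin (d - 1) → ℝ} {t : ℝ} (ht : t ∈ Tvals d h) :
    ∃ i, θ d h i = t := by
  rw [Tvals, Finset.mem_erase, Finset.mem_image] at ht
  obtain ⟨-, i, -, hi⟩ := ht
  exact ⟨i, hi⟩

/-- The hard inclusion: a stratum point in `W` is in the image of `Φ`. -/
lemma mem_phi_image (hh : h ∈ stratum d hd N) (hh' : h' ∈ stratum d hd N)
    (hW : h' ∈ Wset d h) : ∃ u ∈ Oset N, Φ hh u = h' := by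
  classical
  have hrel := theta_rel hh hh' hW
  rw [mem_Wset] at hW
  obtain ⟨hpos', hW2, hW3, hW4⟩ := hW
  -- coordinates in the class of the first index are pinned
  have hzero : ∀ i, θ d h i = 0 → vOf d h h' i = 0 := by
    intro i hi
    have h1 : θ d h' i = θ d h' (i0 d hd) :=
      hrel i (i0 d hd) (by rw [hi, theta_i0 hd hh.1])
    rw [theta_i0 hd hh'.1] at h1
    have h2 : Real.logb d (h' i) - (⌊Real.logb d (h' i)⌋ : ℝ) = 0 := h1
    have h3 : vOf d h h' i = ((⌊Real.logb d (h' i)⌋ - κ d h i : ℤ) : ℝ) := by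
      unfold vOf
      push_cast
      linarith
    obtain ⟨ha, hb⟩ := hW2 i hi
    rw [h3] at ha hb
    have h4 : (-1:ℤ) < ⌊Real.logb d (h' i)⌋ - κ d h i := by exact_mod_cast ha
    have h5 : ⌊Real.logb d (h' i)⌋ - κ d h i < 1 := by exact_mod_cast hb
    have h6 : ⌊Real.logb d (h' i)⌋ - κ d h i = 0 := by omega
    rw [h3, h6]
    norm_num
  -- choose representatives of the nonzero classes
  have hex : ∀ s : Fin (N - 1), ∃ i, θ d h i = ((eIso hh s : ℝ)) :=
    fun s => exists_theta_eq (eIso hh s).2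
  choose rep hrep using hex
  have hrepθ : ∀ s, θ d h (rep s) ≠ 0 := by
    intro s
    rw [hrep s]
    exact (Tvals_pos (eIso hh s).2).1.ne'
  set u : Fin (N - 1) → ℝ := fun s => vOf d h h' (rep s) with hu_def
  have hu : u ∈ Oset N := by
    constructor
    · intro s s' hss'
      have : θ d h (rep s) < θ d h (rep s') := by
        rw [hrep s, hrep s']
        exact Subtype.coe_lt_coe.mpr ((eIso hh).strictMono hss')
      exact (hW4 _ _ this).1
    · intro s
      exact hW3 (rep s) (hrepθ s)
  have key : ∀ i, vOf d h h' i = uhat hh u i := by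
    intro i
    unfold uhat
    split
    · rename_i hθ
      exact hzero i hθ
    · rename_i hθ
      set s := (eIso hh).symm ⟨θ d h i, mem_Tvals hθ⟩ with hs
      have h1 : θ d h (rep s) = θ d h i := by
        rw [hrep s, hs, OrderIso.apply_symm_apply]
      have h2 : θ d h' (rep s) = θ d h' i := hrel _ _ h1
      obtain ⟨z, hz⟩ := Int.fract_eq_fract.mp h2
      have h3 : vOf d h h' (rep s) - vOf d h h' i
          = ((z + κ d h i - κ d h (rep s) : ℤ) : ℝ) := by
        unfold vOf
        push_cast
        linarith
      obtain ⟨hc, hc'⟩ := hW3 i hθ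
      obtain ⟨he, he'⟩ := hW3 (rep s) (hrepθ s)
      have h4 : z + κ d h i - κ d h (rep s) = 0 := by
        have l1 : ((z + κ d h i - κ d h (rep s) : ℤ) : ℝ) < 1 := by rw [← h3]; linarith
        have l2 : (-1:ℝ) < ((z + κ d h i - κ d h (rep s) : ℤ) : ℝ) := by rw [← h3]; linarith
        have l3 : z + κ d h i - κ d h (rep s) < 1 := by exact_mod_cast l1
        have l4 : -1 < z + κ d h i - κ d h (rep s) := by exact_mod_cast l2
        omega
      rw [h4] at h3
      norm_num at h3
      show vOf d h h' i = vOf d h h' (rep s)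
      linarith
  refine ⟨u, hu, ?_⟩
  funext i
  unfold Φ
  rw [← key i]
  have : (κ d h i : ℝ) + vOf d h h' i = Real.logb d (h' i) := by
    unfold vOf; ring
  rw [this]
  exact Ee_logb hd (hpos' i)

/-- The easy inclusion. -/
lemma phi_mem_inter (hh : h ∈ stratum d hd N) {u : Fin (N - 1) → ℝ} (hu : u ∈ Oset N) :
    Φ hh u ∈ stratum d hd N ∩ Wset d h := by
  refine ⟨phi_mem hh hu, ?_⟩
  have hv : ∀ i, vOf d h (Φ hh u) i = uhat hh u i := by
    intro i
    unfold vOf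
    rw [logb_phi]
    ring
  rw [mem_Wset]
  refine ⟨phi_pos hh u, ?_, ?_, ?_⟩
  · intro i hi
    rw [hv i, (uhat_eq_zero_iff hh hu i).mpr hi]
    norm_num
  · intro i hi
    rw [hv i]
    refine ⟨lt_of_le_of_ne (uhat_nonneg hh hu i) ?_, uhat_lt_one hh hu i⟩
    intro hc
    exact hi ((uhat_eq_zero_iff hh hu i).mp hc.symm)
  · intro i j hij
    rw [hv i, hv j]
    refine ⟨(uhat_lt_iff hh hu i j).mpr hij, ?_⟩
    linarith [uhat_nonneg hh hu i, uhat_lt_one hh hu j]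

lemma phi_image_eq (hh : h ∈ stratum d hd N) :
    stratum d hd N ∩ Wset d h = Φ hh '' Oset N := by
  apply subset_antisymm
  · rintro h' ⟨hh', hW⟩
    obtain ⟨u, hu, hΦ⟩ := mem_phi_image hh hh' hW
    exact ⟨u, hu, hΦ⟩
  · rintro h' ⟨u, hu, rfl⟩
    exact phi_mem_inter hh hu

/-- `W` only depends on combinatorial data preserved along the component. -/
lemma Wset_congr {h1 h2 : Fin (d - 1) → ℝ}
    (hκ : ∀ i, κ d h1 i = κ d h2 i)
    (h0 : ∀ i, (θ d h1 i = 0 ↔ θ d h2 i = 0))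
    (hlt : ∀ i j, (θ d h1 i < θ d h1 j ↔ θ d h2 i < θ d h2 j)) :
    Wset d h1 = Wset d h2 := by
  have hv : ∀ h' i, vOf d h1 h' i = vOf d h2 h' i := by
    intro h' i
    unfold vOf
    rw [hκ i]
  ext h'
  rw [mem_Wset, mem_Wset]
  constructor
  · rintro ⟨a, b, c, e⟩
    refine ⟨a, fun i hi => ?_, fun i hi => ?_, fun i j hij => ?_⟩
    · rw [← hv]; exact b i ((h0 i).mpr hi)
    · rw [← hv]; exact c i (fun hc => hi ((h0 i).mp hc))
    · rw [← hv, ← hv]; exact e i j ((hlt i j).mpr hij)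
  · rintro ⟨a, b, c, e⟩
    refine ⟨a, fun i hi => ?_, fun i hi => ?_, fun i j hij => ?_⟩
    · rw [hv]; exact b i ((h0 i).mp hi)
    · rw [hv]; exact c i (fun hc => hi ((h0 i).mpr hc))
    · rw [hv, hv]; exact e i j ((hlt i j).mp hij)

lemma Wset_eq_of_mem (hh : h ∈ stratum d hd N) (hh' : h' ∈ stratum d hd N)
    (hW : h' ∈ Wset d h) : Wset d h' = Wset d h := by
  obtain ⟨u, hu, hΦ⟩ := mem_phi_image hh hh' hW
  subst hΦ
  apply Wset_congr
  · exact fun i => kappa_phi hh hu i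
  · intro i
    rw [theta_phi hh hu i]
    exact uhat_eq_zero_iff hh hu i
  · intro i j
    rw [theta_phi hh hu i, theta_phi hh hu j]
    exact uhat_lt_iff hh hu i j

end Image

/-! ### The component of `h` is exactly the image of `Φ`. -/

section Component
variable {d N : ℕ} {hd : 2 ≤ d} {h : Fin (d - 1) → ℝ}

lemma Oset_convex (N : ℕ) : Convex ℝ (Oset N) := by
  rintro u hu v hv a b ha hb hab
  constructor
  · intro s s' hss'
    have h1 : u s ≤ u s' := le_of_lt (hu.1 hss')
    have h2 : v s ≤ v s' := le_of_lt (hv.1 hss')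
    rcases eq_or_lt_of_le ha with ha' | ha'
    · have hb1 : b = 1 := by linarith
      simp only [Pi.add_apply, Pi.smul_apply, smul_eq_mul, ← ha', hb1]
      simpa using hv.1 hss'
    · have := mul_lt_mul_of_pos_left (hu.1 hss') ha'
      have h3 : b * v s ≤ b * v s' := mul_le_mul_of_nonneg_left h2 hb
      simp only [Pi.add_apply, Pi.smul_apply, smul_eq_mul]
      linarith
  · intro s
    have h1 := (hu.2 s)
    have h2 := (hv.2 s)
    simp only [Pi.add_apply, Pi.smul_apply, smul_eq_mul]
    constructor
    · rcases eq_or_lt_of_le ha with ha' | ha'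
      · have hb1 : b = 1 := by linarith
        rw [← ha', hb1]
        simpa using h2.1
      · nlinarith [h2.1, hb]
    · rcases eq_or_lt_of_le ha with ha' | ha'
      · have hb1 : b = 1 := by linarith
        rw [← ha', hb1]
        simpa using h2.2
      · have l1 : a * u s < a := by nlinarith [h1.2]
        have l2 : b * v s ≤ b := by nlinarith [h2.2]
        linarith

lemma phi_continuous (hh : h ∈ stratum d hd N) : Continuous (Φ hh) := by
  apply continuous_pi
  intro i
  apply Ee_continuous.comp
  apply continuous_const.add
  by_cases hθ : θ d h i = 0
  · have : (fun u : Fin (N - 1) → ℝ => uhat hh u i) = fun _ => 0 := by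
      funext u
      unfold uhat
      rw [dif_pos hθ]
    rw [this]
    exact continuous_const
  · have : (fun u : Fin (N - 1) → ℝ => uhat hh u i)
        = fun u => u ((eIso hh).symm ⟨θ d h i, mem_Tvals hθ⟩) := by
      funext u
      unfold uhat
      rw [dif_neg hθ]
    rw [this]
    exact continuous_apply _

/-- The connected component of `h` in the stratum is the image of `Φ`. -/
lemma component_eq (hh : h ∈ stratum d hd N) :
    connectedComponentIn (stratum d hd N) h = Φ hh '' Oset N := by
  apply subset_antisymm
  · rw [connectedComponentIn_eq_image hh, ← phi_image_eq hh]
    set S := stratum d hd N with hS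
    have hconn : connectedComponent (⟨h, hh⟩ : ↥S) ⊆ Subtype.val ⁻¹' (Wset d h) := by
      apply IsClopen.connectedComponent_subset
      · constructor
        · rw [← isOpen_compl_iff, isOpen_iff_forall_mem_open]
          intro x hx
          refine ⟨Subtype.val ⁻¹' (Wset d x.1), ?_,
            (isOpen_Wset d hd x.1).preimage continuous_subtype_val,
            self_mem_Wset (stratum_pos x.2)⟩
          intro y hy hyA
          have e1 : Wset d y.1 = Wset d x.1 := Wset_eq_of_mem x.2 y.2 hy
          have e2 : Wset d y.1 = Wset d h := Wset_eq_of_mem hh y.2 hyA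
          apply hx
          show x.1 ∈ Wset d h
          rw [← e2, e1]
          exact self_mem_Wset (stratum_pos x.2)
        · exact (isOpen_Wset d hd h).preimage continuous_subtype_val
      · exact self_mem_Wset (stratum_pos hh)
    calc Subtype.val '' connectedComponent (⟨h, hh⟩ : ↥S)
        ⊆ Subtype.val '' (Subtype.val ⁻¹' (Wset d h)) := Set.image_mono hconn
      _ = S ∩ Wset d h := Subtype.image_preimage_coe S (Wset d h)
  · apply IsPreconnected.subset_connectedComponentIn
    · exact (Oset_convex N).isPreconnected.image _ (phi_continuous hh).continuousOn
    · exact ⟨u₀ hh, u0_mem hh, phi_u0 hh⟩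
    · rintro h' ⟨u, hu, rfl⟩
      exact phi_mem hh hu

/-! ### `Φ` is a homeomorphism onto its image. -/

/-- A representative index for each nonzero class. -/
noncomputable def repIdx (hh : h ∈ stratum d hd N) (s : Fin (N - 1)) : Fin (d - 1) :=
  Classical.choose (exists_theta_eq (eIso hh s).2)

lemma repIdx_spec (hh : h ∈ stratum d hd N) (s : Fin (N - 1)) :
    θ d h (repIdx hh s) = ((eIso hh s : ℝ)) :=
  Classical.choose_spec (exists_theta_eq (eIso hh s).2)

lemma repIdx_ne (hh : h ∈ stratum d hd N) (s : Fin (N - 1)) :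
    θ d h (repIdx hh s) ≠ 0 := by
  rw [repIdx_spec hh s]
  exact (Tvals_pos (eIso hh s).2).1.ne'

/-- Continuous inverse of `Φ`. -/
noncomputable def gMap (hh : h ∈ stratum d hd N) (h' : Fin (d - 1) → ℝ)
    (s : Fin (N - 1)) : ℝ :=
  vOf d h h' (repIdx hh s)

lemma g_phi (hh : h ∈ stratum d hd N) {u : Fin (N - 1) → ℝ} (hu : u ∈ Oset N) :
    gMap hh (Φ hh u) = u := by
  funext s
  unfold gMap vOf
  rw [logb_phi]
  have : (κ d h (repIdx hh s) : ℝ) + uhat hh u (repIdx hh s) - (κ d h (repIdx hh s) : ℝ)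
      = uhat hh u (repIdx hh s) := by ring
  rw [this]
  unfold uhat
  rw [dif_neg (repIdx_ne hh s)]
  congr 1
  rw [OrderIso.symm_apply_eq]
  exact Subtype.ext (repIdx_spec hh s)

/-- `Φ` as a homeomorphism from the parameter domain onto the component. -/
noncomputable def phiHomeo (hh : h ∈ stratum d hd N) :
    ↥(Oset N) ≃ₜ ↥(Φ hh '' Oset N) where
  toFun x := ⟨Φ hh x.1, ⟨x.1, x.2, rfl⟩⟩
  invFun y := ⟨gMap hh y.1, by
    obtain ⟨u, hu, hΦ⟩ := y.2
    rw [← hΦ, g_phi hh hu]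
    exact hu⟩
  left_inv x := Subtype.ext (by simp only; rw [g_phi hh x.2])
  right_inv y := Subtype.ext (by
    obtain ⟨u, hu, hΦ⟩ := y.2
    simp only
    conv_lhs => rw [← hΦ, g_phi hh hu]
    exact hΦ)
  continuous_toFun := by
    apply Continuous.subtype_mk
    exact (phi_continuous hh).comp continuous_subtype_val
  continuous_invFun := by
    apply Continuous.subtype_mk
    apply continuous_pi
    intro s
    show Continuous fun y : ↥(Φ hh '' Oset N) =>
      Real.log (y.1 (repIdx hh s)) / Real.log d - (κ d h (repIdx hh s) : ℝ)
    apply Continuous.sub _ continuous_const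
    apply Continuous.div_const
    rw [continuous_iff_continuousAt]
    intro y
    apply ContinuousAt.log
    · exact ((continuous_apply (repIdx hh s)).comp continuous_subtype_val).continuousAt
    · obtain ⟨u, hu, hΦ⟩ := y.2
      rw [← hΦ]
      exact (phi_pos hh u _).ne'

end Component

/-! ### The open order simplex is homeomorphic to the open standard simplex. -/

section Simplex
variable (N : ℕ)

/-- The open standard simplex. -/
def Dset : Set (Fin N → ℝ) := {x | (∀ i, 0 < x i) ∧ ∑ i, x i = 1}

/-- Cumulative boundary values. -/
noncomputable def Fmap (u : Fin (N - 1) → ℝ) (j : ℕ) : ℝ :=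
  if j = 0 then 0 else if hj : j - 1 < N - 1 then u ⟨j - 1, hj⟩ else 1

/-- From order-simplex coordinates to gaps. -/
noncomputable def Pmap (u : Fin (N - 1) → ℝ) (t : Fin N) : ℝ :=
  Fmap N u ((t : ℕ) + 1) - Fmap N u (t : ℕ)

/-- Extension of a vector by zero. -/
noncomputable def xe (x : Fin N → ℝ) (j : ℕ) : ℝ := if hj : j < N then x ⟨j, hj⟩ else 0

/-- From gaps to order-simplex coordinates (partial sums). -/
noncomputable def Rmap (x : Fin N → ℝ) (s : Fin (N - 1)) : ℝ :=
  ∑ j ∈ Finset.range ((s : ℕ) + 1), xe N x j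

lemma Fmap_zero (u : Fin (N - 1) → ℝ) : Fmap N u 0 = 0 := if_pos rfl

lemma Fmap_last (hN : 1 ≤ N) (u : Fin (N - 1) → ℝ) : Fmap N u N = 1 := by
  unfold Fmap
  rw [if_neg (by omega), dif_neg (by omega)]

lemma Fmap_mid (u : Fin (N - 1) → ℝ) {j : ℕ} (h1 : 1 ≤ j) (h2 : j - 1 < N - 1) :
    Fmap N u j = u ⟨j - 1, h2⟩ := by
  unfold Fmap
  rw [if_neg (by omega), dif_pos h2]

lemma sum_Pmap (hN : 1 ≤ N) (u : Fin (N - 1) → ℝ) : ∑ t, Pmap N u t = 1 := by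
  calc ∑ t, Pmap N u t
      = ∑ j ∈ Finset.range N, (Fmap N u (j + 1) - Fmap N u j) :=
        Fin.sum_univ_eq_sum_range (fun j => Fmap N u (j + 1) - Fmap N u j) N
    _ = Fmap N u N - Fmap N u 0 := Finset.sum_range_sub _ N
    _ = 1 := by rw [Fmap_last N hN, Fmap_zero]; ring

lemma Pmap_pos {u : Fin (N - 1) → ℝ} (hu : u ∈ Oset N) (t : Fin N) : 0 < Pmap N u t := by
  unfold Pmap
  by_cases h0 : (t : ℕ) = 0
  · rw [h0, Fmap_zero, sub_zero]
    by_cases h1 : 1 - 1 < N - 1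
    · rw [Fmap_mid N u (le_refl 1) h1]
      exact (hu.2 _).1
    · unfold Fmap
      rw [if_neg (by omega), dif_neg h1]
      norm_num
  · have h1 : 1 ≤ (t : ℕ) := by omega
    have h2 : (t : ℕ) - 1 < N - 1 := by have := t.isLt; omega
    rw [Fmap_mid N u h1 h2]
    by_cases h3 : (t : ℕ) + 1 - 1 < N - 1
    · rw [Fmap_mid N u (by omega) h3]
      apply sub_pos.mpr
      apply hu.1
      rw [Fin.mk_lt_mk]
      omega
    · unfold Fmap
      rw [if_neg (by omega), dif_neg h3]
      apply sub_pos.mpr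
      exact (hu.2 _).2

lemma sum_xe (x : Fin N → ℝ) : ∑ j ∈ Finset.range N, xe N x j = ∑ t, x t := by
  rw [← Fin.sum_univ_eq_sum_range (fun j => xe N x j) N]
  apply Finset.sum_congr rfl
  intro t _
  unfold xe
  rw [dif_pos t.isLt, Fin.eta]

lemma R_P (u : Fin (N - 1) → ℝ) (s : Fin (N - 1)) : Rmap N (Pmap N u) s = u s := by
  unfold Rmap
  have hcong : ∀ j ∈ Finset.range ((s : ℕ) + 1),
      xe N (Pmap N u) j = Fmap N u (j + 1) - Fmap N u j := by
    intro j hj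
    rw [Finset.mem_range] at hj
    have hjN : j < N := by have := s.isLt; omega
    unfold xe
    rw [dif_pos hjN]
    rfl
  rw [Finset.sum_congr rfl hcong, Finset.sum_range_sub, Fmap_zero, sub_zero,
    Fmap_mid N u (by omega) (by have := s.isLt; omega)]
  congr 1

lemma F_R (x : Fin N → ℝ) (hx : x ∈ Dset N) :
    ∀ j ≤ N, Fmap N (Rmap N x) j = ∑ j' ∈ Finset.range j, xe N x j' := by
  intro j hj
  unfold Fmap
  by_cases h0 : j = 0
  · rw [if_pos h0, h0]
    simp
  · rw [if_neg h0]
    by_cases h1 : j - 1 < N - 1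
    · rw [dif_pos h1]
      show (∑ j' ∈ Finset.range ((j - 1) + 1), xe N x j') = _
      have hj1 : j - 1 + 1 = j := by omega
      rw [hj1]
    · rw [dif_neg h1]
      have hjN : j = N := by omega
      rw [hjN, sum_xe, hx.2]

lemma P_R (x : Fin N → ℝ) (hx : x ∈ Dset N) : Pmap N (Rmap N x) = x := by
  funext t
  unfold Pmap
  rw [F_R N x hx ((t : ℕ) + 1) (by have := t.isLt; omega),
    F_R N x hx (t : ℕ) (by have := t.isLt; omega), Finset.sum_range_succ]
  have hxe : xe N x (t : ℕ) = x t := by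
    unfold xe
    rw [dif_pos t.isLt, Fin.eta]
  rw [hxe]
  ring

lemma xe_nonneg (x : Fin N → ℝ) (hx : x ∈ Dset N) (j : ℕ) : 0 ≤ xe N x j := by
  unfold xe
  split
  · exact le_of_lt (hx.1 _)
  · exact le_refl 0

lemma xe_pos (x : Fin N → ℝ) (hx : x ∈ Dset N) {j : ℕ} (hj : j < N) : 0 < xe N x j := by
  unfold xe
  rw [dif_pos hj]
  exact hx.1 _

lemma R_mem (x : Fin N → ℝ) (hx : x ∈ Dset N) : Rmap N x ∈ Oset N := by
  constructor
  · intro s s' hss'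
    have hss'' : (s : ℕ) < (s' : ℕ) := hss'
    unfold Rmap
    apply Finset.sum_lt_sum_of_subset (Finset.range_subset_range.mpr (by omega))
      (i := (s' : ℕ)) (Finset.mem_range.mpr (by omega))
      (by rw [Finset.mem_range]; omega)
      (xe_pos N x hx (by have := s'.isLt; omega))
      (fun j _ _ => xe_nonneg N x hx j)
  · intro s
    constructor
    · unfold Rmap
      apply Finset.sum_pos
      · intro j hj
        rw [Finset.mem_range] at hj
        exact xe_pos N x hx (by have := s.isLt; omega)
      · exact ⟨0, Finset.mem_range.mpr (by omega)⟩
    · have h1 : Rmap N x s < ∑ j ∈ Finset.range N, xe N x j := by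
        unfold Rmap
        apply Finset.sum_lt_sum_of_subset (Finset.range_subset_range.mpr (by have := s.isLt; omega))
          (i := N - 1) (Finset.mem_range.mpr (by have := s.isLt; omega))
          (by rw [Finset.mem_range]; have := s.isLt; omega)
          (xe_pos N x hx (by have := s.isLt; omega))
          (fun j _ _ => xe_nonneg N x hx j)
      rwa [sum_xe, hx.2] at h1

lemma Fmap_continuous (j : ℕ) : Continuous fun u : Fin (N - 1) → ℝ => Fmap N u j := by
  unfold Fmap
  by_cases h0 : j = 0
  · simp only [if_pos h0]
    exact continuous_const
  · simp only [if_neg h0]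
    by_cases h1 : j - 1 < N - 1
    · simp only [dif_pos h1]
      exact continuous_apply _
    · simp only [dif_neg h1]
      exact continuous_const

lemma xe_continuous (j : ℕ) : Continuous fun x : Fin N → ℝ => xe N x j := by
  unfold xe
  by_cases h1 : j < N
  · simp only [dif_pos h1]
    exact continuous_apply _
  · simp only [dif_neg h1]
    exact continuous_const

/-- The homeomorphism between the open order simplex and the open standard simplex. -/
noncomputable def simplexHomeo (hN : 1 ≤ N) : ↥(Oset N) ≃ₜ ↥(Dset N) where
  toFun u := ⟨Pmap N u.1, fun t => Pmap_pos N u.2 t, sum_Pmap N hN u.1⟩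
  invFun x := ⟨Rmap N x.1, R_mem N x.1 x.2⟩
  left_inv u := Subtype.ext (funext fun s => R_P N u.1 s)
  right_inv x := Subtype.ext (P_R N x.1 x.2)
  continuous_toFun := by
    apply Continuous.subtype_mk
    apply continuous_pi
    intro t
    show Continuous fun u : ↥(Oset N) => Fmap N u.1 ((t : ℕ) + 1) - Fmap N u.1 (t : ℕ)
    exact ((Fmap_continuous N _).comp continuous_subtype_val).sub
      ((Fmap_continuous N _).comp continuous_subtype_val)
  continuous_invFun := by
    apply Continuous.subtype_mk
    apply continuous_pi
    intro s
    show Continuous fun x : ↥(Dset N) => ∑ j ∈ Finset.range ((s : ℕ) + 1), xe N x.1 j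
    apply continuous_finset_sum
    intro j _
    exact (xe_continuous N j).comp continuous_subtype_val

end Simplex

end StratumProof

/-- Every connected component of the stratum `P_d^N` (subspace topology
from `ℝ^{d−1}`) is homeomorphic to the open standard `(N−1)`-simplex
`σ_N = {x ∈ ℝ^N : xᵢ > 0 ∀ i, ∑ xᵢ = 1}`. -/
theorem stratum_components_homeomorphic_to_open_simplex (d N : ℕ) (hd : 2 ≤ d)
    (hN1 : 1 ≤ N) (hNd : N ≤ d - 1) :
    ∀ h ∈ stratum d hd N,
      Nonempty (↥(connectedComponentIn (stratum d hd N) h) ≃ₜ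
        ↥{x : Fin N → ℝ | (∀ i, 0 < x i) ∧ ∑ i, x i = 1}) := by
  intro h hh
  exact ⟨(Homeomorph.setCongr (StratumProof.component_eq hh)).trans
    ((StratumProof.phiHomeo hh).symm.trans (StratumProof.simplexHomeo N hN1))⟩
end

section
/- Let d ≥ 2 and let P_d = {h ∈ ℝ^{d−1} : 1 = h₁ ≥ h₂ ≥ ⋯ ≥ h_{d−1} > 0}. The stratification of P_d by the strata P_d^N, 1 ≤ N ≤ d−1, is locally finite: every point h ∈ P_d has an open neighborhood U in P_d (subspace topology) such that U meets only finitely many connected components of the strata P_d^N, taken over all N. -/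
noncomputable section StratAux

open Real Set

/-- Nearest-integer exponent for the ratio `h i / h j` as a power of `d`. -/
def nij (d : ℕ) (h : Fin (d - 1) → ℝ) (i j : Fin (d - 1)) : ℤ :=
  round ((Real.log (h i) - Real.log (h j)) / Real.log d)

/-- Multiplicative box neighborhood of `h`. -/
def nbhd (d : ℕ) (h : Fin (d - 1) → ℝ) : Set (Fin (d - 1) → ℝ) :=
  {x | ∀ i, x i ∈ Set.Ioo (h i * Real.exp (-(Real.log d / 8))) (h i * Real.exp (Real.log d / 8))}

/-- Sign pattern of a point `x` relative to the base point `h`. -/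
def sgn (d : ℕ) (h x : Fin (d - 1) → ℝ) (p : Fin (d - 1) × Fin (d - 1)) : SignType :=
  SignType.sign (Real.log (x p.1) - Real.log (x p.2) - nij d h p.1 p.2 * Real.log d)

lemma logd_pos {d : ℕ} (hd : 2 ≤ d) : 0 < Real.log d :=
  Real.log_pos (by exact_mod_cast (by omega : 1 < d))

lemma mem_nbhd_iff {d : ℕ} (hd : 2 ≤ d) {h x : Fin (d - 1) → ℝ} (hh : ∀ i, 0 < h i)
    (hx : x ∈ nbhd d h) (i : Fin (d - 1)) :
    0 < x i ∧ |Real.log (x i) - Real.log (h i)| < Real.log d / 8 := by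
  obtain ⟨h1, h2⟩ := hx i
  have hpos : 0 < x i := lt_trans (mul_pos (hh i) (Real.exp_pos _)) h1
  refine ⟨hpos, abs_lt.2 ⟨?_, ?_⟩⟩
  · have := Real.log_lt_log (mul_pos (hh i) (Real.exp_pos _)) h1
    rw [Real.log_mul (hh i).ne' (Real.exp_ne_zero _), Real.log_exp] at this
    linarith
  · have := Real.log_lt_log hpos h2
    rw [Real.log_mul (hh i).ne' (Real.exp_ne_zero _), Real.log_exp] at this
    linarith

lemma dep_iff_log {d : ℕ} (hd : 2 ≤ d) {a b : ℝ} (ha : 0 < a) (hb : 0 < b) (n : ℤ)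
    (hn : |Real.log a - Real.log b - n * Real.log d| < 3 * Real.log d / 4) :
    DegDep d a b ↔ Real.log a - Real.log b = n * Real.log d := by
  have hL := logd_pos hd
  have hd0 : (0 : ℝ) < d := by positivity
  constructor
  · rintro ⟨m, hm⟩
    have hlm : Real.log a - Real.log b = m * Real.log d := by
      rw [hm, Real.log_mul (zpow_ne_zero _ hd0.ne') hb.ne', Real.log_zpow]
      ring
    rw [hlm] at hn ⊢
    have : |(m : ℝ) - n| * Real.log d < 3 * Real.log d / 4 := by
      calc |(m : ℝ) - n| * Real.log d = |((m : ℝ) - n) * Real.log d| := by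
            rw [abs_mul, abs_of_pos hL]
        _ < 3 * Real.log d / 4 := by rw [sub_mul]; exact hn
    have habs : |(m : ℝ) - n| < 1 := by
      by_contra hc
      push_neg at hc
      nlinarith
    have : m = n := by
      have h1 : ((m - n : ℤ) : ℝ) = (m : ℝ) - n := by push_cast; ring
      by_contra hne
      have : (1 : ℤ) ≤ |m - n| := Int.one_le_abs (by omega)
      have : (1 : ℝ) ≤ |(m : ℝ) - n| := by
        rw [← h1, ← Int.cast_abs]
        exact_mod_cast this
      linarith
    rw [this]
  · intro hl
    refine ⟨n, ?_⟩
    have : a = Real.exp (Real.log a) := (Real.exp_log ha).symm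
    rw [this, show Real.log a = n * Real.log d + Real.log b by linarith,
      Real.exp_add, Real.exp_log hb]
    congr 1
    rw [← Real.log_zpow, Real.exp_log (zpow_pos hd0 _)]

lemma nij_close {d : ℕ} (hd : 2 ≤ d) (h : Fin (d - 1) → ℝ) (i j : Fin (d - 1)) :
    |Real.log (h i) - Real.log (h j) - nij d h i j * Real.log d| ≤ Real.log d / 2 := by
  have hL := logd_pos hd
  have := abs_sub_round ((Real.log (h i) - Real.log (h j)) / Real.log d)
  have key : Real.log (h i) - Real.log (h j) - nij d h i j * Real.log d
      = ((Real.log (h i) - Real.log (h j)) / Real.log d - nij d h i j) * Real.log d := by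
    field_simp
  have h3 : |(Real.log (h i) - Real.log (h j)) / Real.log d - (nij d h i j : ℝ)| ≤ 1 / 2 :=
    this
  rw [key, abs_mul, abs_of_pos hL]
  nlinarith

lemma sgn_zero_iff {d : ℕ} (hd : 2 ≤ d) {h x : Fin (d - 1) → ℝ} (hh : ∀ i, 0 < h i)
    (hx : x ∈ nbhd d h) (i j : Fin (d - 1)) :
    sgn d h x (i, j) = 0 ↔ DegDep d (x i) (x j) := by
  have hL := logd_pos hd
  obtain ⟨hxi, hdi⟩ := mem_nbhd_iff hd hh hx i
  obtain ⟨hxj, hdj⟩ := mem_nbhd_iff hd hh hx j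
  have hclose : |Real.log (x i) - Real.log (x j) - nij d h i j * Real.log d|
      < 3 * Real.log d / 4 := by
    have := nij_close hd h i j
    have habs : |Real.log (x i) - Real.log (x j) - nij d h i j * Real.log d|
        ≤ |Real.log (x i) - Real.log (h i)| + |Real.log (h j) - Real.log (x j)|
          + |Real.log (h i) - Real.log (h j) - nij d h i j * Real.log d| := by
      have := abs_add_le (Real.log (x i) - Real.log (h i) + (Real.log (h j) - Real.log (x j)))
        (Real.log (h i) - Real.log (h j) - nij d h i j * Real.log d)
      have h2 := abs_add_le (Real.log (x i) - Real.log (h i)) (Real.log (h j) - Real.log (x j))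
      calc |Real.log (x i) - Real.log (x j) - nij d h i j * Real.log d|
          = |Real.log (x i) - Real.log (h i) + (Real.log (h j) - Real.log (x j))
            + (Real.log (h i) - Real.log (h j) - nij d h i j * Real.log d)| := by ring_nf
        _ ≤ _ := by linarith [this, h2]
    rw [abs_sub_comm (Real.log (h j)) (Real.log (x j))] at habs
    linarith
  rw [sgn, _root_.sign_eq_zero_iff, sub_eq_zero]
  exact (dep_iff_log hd hxi hxj _ hclose).symm

lemma combo_pos {a b x y : ℝ} (ha : 0 ≤ a) (hb : 0 ≤ b) (hab : a + b = 1)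
    (hx : 0 < x) (hy : 0 < y) : 0 < a * x + b * y := by
  rcases eq_or_lt_of_le ha with h | h
  · have hb1 : b = 1 := by linarith
    rw [← h, hb1]; simpa using hy
  · nlinarith [mul_nonneg hb hy.le]

lemma combo_lt {a b x y z : ℝ} (ha : 0 ≤ a) (hb : 0 ≤ b) (hab : a + b = 1)
    (hx : x < z) (hy : y < z) : a * x + b * y < z := by
  have h1 := combo_pos ha hb hab (sub_pos.2 hx) (sub_pos.2 hy)
  have h2 : a * (z - x) + b * (z - y) = z - (a * x + b * y) := by
    linear_combination z * hab
  linarith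

lemma combo_gt {a b x y z : ℝ} (ha : 0 ≤ a) (hb : 0 ≤ b) (hab : a + b = 1)
    (hx : z < x) (hy : z < y) : z < a * x + b * y := by
  have h1 := combo_pos ha hb hab (sub_pos.2 hx) (sub_pos.2 hy)
  have h2 : a * (x - z) + b * (y - z) = a * x + b * y - z := by
    linear_combination (-z) * hab
  linarith

/-- Log-coordinate model of a piece: a convex set. -/
def Cset (d : ℕ) (hd : 2 ≤ d) (h : Fin (d - 1) → ℝ)
    (c : Fin (d - 1) × Fin (d - 1) → SignType) : Set (Fin (d - 1) → ℝ) :=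
  {u | (∀ i, Real.log (h i) - Real.log d / 8 < u i ∧ u i < Real.log (h i) + Real.log d / 8) ∧
    u ⟨0, by omega⟩ = 0 ∧ (∀ i j : Fin (d - 1), i ≤ j → u j ≤ u i) ∧
    ∀ p : Fin (d - 1) × Fin (d - 1),
      SignType.sign (u p.1 - u p.2 - nij d h p.1 p.2 * Real.log d) = c p}

lemma convex_Cset (d : ℕ) (hd : 2 ≤ d) (h : Fin (d - 1) → ℝ)
    (c : Fin (d - 1) × Fin (d - 1) → SignType) : Convex ℝ (Cset d hd h c) := by
  rintro u ⟨hu1, hu2, hu3, hu4⟩ v ⟨hv1, hv2, hv3, hv4⟩ a b ha hb hab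
  have happ : ∀ i, (a • u + b • v) i = a * u i + b * v i := fun i => by
    simp [smul_eq_mul]
  refine ⟨fun i => ?_, ?_, fun i j hij => ?_, fun p => ?_⟩
  · rw [happ]
    exact ⟨combo_gt ha hb hab (hu1 i).1 (hv1 i).1,
      combo_lt ha hb hab (hu1 i).2 (hv1 i).2⟩
  · rw [happ, hu2, hv2]; ring
  · rw [happ, happ]
    have h1 := hu3 i j hij
    have h2 := hv3 i j hij
    nlinarith
  · have key : (a • u + b • v) p.1 - (a • u + b • v) p.2 - nij d h p.1 p.2 * Real.log d
        = a * (u p.1 - u p.2 - nij d h p.1 p.2 * Real.log d)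
          + b * (v p.1 - v p.2 - nij d h p.1 p.2 * Real.log d) := by
      rw [happ, happ]
      linear_combination (nij d h p.1 p.2 * Real.log d) * hab
    rw [key]
    have h1 := hu4 p
    have h2 := hv4 p
    cases hc : c p with
    | zero =>
      rw [hc] at h1 h2
      rw [show (SignType.zero : SignType) = 0 from rfl] at h1 h2 ⊢
      rw [_root_.sign_eq_zero_iff] at h1 h2 ⊢
      rw [h1, h2]; ring
    | pos =>
      rw [hc] at h1 h2
      rw [show (SignType.pos : SignType) = 1 from rfl] at h1 h2 ⊢
      rw [_root_.sign_eq_one_iff] at h1 h2 ⊢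
      exact combo_pos ha hb hab h1 h2
    | neg =>
      rw [hc] at h1 h2
      rw [show (SignType.neg : SignType) = -1 from rfl] at h1 h2 ⊢
      rw [_root_.sign_eq_neg_one_iff] at h1 h2 ⊢
      have := combo_pos ha hb hab (neg_pos.2 h1) (neg_pos.2 h2)
      nlinarith

/-- A piece of the neighborhood with a prescribed sign pattern. -/
def piece (d : ℕ) (hd : 2 ≤ d) (h : Fin (d - 1) → ℝ)
    (c : Fin (d - 1) × Fin (d - 1) → SignType) : Set (Fin (d - 1) → ℝ) :=
  nbhd d h ∩ Pd d hd ∩ {x | sgn d h x = c}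

lemma piece_eq_image (d : ℕ) (hd : 2 ≤ d) (h : Fin (d - 1) → ℝ) (hh : ∀ i, 0 < h i)
    (c : Fin (d - 1) × Fin (d - 1) → SignType) :
    piece d hd h c = (fun u : Fin (d - 1) → ℝ => fun i => Real.exp (u i)) '' Cset d hd h c := by
  ext x
  constructor
  · rintro ⟨⟨hxn, hx0, hxmono, hxpos⟩, hxs⟩
    refine ⟨fun i => Real.log (x i), ⟨fun i => ?_, ?_, fun i j hij => ?_, fun p => ?_⟩, ?_⟩
    · have := (mem_nbhd_iff hd hh hxn i).2
      rw [abs_lt] at this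
      constructor <;> linarith [this.1, this.2]
    · show Real.log (x ⟨0, by omega⟩) = 0
      rw [hx0, Real.log_one]
    · exact Real.log_le_log (hxpos j) (hxmono i j hij)
    · exact congrFun hxs p
    · funext i
      exact Real.exp_log (hxpos i)
  · rintro ⟨u, ⟨hu1, hu2, hu3, hu4⟩, rfl⟩
    refine ⟨⟨fun i => ?_, ?_, fun i j hij => ?_, fun i => Real.exp_pos _⟩, ?_⟩
    · constructor
      · calc h i * Real.exp (-(Real.log d / 8))
            = Real.exp (Real.log (h i) - Real.log d / 8) := by
              rw [sub_eq_add_neg, Real.exp_add, Real.exp_log (hh i)]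
          _ < Real.exp (u i) := Real.exp_lt_exp.2 (hu1 i).1
      · calc Real.exp (u i)
            < Real.exp (Real.log (h i) + Real.log d / 8) := Real.exp_lt_exp.2 (hu1 i).2
          _ = h i * Real.exp (Real.log d / 8) := by
              rw [Real.exp_add, Real.exp_log (hh i)]
    · show Real.exp (u ⟨0, by omega⟩) = 1
      rw [hu2, Real.exp_zero]
    · exact Real.exp_le_exp.2 (hu3 i j hij)
    · funext p
      rw [sgn, Real.log_exp, Real.log_exp]
      exact hu4 p

lemma piece_preconnected (d : ℕ) (hd : 2 ≤ d) (h : Fin (d - 1) → ℝ) (hh : ∀ i, 0 < h i)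
    (c : Fin (d - 1) × Fin (d - 1) → SignType) : IsPreconnected (piece d hd h c) := by
  rw [piece_eq_image d hd h hh c]
  exact (convex_Cset d hd h c).isPreconnected.image _
    (Continuous.continuousOn (continuous_pi fun i =>
      Real.continuous_exp.comp (continuous_apply i)))

/-- The number of classes determined by a sign pattern. -/
def Nof (d : ℕ) (c : Fin (d - 1) × Fin (d - 1) → SignType) : ℕ :=
  {s : Set (Fin (d - 1)) | ∃ i, s = {j | c (i, j) = 0}}.ncard

lemma classSet_eq {d : ℕ} (hd : 2 ≤ d) {h x : Fin (d - 1) → ℝ} (hh : ∀ i, 0 < h i)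
    (hx : x ∈ nbhd d h) :
    {s : Set (Fin (d - 1)) | ∃ i, s = {j | DegDep d (x i) (x j)}}
      = {s : Set (Fin (d - 1)) | ∃ i, s = {j | sgn d h x (i, j) = 0}} := by
  have hcl : ∀ i, {j | DegDep d (x i) (x j)} = {j | sgn d h x (i, j) = 0} := fun i => by
    ext j
    exact (sgn_zero_iff hd hh hx i j).symm
  ext s
  constructor
  · rintro ⟨i, rfl⟩
    exact ⟨i, hcl i⟩
  · rintro ⟨i, rfl⟩
    exact ⟨i, (hcl i).symm⟩

lemma mem_stratum_of_piece {d : ℕ} (hd : 2 ≤ d) {h : Fin (d - 1) → ℝ} (hh : ∀ i, 0 < h i)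
    {c : Fin (d - 1) × Fin (d - 1) → SignType} {y : Fin (d - 1) → ℝ}
    (hy : y ∈ piece d hd h c) : y ∈ stratum d hd (Nof d c) := by
  obtain ⟨⟨hyn, hyPd⟩, hys⟩ := hy
  refine ⟨hyPd, ?_⟩
  rw [classSet_eq hd hh hyn]
  have : ∀ p, sgn d h y p = c p := fun p => congrFun hys p
  simp only [this]
  rfl

end StratAux

/-- The stratification of `P_d` by the strata `P_d^N`, `1 ≤ N ≤ d−1`, is
locally finite: every `h ∈ P_d` has an open neighborhood `U` meeting only finitely many
connected components of the strata. -/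
theorem stratification_locally_finite (d : ℕ) (hd : 2 ≤ d) :
    ∀ h ∈ Pd d hd, ∃ U : Set (Fin (d - 1) → ℝ), IsOpen U ∧ h ∈ U ∧
      {s : Set (Fin (d - 1) → ℝ) | ∃ N : ℕ, 1 ≤ N ∧ N ≤ d - 1 ∧
        ∃ x ∈ stratum d hd N,
          s = connectedComponentIn (stratum d hd N) x ∧ (s ∩ U).Nonempty}.Finite := by
  classical
  rintro h ⟨h0, hmono, hpos⟩
  refine ⟨nbhd d h, ?_, ?_, ?_⟩
  · have : nbhd d h = Set.pi Set.univ (fun i => Set.Ioo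
        (h i * Real.exp (-(Real.log d / 8))) (h i * Real.exp (Real.log d / 8))) := by
      ext x
      simp [nbhd, Set.mem_pi]
    rw [this]
    exact isOpen_set_pi Set.finite_univ fun i _ => isOpen_Ioo
  · intro i
    constructor
    · have he : Real.exp (-(Real.log d / 8)) < 1 := by
        rw [show (1 : ℝ) = Real.exp 0 from (Real.exp_zero).symm]
        exact Real.exp_lt_exp.2 (by linarith [logd_pos hd])
      nlinarith [hpos i]
    · have he : 1 < Real.exp (Real.log d / 8) := by
        rw [show (1 : ℝ) = Real.exp 0 from (Real.exp_zero).symm]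
        exact Real.exp_lt_exp.2 (by linarith [logd_pos hd])
      nlinarith [hpos i]
  · set g : (Fin (d - 1) × Fin (d - 1) → SignType) → Set (Fin (d - 1) → ℝ) := fun c =>
      if hne : (piece d hd h c).Nonempty then
        connectedComponentIn (stratum d hd (Nof d c)) hne.some else ∅ with hg
    apply Set.Finite.subset (Set.finite_range g)
    rintro s ⟨N, -, -, x, hxstr, rfl, ⟨y, hys, hyU⟩⟩
    set c := sgn d h y with hc
    have hyStr : y ∈ stratum d hd N := connectedComponentIn_subset _ _ hys
    have hyPd : y ∈ Pd d hd := hyStr.1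
    have hypiece : y ∈ piece d hd h c := ⟨⟨hyU, hyPd⟩, rfl⟩
    have hne : (piece d hd h c).Nonempty := ⟨y, hypiece⟩
    have hNc : Nof d c = N := by
      have h1 := (mem_stratum_of_piece hd hpos hypiece).2
      have h2 := hyStr.2
      rw [h1] at h2
      exact h2
    refine ⟨c, ?_⟩
    show g c = connectedComponentIn (stratum d hd N) x
    rw [hg]
    simp only
    rw [dif_pos hne]
    have hz : hne.some ∈ piece d hd h c := hne.some_mem
    have hsub : piece d hd h c ⊆ connectedComponentIn (stratum d hd (Nof d c)) hne.some :=
      (piece_preconnected d hd h hpos c).subset_connectedComponentIn hz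
        (fun w hw => mem_stratum_of_piece hd hpos hw)
    have hy2 : y ∈ connectedComponentIn (stratum d hd (Nof d c)) hne.some := hsub hypiece
    have e1 := connectedComponentIn_eq hy2
    have e2 := connectedComponentIn_eq hys
    rw [hNc] at e1 ⊢
    rw [e1]
    exact e2.symm
end
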